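/- arXiv:1209.3115 — 6 statements merged into one kernel-verified Lean document; each statement's English description precedes it below -/
import Mathlib

section
/- Let p = p(n) satisfy p(n) → 0 and d = np(n) → ∞ as n → ∞. Then for every ε > 0, P( |D(G(n,p)) · d / (n ln d) − 1| ≤ ε ) → 1 as n → ∞; that is, asymptotically almost surely D(G(n,p)) = (n ln d / d)(1+o(1)). -/
open MeasureTheory Filter
open scoped Classical

/-- The Bernoulli measure on `Bool` with success probability `p` (clamped to `[0,1]`). -/
noncomputable def bernoulliMeasure (p : ℝ) : Measure Bool :=
  (PMF.bernoulli (min (Real.toNNReal p) 1) (min_le_right _ _)).toMeasure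

instance (p : ℝ) : IsProbabilityMeasure (bernoulliMeasure p) :=
  PMF.toMeasure.isProbabilityMeasure _

/-- The Erdős–Rényi measure `G(n,p)`: every potential edge (pair of vertices of `Fin n`)
is present independently with probability `p`.  A sample point is an indicator function
on `Sym2 (Fin n)` (diagonal coordinates are simply ignored). -/
noncomputable def gnp (n : ℕ) (p : ℝ) : Measure (Sym2 (Fin n) → Bool) :=
  Measure.pi fun _ => bernoulliMeasure p

/-- The simple graph determined by an edge-indicator function. -/
def graphOf {n : ℕ} (f : Sym2 (Fin n) → Bool) : SimpleGraph (Fin n) where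
  Adj v w := v ≠ w ∧ f s(v, w) = true
  symm := ⟨by
    intro v w h
    exact ⟨Ne.symm h.1, by rw [Sym2.eq_swap]; exact h.2⟩⟩
  loopless := ⟨fun v h => h.1 rfl⟩

/-- A set `S` of vertices is dominating if every vertex is in `S` or adjacent to a member
of `S`. -/
def IsDominating {n : ℕ} (G : SimpleGraph (Fin n)) (S : Set (Fin n)) : Prop :=
  ∀ v, v ∈ S ∨ ∃ u ∈ S, G.Adj u v

/-- The domination number: the smallest cardinality of a dominating set. -/
noncomputable def domNumber {n : ℕ} (G : SimpleGraph (Fin n)) : ℕ :=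
  sInf {r | ∃ S : Finset (Fin n), S.card = r ∧ IsDominating G ↑S}

/-- The number of dominating sets of size `r`. -/
noncomputable def numDomSets {n : ℕ} (G : SimpleGraph (Fin n)) (r : ℕ) : ℕ :=
  ((Finset.powersetCard r (Finset.univ : Finset (Fin n))).filter
    (fun S => IsDominating G ↑S)).card

/-- The expected number of dominating sets of size `r` in `G(n,p)`:
`E(X_r) = C(n,r) (1-(1-p)^r)^(n-r)`. -/
noncomputable def EX (n r : ℕ) (p : ℝ) : ℝ :=
  (n.choose r : ℝ) * (1 - (1 - p) ^ r) ^ (n - r)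

/-- The critical size `r̂ = min{ r | E(X_r) ≥ 1/d } - 1`, where `d = np`. -/
noncomputable def rhat (n : ℕ) (p : ℝ) : ℕ :=
  sInf {r : ℕ | EX n r p ≥ 1 / (n * p)} - 1




/-- `A` depends only on coordinates in `s`. -/
def DependsOnly {ι : Type*} (s : Set ι) (A : Set (ι → Bool)) : Prop :=
  ∀ f g : ι → Bool, (∀ i ∈ s, f i = g i) → f ∈ A → g ∈ A

lemma DependsOnly.mono {ι : Type*} {s t : Set ι} {A : Set (ι → Bool)} (h : DependsOnly s A)
    (hst : s ⊆ t) : DependsOnly t A :=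
  fun f g hfg => h f g (fun i hi => hfg i (hst hi))

section blocks
variable {ι : Type*} [Fintype ι] (m : ι → Measure Bool) [∀ i, IsProbabilityMeasure (m i)]

lemma pi_split (s : Set ι) (A B : Set (ι → Bool)) (hA : DependsOnly s A)
    (hB : DependsOnly sᶜ B) :
    Measure.pi m (A ∩ B) = Measure.pi m A * Measure.pi m B := by
  classical
  set e := Equiv.piEquivPiSubtypeProd (fun i => i ∈ s) (fun _ => Bool) with he
  have mp := measurePreserving_piEquivPiSubtypeProd m (fun i => i ∈ s)
  have hFe : ⇑(MeasurableEquiv.piEquivPiSubtypeProd (fun _ : ι => Bool) (fun i => i ∈ s)) = ⇑e :=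
    rfl
  rw [hFe] at mp
  set A' : Set (∀ i : {x // x ∈ s}, Bool) :=
    {h | (fun i => if hi : i ∈ s then h ⟨i, hi⟩ else false) ∈ A} with hA'
  set B' : Set (∀ i : {x // ¬ x ∈ s}, Bool) :=
    {h | (fun i => if hi : i ∈ s then false else h ⟨i, hi⟩) ∈ B} with hB'
  have hAeq : A = e ⁻¹' (A' ×ˢ Set.univ) := by
    ext f
    simp only [Set.mem_preimage, Set.mem_prod, Set.mem_univ, and_true, hA', Set.mem_setOf_eq, he,
      Equiv.piEquivPiSubtypeProd]
    constructor
    · intro hf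
      exact hA f _ (fun i hi => by simp [hi]) hf
    · intro hf
      exact hA _ f (fun i hi => by simp [hi]) hf
  have hBeq : B = e ⁻¹' (Set.univ ×ˢ B') := by
    ext f
    simp only [Set.mem_preimage, Set.mem_prod, Set.mem_univ, true_and, hB', Set.mem_setOf_eq, he,
      Equiv.piEquivPiSubtypeProd]
    constructor
    · intro hf
      exact hB f _ (fun i hi => by simp [Set.mem_compl_iff] at hi; simp [hi]) hf
    · intro hf
      exact hB _ f (fun i hi => by simp [Set.mem_compl_iff] at hi; simp [hi]) hf
  have hABeq : A ∩ B = e ⁻¹' (A' ×ˢ B') := by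
    rw [hAeq, hBeq, ← Set.preimage_inter, Set.prod_inter_prod, Set.univ_inter, Set.inter_univ]
  have h1 : Measure.pi m (A ∩ B) = Measure.pi (fun i : {x // x ∈ s} => m i) A' *
      Measure.pi (fun i : {x // ¬ x ∈ s} => m i) B' := by
    rw [hABeq, mp.measure_preimage (MeasurableSet.of_discrete).nullMeasurableSet,
      Measure.prod_prod]
  have h2 : Measure.pi m A = Measure.pi (fun i : {x // x ∈ s} => m i) A' := by
    rw [hAeq, mp.measure_preimage (MeasurableSet.of_discrete).nullMeasurableSet,
      Measure.prod_prod, measure_univ, mul_one]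
  have h3 : Measure.pi m B = Measure.pi (fun i : {x // ¬ x ∈ s} => m i) B' := by
    rw [hBeq, mp.measure_preimage (MeasurableSet.of_discrete).nullMeasurableSet,
      Measure.prod_prod, measure_univ, one_mul]
  rw [h1, h2, h3]

lemma pi_blocks {α : Type*} (T : Finset α) (Bk : α → Set ι) (A : α → Set (ι → Bool))
    (hd : ∀ a ∈ T, ∀ b ∈ T, a ≠ b → Disjoint (Bk a) (Bk b))
    (hA : ∀ a ∈ T, DependsOnly (Bk a) (A a)) :
    Measure.pi m (⋂ a ∈ T, A a) = ∏ a ∈ T, Measure.pi m (A a) := by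
  classical
  induction T using Finset.induction_on with
  | empty => simp
  | insert b T ha ih =>
    rw [Finset.prod_insert ha, Finset.set_biInter_insert]
    rw [pi_split m (Bk b) _ _ (hA b (Finset.mem_insert_self _ _))]
    · rw [ih (fun x hx y hy hxy => hd x (Finset.mem_insert_of_mem hx) y
        (Finset.mem_insert_of_mem hy) hxy) (fun x hx => hA x (Finset.mem_insert_of_mem hx))]
    · intro f g hfg hf
      simp only [Set.mem_iInter] at hf ⊢
      intro x hx
      refine hA x (Finset.mem_insert_of_mem hx) f g (fun i hi => hfg i ?_) (hf x hx)
      have : Disjoint (Bk x) (Bk b) := hd x (Finset.mem_insert_of_mem hx) b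
        (Finset.mem_insert_self _ _) (by rintro rfl; exact ha hx)
      exact fun h => (Set.disjoint_left.1 this hi) h

lemma pi_cyl (T : Finset ι) (b : Bool) :
    Measure.pi m {f | ∀ i ∈ T, f i = b} = ∏ i ∈ T, m i {b} := by
  classical
  have : {f : ι → Bool | ∀ i ∈ T, f i = b} =
      Set.pi Set.univ (fun i => if i ∈ T then ({b} : Set Bool) else Set.univ) := by
    ext f
    simp only [Set.mem_setOf_eq, Set.mem_pi, Set.mem_univ, forall_true_left]
    constructor
    · intro h i
      by_cases hi : i ∈ T <;> simp [hi, h]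
    · intro h i hi
      have := h i
      simpa [hi] using this
  rw [this, Measure.pi_pi]
  conv_rhs => rw [← Finset.univ_inter T, ← Finset.prod_ite_mem Finset.univ T (fun i => m i {b})]
  refine Finset.prod_congr rfl fun i _ => ?_
  split_ifs with hi
  · rfl
  · exact measure_univ

end blocks

open scoped ENNReal

section gnplemmas

variable {n : ℕ} {p : ℝ}

lemma bern_false (h0 : 0 ≤ p) (h1 : p ≤ 1) :
    bernoulliMeasure p {false} = ENNReal.ofReal (1 - p) := by
  rw [bernoulliMeasure, PMF.toMeasure_apply_singleton _ _ (measurableSet_singleton _)]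
  have hmin : min (Real.toNNReal p) 1 = Real.toNNReal p :=
    min_eq_left (by rw [← Real.toNNReal_one]; exact Real.toNNReal_le_toNNReal h1)
  rw [PMF.bernoulli_apply, hmin]
  simp only [Bool.cond_false]
  rw [ENNReal.coe_sub, ENNReal.coe_one, ENNReal.ofReal_sub _ h0, ENNReal.ofReal_one, ENNReal.ofReal]

/-- The event that no vertex of `S` sends an edge to `v`. -/
def NoEdge (S : Finset (Fin n)) (v : Fin n) : Set (Sym2 (Fin n) → Bool) :=
  {f | ∀ u ∈ S, f s(u, v) = false}

lemma injOn_sym2 {S : Finset (Fin n)} {v : Fin n} (hv : v ∉ S) :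
    Set.InjOn (fun u => s(u, v)) ↑S := by
  intro u hu u' hu' h
  simp only [Sym2.eq_iff] at h
  rcases h with ⟨h1, -⟩ | ⟨h1, h2⟩
  · exact h1
  · exact absurd (h1 ▸ hu) hv

lemma gnp_noEdge (h0 : 0 ≤ p) (h1 : p ≤ 1) (S : Finset (Fin n)) (v : Fin n) (hv : v ∉ S) :
    gnp n p (NoEdge S v) = ENNReal.ofReal (1 - p) ^ S.card := by
  have hset : NoEdge S v = {f : Sym2 (Fin n) → Bool |
      ∀ e ∈ S.image (fun u => s(u, v)), f e = false} := by
    ext f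
    simp only [NoEdge, Set.mem_setOf_eq, Finset.mem_image]
    constructor
    · rintro h e ⟨u, hu, rfl⟩; exact h u hu
    · intro h u hu; exact h _ ⟨u, hu, rfl⟩
  rw [hset, gnp, pi_cyl, Finset.prod_const, bern_false h0 h1,
    Finset.card_image_of_injOn (injOn_sym2 hv)]

lemma noEdge_dependsOnly (S : Finset (Fin n)) (v : Fin n) :
    DependsOnly (↑(S.image (fun u => s(u, v)))) (NoEdge S v) := by
  intro f g hfg hf u hu
  rw [← hfg _ (by exact Finset.mem_coe.2 (Finset.mem_image_of_mem _ hu))]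
  exact hf u hu

lemma compl_dependsOnly {ι : Type*} {s : Set ι} {A : Set (ι → Bool)} (h : DependsOnly s A) :
    DependsOnly s Aᶜ := by
  intro f g hfg hf hg
  exact hf (h g f (fun i hi => (hfg i hi).symm) hg)

lemma dominating_eq_iInter (S : Finset (Fin n)) :
    {f : Sym2 (Fin n) → Bool | IsDominating (graphOf f) ↑S} =
      ⋂ v ∈ Finset.univ \ S, (NoEdge S v)ᶜ := by
  ext f
  simp only [Set.mem_setOf_eq, Set.mem_iInter, Finset.mem_sdiff, Finset.mem_univ, true_and,
    Set.mem_compl_iff, IsDominating]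
  constructor
  · intro h v hv
    rcases h v with hmem | ⟨u, hu, hadj'⟩
    · exact absurd (Finset.mem_coe.1 hmem) hv
    · intro hno
      obtain ⟨-, hadj⟩ : u ≠ v ∧ f s(u, v) = true := hadj'
      rw [hno u hu] at hadj
      exact Bool.false_ne_true hadj
  · intro h v
    by_cases hv : v ∈ S
    · exact Or.inl (Finset.mem_coe.2 hv)
    · right
      have := h v hv
      simp only [NoEdge, Set.mem_setOf_eq, not_forall] at this
      obtain ⟨u, hu, hne⟩ := this
      exact ⟨u, Finset.mem_coe.2 hu, (⟨fun huv => hv (huv ▸ hu),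
        by simpa using hne⟩ : u ≠ v ∧ f s(u, v) = true)⟩

lemma gnp_dominating (h0 : 0 ≤ p) (h1 : p ≤ 1) (S : Finset (Fin n)) :
    gnp n p {f | IsDominating (graphOf f) ↑S} =
      (1 - ENNReal.ofReal (1 - p) ^ S.card) ^ (n - S.card) := by
  rw [dominating_eq_iInter, gnp,
    pi_blocks _ (Finset.univ \ S) (fun v => ↑(S.image (fun u => s(u, v))))
      (fun v => (NoEdge S v)ᶜ) ?disj ?dep]
  case disj =>
    intro a ha b hb hab
    simp only [Finset.mem_sdiff, Finset.mem_univ, true_and] at ha hb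
    rw [Set.disjoint_left]
    rintro e he he'
    simp only [Finset.coe_image, Set.mem_image, Finset.mem_coe] at he he'
    obtain ⟨u, hu, rfl⟩ := he
    obtain ⟨u', hu', heq⟩ := he'
    rw [Sym2.eq_iff] at heq
    rcases heq with ⟨-, h2⟩ | ⟨h1', -⟩
    · exact hab h2.symm
    · exact ha (h1' ▸ hu')
  case dep =>
    intro v _
    exact compl_dependsOnly (noEdge_dependsOnly S v)
  have hterm : ∀ v ∈ Finset.univ \ S, (Measure.pi fun _ => bernoulliMeasure p) ((NoEdge S v)ᶜ)
      = 1 - ENNReal.ofReal (1 - p) ^ S.card := by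
    intro v hv
    simp only [Finset.mem_sdiff, Finset.mem_univ, true_and] at hv
    rw [prob_compl_eq_one_sub MeasurableSet.of_discrete]
    rw [show (Measure.pi fun _ => bernoulliMeasure p) (NoEdge S v) = gnp n p (NoEdge S v) from rfl,
      gnp_noEdge h0 h1 S v hv]
  rw [Finset.prod_congr rfl hterm, Finset.prod_const, Finset.card_sdiff_of_subset (Finset.subset_univ S),
    Finset.card_univ, Fintype.card_fin]

lemma isDominating_mono {G : SimpleGraph (Fin n)} {S T : Finset (Fin n)} (hST : S ⊆ T)
    (h : IsDominating G ↑S) : IsDominating G ↑T := by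
  intro v
  rcases h v with hv | ⟨u, hu, hadj⟩
  · exact Or.inl (Finset.coe_subset.2 hST hv)
  · exact Or.inr ⟨u, Finset.coe_subset.2 hST hu, hadj⟩

lemma exists_dominating_card_eq {G : SimpleGraph (Fin n)} {r : ℕ}
    (hD : domNumber G ≤ r) (hrn : r ≤ n) :
    ∃ S : Finset (Fin n), S.card = r ∧ IsDominating G ↑S := by
  have hne : {k | ∃ S : Finset (Fin n), S.card = k ∧ IsDominating G ↑S}.Nonempty := by
    refine ⟨n, Finset.univ, ?_, ?_⟩
    · rw [Finset.card_univ, Fintype.card_fin]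
    · intro v; exact Or.inl (by simp)
  have hmem := Nat.sInf_mem hne
  obtain ⟨S₀, hS₀card, hS₀dom⟩ := hmem
  obtain ⟨T, hST, hTcard⟩ := Finset.exists_superset_card_eq
    (show S₀.card ≤ r from hS₀card.symm ▸ hD) (by rwa [Fintype.card_fin])
  exact ⟨T, hTcard, isDominating_mono hST hS₀dom⟩

lemma gnp_domNumber_le (h0 : 0 ≤ p) (h1 : p ≤ 1) {r : ℕ} (hrn : r ≤ n) :
    gnp n p {f | domNumber (graphOf f) ≤ r} ≤
      (n.choose r : ℝ≥0∞) * (1 - ENNReal.ofReal (1 - p) ^ r) ^ (n - r) := by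
  have hsub : {f : Sym2 (Fin n) → Bool | domNumber (graphOf f) ≤ r} ⊆
      ⋃ S ∈ Finset.powersetCard r (Finset.univ : Finset (Fin n)),
        {f | IsDominating (graphOf f) ↑S} := by
    intro f hf
    obtain ⟨S, hScard, hSdom⟩ := exists_dominating_card_eq hf hrn
    exact Set.mem_biUnion (Finset.mem_powersetCard_univ.2 hScard) hSdom
  refine (measure_mono hsub).trans ((measure_biUnion_finset_le _ _).trans ?_)
  have : ∀ S ∈ Finset.powersetCard r (Finset.univ : Finset (Fin n)),
      gnp n p {f | IsDominating (graphOf f) ↑S} =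
        (1 - ENNReal.ofReal (1 - p) ^ r) ^ (n - r) := by
    intro S hS
    have hc : S.card = r := Finset.mem_powersetCard_univ.1 hS
    rw [gnp_dominating h0 h1, hc]
  rw [Finset.sum_congr rfl this, Finset.sum_const, Finset.card_powersetCard, Finset.card_univ,
    Fintype.card_fin, nsmul_eq_mul]

lemma domNumber_le_add (S : Finset (Fin n)) (f : Sym2 (Fin n) → Bool) :
    domNumber (graphOf f) ≤ S.card +
      ((Finset.univ \ S).filter (fun v => ∀ u ∈ S, f s(u, v) = false)).card := by
  set F := (Finset.univ \ S).filter (fun v => ∀ u ∈ S, f s(u, v) = false) with hF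
  have hdom : IsDominating (graphOf f) ↑(S ∪ F) := by
    intro v
    by_cases hv : v ∈ S
    · exact Or.inl (Finset.mem_coe.2 (Finset.mem_union_left _ hv))
    · by_cases hvF : ∀ u ∈ S, f s(u, v) = false
      · exact Or.inl (Finset.mem_coe.2 (Finset.mem_union_right _
          (Finset.mem_filter.2 ⟨Finset.mem_sdiff.2 ⟨Finset.mem_univ _, hv⟩, hvF⟩)))
      · right
        simp only [not_forall] at hvF
        obtain ⟨u, hu, hne⟩ := hvF
        exact ⟨u, Finset.mem_coe.2 (Finset.mem_union_left _ hu), (⟨fun huv => hv (huv ▸ hu),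
          by simpa using hne⟩ : u ≠ v ∧ f s(u, v) = true)⟩
  calc domNumber (graphOf f) ≤ (S ∪ F).card := Nat.sInf_le ⟨S ∪ F, rfl, hdom⟩
    _ ≤ S.card + F.card := Finset.card_union_le _ _

lemma gnp_markov (h0 : 0 ≤ p) (h1 : p ≤ 1) (S : Finset (Fin n)) (a : ℝ≥0∞) (ha : a ≠ 0)
    (ha' : a ≠ ⊤) :
    gnp n p {f | a ≤ (((Finset.univ \ S).filter
        (fun v => ∀ u ∈ S, f s(u, v) = false)).card : ℝ≥0∞)} ≤
      (n : ℝ≥0∞) * ENNReal.ofReal (1 - p) ^ S.card / a := by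
  refine le_trans (meas_ge_le_lintegral_div Measurable.of_discrete.aemeasurable ha ha') ?_
  refine ENNReal.div_le_div_right ?_ a
  have hXeq : ∀ f : Sym2 (Fin n) → Bool,
      (((Finset.univ \ S).filter (fun v => ∀ u ∈ S, f s(u, v) = false)).card : ℝ≥0∞) =
        ∑ v ∈ Finset.univ \ S, (NoEdge S v).indicator (fun _ => 1) f := by
    intro f
    rw [Finset.card_filter, Nat.cast_sum]
    refine Finset.sum_congr rfl fun v _ => ?_
    rw [Set.indicator_apply]
    by_cases hfv : ∀ u ∈ S, f s(u, v) = false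
    · rw [if_pos hfv, if_pos (show f ∈ NoEdge S v from hfv), Nat.cast_one]
    · rw [if_neg hfv, if_neg (show f ∉ NoEdge S v from hfv), Nat.cast_zero]
  calc ∫⁻ f, (((Finset.univ \ S).filter (fun v => ∀ u ∈ S, f s(u, v) = false)).card : ℝ≥0∞)
        ∂(gnp n p)
      = ∫⁻ f, ∑ v ∈ Finset.univ \ S, (NoEdge S v).indicator (fun _ => 1) f ∂(gnp n p) := by
        exact lintegral_congr hXeq
    _ = ∑ v ∈ Finset.univ \ S, ∫⁻ f, (NoEdge S v).indicator (fun _ => 1) f ∂(gnp n p) :=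
        lintegral_finset_sum _ (fun v _ => Measurable.of_discrete)
    _ = ∑ v ∈ Finset.univ \ S, gnp n p (NoEdge S v) := by
        refine Finset.sum_congr rfl fun v _ => ?_
        exact lintegral_indicator_one MeasurableSet.of_discrete
    _ = ∑ v ∈ Finset.univ \ S, ENNReal.ofReal (1 - p) ^ S.card := by
        refine Finset.sum_congr rfl fun v hv => ?_
        exact gnp_noEdge h0 h1 S v (Finset.mem_sdiff.1 hv).2
    _ = ((Finset.univ \ S).card : ℝ≥0∞) * ENNReal.ofReal (1 - p) ^ S.card := by
        rw [Finset.sum_const, nsmul_eq_mul]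
    _ ≤ (n : ℝ≥0∞) * ENNReal.ofReal (1 - p) ^ S.card := by
        refine mul_le_mul_left ?_ _
        refine Nat.cast_le.2 ?_
        calc (Finset.univ \ S).card ≤ (Finset.univ : Finset (Fin n)).card :=
              Finset.card_le_card (Finset.sdiff_subset)
          _ = n := by rw [Finset.card_univ, Fintype.card_fin]

end gnplemmas

instance gnp_isProb (n : ℕ) (q : ℝ) : IsProbabilityMeasure (gnp n q) := by
  unfold gnp; infer_instance

lemma pow_self_le_factorial_mul (r : ℕ) : (r : ℝ) ^ r ≤ r.factorial * Real.exp 1 ^ r := by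
  induction r with
  | zero => simp
  | succ r ih =>
    have hstep : ((r : ℝ) + 1) ^ r ≤ (r : ℝ) ^ r * Real.exp 1 := by
      rcases Nat.eq_zero_or_pos r with rfl | hr
      · simp [(by linarith [Real.add_one_le_exp (1:ℝ)] : (1:ℝ) ≤ Real.exp 1)]
      · have hrpos : (0:ℝ) < r := by exact_mod_cast hr
        have h1 : (r : ℝ) + 1 = r * (1 + 1 / r) := by field_simp
        have h2 : (1 + 1 / (r:ℝ)) ^ r ≤ Real.exp 1 := by
          have := Real.add_one_le_exp (1 / (r:ℝ))
          calc (1 + 1 / (r:ℝ)) ^ r ≤ Real.exp (1 / r) ^ r := by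
                refine pow_le_pow_left₀ (by positivity) (by linarith) r
            _ = Real.exp ((r : ℝ) * (1 / r)) := by rw [← Real.exp_nat_mul]
            _ = Real.exp 1 := by rw [mul_one_div, div_self (ne_of_gt hrpos)]
        calc ((r : ℝ) + 1) ^ r = (r:ℝ) ^ r * (1 + 1 / r) ^ r := by rw [h1, mul_pow]
          _ ≤ (r:ℝ) ^ r * Real.exp 1 := by
              refine mul_le_mul_of_nonneg_left h2 (by positivity)
    have hcast : ((r + 1 : ℕ) : ℝ) = (r : ℝ) + 1 := by push_cast; ring
    calc ((r + 1 : ℕ) : ℝ) ^ (r + 1) = ((r:ℝ) + 1) * ((r:ℝ) + 1) ^ r := by rw [hcast, pow_succ]; ring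
      _ ≤ ((r:ℝ) + 1) * ((r : ℝ) ^ r * Real.exp 1) := by
          refine mul_le_mul_of_nonneg_left hstep (by positivity)
      _ ≤ ((r:ℝ) + 1) * (r.factorial * Real.exp 1 ^ r * Real.exp 1) := by
          refine mul_le_mul_of_nonneg_left (mul_le_mul_of_nonneg_right ih (Real.exp_pos 1).le)
            (by positivity)
      _ = (r + 1).factorial * Real.exp 1 ^ (r + 1) := by
          rw [Nat.factorial_succ]; push_cast; ring

lemma choose_le_pow_real {n r : ℕ} (hr : 1 ≤ r) :
    (n.choose r : ℝ) ≤ (Real.exp 1 * n / r) ^ r := by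
  have hrpos : (0:ℝ) < r := by exact_mod_cast hr
  have h1 : (r.factorial : ℝ) * n.choose r ≤ (n : ℝ) ^ r := by
    have := Nat.descFactorial_le_pow n r
    rw [Nat.descFactorial_eq_factorial_mul_choose] at this
    exact_mod_cast this
  rw [div_pow, le_div_iff₀ (by positivity)]
  calc (n.choose r : ℝ) * (r:ℝ) ^ r ≤ (n.choose r : ℝ) * (r.factorial * Real.exp 1 ^ r) := by
        refine mul_le_mul_of_nonneg_left (pow_self_le_factorial_mul r) (by positivity)
    _ = ((r.factorial : ℝ) * n.choose r) * Real.exp 1 ^ r := by ring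
    _ ≤ (n : ℝ) ^ r * Real.exp 1 ^ r := by
        refine mul_le_mul_of_nonneg_right h1 (by positivity)
    _ = (Real.exp 1 * n) ^ r := by rw [mul_pow]; ring

lemma EX_le_exp {n r : ℕ} {p : ℝ} (hp0 : 0 ≤ p) (hp1 : p ≤ 1) (hr : 1 ≤ r) (hn : 1 ≤ n) :
    EX n r p ≤ Real.exp ((r : ℝ) * Real.log (Real.exp 1 * n / r) -
      ((n - r : ℕ) : ℝ) * (1 - p) ^ r) := by
  have hrpos : (0:ℝ) < r := by exact_mod_cast hr
  have hnpos : (0:ℝ) < n := by exact_mod_cast hn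
  have hxpos : (0:ℝ) < Real.exp 1 * n / r := by positivity
  have h1p : 0 ≤ 1 - p := by linarith
  have hq1 : (1 - p) ^ r ≤ 1 := pow_le_one₀ h1p (by linarith)
  have hq0 : 0 ≤ (1 - p) ^ r := pow_nonneg h1p r
  have hA : (n.choose r : ℝ) ≤ Real.exp ((r : ℝ) * Real.log (Real.exp 1 * n / r)) := by
    calc (n.choose r : ℝ) ≤ (Real.exp 1 * n / r) ^ r := choose_le_pow_real hr
      _ = Real.exp (Real.log (Real.exp 1 * n / r)) ^ r := by rw [Real.exp_log hxpos]
      _ = Real.exp ((r : ℝ) * Real.log (Real.exp 1 * n / r)) := by rw [← Real.exp_nat_mul]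
  have hB : (1 - (1 - p) ^ r) ^ (n - r) ≤
      Real.exp (-(((n - r : ℕ) : ℝ) * (1 - p) ^ r)) := by
    calc (1 - (1 - p) ^ r) ^ (n - r) ≤ Real.exp (-(1 - p) ^ r) ^ (n - r) := by
          refine pow_le_pow_left₀ (by linarith) (by linarith [Real.add_one_le_exp (-(1 - p) ^ r)]) _
      _ = Real.exp (((n - r : ℕ) : ℝ) * (-(1 - p) ^ r)) := by rw [← Real.exp_nat_mul]
      _ = Real.exp (-(((n - r : ℕ) : ℝ) * (1 - p) ^ r)) := by ring_nf
  calc EX n r p ≤ Real.exp ((r : ℝ) * Real.log (Real.exp 1 * n / r)) *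
        Real.exp (-(((n - r : ℕ) : ℝ) * (1 - p) ^ r)) := by
        refine mul_le_mul hA hB (pow_nonneg (by linarith) _) (Real.exp_pos _).le
    _ = _ := by rw [← Real.exp_add]; ring_nf

lemma exp_neg_le_one_sub_pow {p : ℝ} (hp0 : 0 ≤ p) (hp1 : p < 1) (r : ℕ) :
    Real.exp (-(p / (1 - p)) * r) ≤ (1 - p) ^ r := by
  have h1p : (0:ℝ) < 1 - p := by linarith
  have hy : (0:ℝ) ≤ p / (1 - p) := by positivity
  have hkey : Real.exp (-(p / (1 - p))) ≤ 1 - p := by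
    have h1 : 1 + p / (1 - p) ≤ Real.exp (p / (1 - p)) := by
      linarith [Real.add_one_le_exp (p / (1 - p))]
    have h2 : 1 + p / (1 - p) = 1 / (1 - p) := by field_simp; ring
    rw [Real.exp_neg]
    rw [h2] at h1
    calc (Real.exp (p / (1 - p)))⁻¹ ≤ (1 / (1 - p))⁻¹ := by
          refine inv_anti₀ (by positivity) h1
      _ = 1 - p := by rw [one_div, inv_inv]
  calc Real.exp (-(p / (1 - p)) * r) = Real.exp (-(p / (1 - p))) ^ r := by
        rw [← Real.exp_nat_mul]; ring_nf
    _ ≤ (1 - p) ^ r := pow_le_pow_left₀ (Real.exp_pos _).le hkey r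

lemma upper_ev (p : ℕ → ℝ) (hp : ∀ n, 0 < p n ∧ p n < 1)
    (hd : Tendsto (fun n : ℕ => n * p n) atTop atTop) {ε : ℝ} (hε : 0 < ε) :
    ∀ᶠ n : ℕ in atTop, gnp n (p n)
        {f | 1 + ε < (domNumber (graphOf f) : ℝ) * (n * p n) / (n * Real.log (n * p n))} ≤
      ENNReal.ofReal (3 * Real.exp (-(ε / 3 * Real.log (n * p n))) /
        (ε * Real.log (n * p n))) := by
  have hL : Tendsto (fun n : ℕ => Real.log (n * p n)) atTop atTop :=
    Real.tendsto_log_atTop.comp hd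
  have hLd : Tendsto (fun n : ℕ => Real.log (n * p n) / (n * p n)) atTop (nhds 0) :=
    (Real.isLittleO_log_id_atTop.tendsto_div_nhds_zero).comp hd
  filter_upwards [hL.eventually_ge_atTop (max 1 (3 / ε)), hd.eventually_ge_atTop 1,
    hLd.eventually_lt_const (show (0:ℝ) < 1 / (1 + ε / 3) by positivity)] with n h1 h2 h3
  obtain ⟨hp1, hp2⟩ := hp n
  set L : ℝ := Real.log (n * p n) with hLdef
  have hL1 : (1:ℝ) ≤ L := le_trans (le_max_left _ _) h1
  have hL3ε : 3 / ε ≤ L := le_trans (le_max_right _ _) h1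
  have hLpos : (0:ℝ) < L := lt_of_lt_of_le one_pos hL1
  have hdpos : (0:ℝ) < n * p n := lt_of_lt_of_le one_pos h2
  have hn0 : n ≠ 0 := by
    rintro rfl
    simp only [Nat.cast_zero, zero_mul] at h2
    linarith
  have hnpos : (0:ℝ) < n := by exact_mod_cast Nat.pos_of_ne_zero hn0
  set t : ℝ := L / p n with htdef
  have htpos : (0:ℝ) < t := by positivity
  -- r ≤ n
  have hrle_n : (1 + ε / 3) * t ≤ n := by
    have h4 : (1 + ε / 3) * L < n * p n := by
      rw [div_lt_div_iff₀ hdpos (by positivity : (0:ℝ) < 1 + ε / 3)] at h3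
      linarith
    rw [htdef, ← mul_div_assoc, div_le_iff₀ hp1]
    calc (1 + ε / 3) * L ≤ n * p n := h4.le
      _ = n * p n := rfl
  set r : ℕ := ⌈(1 + ε / 3) * t⌉₊ with hrdef
  have hrn : r ≤ n := Nat.ceil_le.2 hrle_n
  obtain ⟨S, -, hScard⟩ := Finset.exists_subset_card_eq (show r ≤ (Finset.univ : Finset (Fin n)).card
    by rw [Finset.card_univ, Fintype.card_fin]; exact hrn)
  set a : ℝ≥0∞ := ENNReal.ofReal (ε / 3 * t) with hadef
  have hapos : (0:ℝ) < ε / 3 * t := by positivity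
  have ha0 : a ≠ 0 := (ENNReal.ofReal_pos.2 hapos).ne'
  have ha' : a ≠ ⊤ := ENNReal.ofReal_ne_top
  have h1a : (1:ℝ) ≤ ε / 3 * t := by
    have hεL : (1:ℝ) ≤ ε / 3 * L := by
      rw [div_le_iff₀ hε] at hL3ε
      linarith [hL3ε]
    calc (1:ℝ) ≤ ε / 3 * L := hεL
      _ ≤ ε / 3 * t := by
          rw [htdef]
          refine mul_le_mul_of_nonneg_left ?_ (by positivity)
          exact le_div_self (by linarith) hp1 hp2.le
  -- containment in the Markov event
  have hsub : {f : Sym2 (Fin n) → Bool |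
      1 + ε < (domNumber (graphOf f) : ℝ) * (n * p n) / (n * Real.log (n * p n))} ⊆
      {f | a ≤ (((Finset.univ \ S).filter
        (fun v => ∀ u ∈ S, f s(u, v) = false)).card : ℝ≥0∞)} := by
    intro f hf
    simp only [Set.mem_setOf_eq] at hf ⊢
    set D : ℕ := domNumber (graphOf f) with hDdef
    set X : ℕ := ((Finset.univ \ S).filter (fun v => ∀ u ∈ S, f s(u, v) = false)).card with hXdef
    have hratio : (D : ℝ) * (n * p n) / (n * Real.log (n * p n)) = D * p n / L := by
      rw [← hLdef]
      field_simp
    rw [hratio] at hf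
    have hDgt : (1 + ε) * t < D := by
      rw [htdef, ← mul_div_assoc, div_lt_iff₀ hp1]
      rw [lt_div_iff₀ hLpos] at hf
      linarith
    have hDle : (D : ℝ) ≤ (r : ℝ) + X := by
      have := domNumber_le_add S f
      rw [hScard] at this
      exact_mod_cast this
    have hrlt : (r : ℝ) < (1 + ε / 3) * t + 1 := Nat.ceil_lt_add_one (by positivity)
    have hX : ε / 3 * t ≤ (X : ℝ) := by
      have e1 : (1 + ε) * t = t + 3 * (ε / 3 * t) := by ring
      have e2 : (1 + ε / 3) * t = t + ε / 3 * t := by ring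
      linarith
    calc a = ENNReal.ofReal (ε / 3 * t) := rfl
      _ ≤ ENNReal.ofReal (X : ℝ) := ENNReal.ofReal_le_ofReal hX
      _ = (X : ℝ≥0∞) := ENNReal.ofReal_natCast X
  refine le_trans (measure_mono hsub) ?_
  refine le_trans (gnp_markov hp1.le hp2.le S a ha0 ha') ?_
  rw [hScard]
  -- convert to ofReal and conclude with a real inequality
  have hofr : (n : ℝ≥0∞) * ENNReal.ofReal (1 - p n) ^ r / a =
      ENNReal.ofReal ((n : ℝ) * (1 - p n) ^ r / (ε / 3 * t)) := by
    rw [ENNReal.ofReal_div_of_pos hapos, ENNReal.ofReal_mul (by positivity : (0:ℝ) ≤ (n:ℝ)),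
      ENNReal.ofReal_pow (by linarith : (0:ℝ) ≤ 1 - p n), ENNReal.ofReal_natCast]
  rw [hofr]
  refine ENNReal.ofReal_le_ofReal ?_
  -- real inequality
  have hpow : (1 - p n) ^ r ≤ Real.exp (-((1 + ε / 3) * L)) := by
    have hb : 1 - p n ≤ Real.exp (-p n) := by linarith [Real.add_one_le_exp (-p n)]
    have hrp : (1 + ε / 3) * L ≤ (r : ℝ) * p n := by
      have hceil : (1 + ε / 3) * t ≤ (r : ℝ) := Nat.le_ceil _
      have : (1 + ε / 3) * t * p n = (1 + ε / 3) * L := by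
        rw [htdef]; field_simp
      calc (1 + ε / 3) * L = (1 + ε / 3) * t * p n := this.symm
        _ ≤ (r : ℝ) * p n := mul_le_mul_of_nonneg_right hceil hp1.le
    calc (1 - p n) ^ r ≤ Real.exp (-p n) ^ r := pow_le_pow_left₀ (by linarith) hb r
      _ = Real.exp ((r : ℝ) * -p n) := by rw [← Real.exp_nat_mul]
      _ ≤ Real.exp (-((1 + ε / 3) * L)) := by
          refine Real.exp_le_exp.2 ?_
          linarith
  have hd_eq : (n : ℝ) * p n = Real.exp L := (Real.exp_log hdpos).symm
  calc (n : ℝ) * (1 - p n) ^ r / (ε / 3 * t)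
      = ((n : ℝ) * p n * (1 - p n) ^ r) * (3 / (ε * L)) := by
        rw [htdef]; field_simp
    _ ≤ (Real.exp L * Real.exp (-((1 + ε / 3) * L))) * (3 / (ε * L)) := by
        rw [hd_eq]
        refine mul_le_mul_of_nonneg_right
          (mul_le_mul_of_nonneg_left hpow (Real.exp_pos L).le) (by positivity)
    _ = 3 * Real.exp (-(ε / 3 * L)) / (ε * L) := by
        rw [← Real.exp_add, show L + -((1 + ε / 3) * L) = -(ε / 3 * L) from by ring]
        ring

set_option maxHeartbeats 1000000 in
lemma lower_ev (p : ℕ → ℝ) (hp : ∀ n, 0 < p n ∧ p n < 1) (hp0 : Tendsto p atTop (nhds 0))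
    (hd : Tendsto (fun n : ℕ => n * p n) atTop atTop) {ε : ℝ} (hε : 0 < ε) :
    ∀ᶠ n : ℕ in atTop, gnp n (p n)
        {f | (domNumber (graphOf f) : ℝ) * (n * p n) / (n * Real.log (n * p n)) < 1 - ε} ≤
      ENNReal.ofReal (Real.exp (-Real.log (n * p n))) := by
  have hL : Tendsto (fun n : ℕ => Real.log (n * p n)) atTop atTop :=
    Real.tendsto_log_atTop.comp hd
  rcases le_or_gt 1 ε with hε1 | hε1
  · -- the event is empty
    filter_upwards [hd.eventually_ge_atTop 1, hL.eventually_ge_atTop 1] with n h2 h1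
    have hempty : {f : Sym2 (Fin n) → Bool |
        (domNumber (graphOf f) : ℝ) * (n * p n) / (n * Real.log (n * p n)) < 1 - ε} = ∅ := by
      ext f
      simp only [Set.mem_setOf_eq, Set.mem_empty_iff_false, iff_false, not_lt]
      have hnum : (0:ℝ) ≤ (domNumber (graphOf f) : ℝ) * (n * p n) / (n * Real.log (n * p n)) :=
        div_nonneg (mul_nonneg (Nat.cast_nonneg _) (by linarith))
          (mul_nonneg (Nat.cast_nonneg _) (by linarith))
      linarith
    rw [hempty, measure_empty]
    exact zero_le
  · have hLd : Tendsto (fun n : ℕ => Real.log (n * p n) / (n * p n)) atTop (nhds 0) :=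
      (Real.isLittleO_log_id_atTop.tendsto_div_nhds_zero).comp hd
    have hbig : ∀ᶠ x : ℝ in atTop, 4 * x ^ 2 + 2 * x ≤ Real.exp (ε / 2 * x) := by
      have hgr : Tendsto (fun x : ℝ => Real.exp (ε / 2 * x) / (ε / 2 * x) ^ 2) atTop atTop :=
        (Real.tendsto_exp_div_pow_atTop 2).comp (tendsto_id.const_mul_atTop (by positivity))
      have hgr2 : Tendsto (fun x : ℝ => (ε / 2) ^ 2 * (Real.exp (ε / 2 * x) / (ε / 2 * x) ^ 2))
          atTop atTop := hgr.const_mul_atTop (by positivity)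
      have hgr3 : ∀ᶠ x : ℝ in atTop,
          (ε / 2) ^ 2 * (Real.exp (ε / 2 * x) / (ε / 2 * x) ^ 2) =
            Real.exp (ε / 2 * x) / x ^ 2 := by
        filter_upwards [eventually_ge_atTop (1:ℝ)] with x hx
        have hx0 : x ≠ 0 := by linarith
        have hε2 : (ε / 2) ≠ 0 := by positivity
        field_simp
      have hgr4 : Tendsto (fun x : ℝ => Real.exp (ε / 2 * x) / x ^ 2) atTop atTop :=
        Tendsto.congr' hgr3 hgr2
      filter_upwards [hgr4.eventually_ge_atTop 6, eventually_ge_atTop (1:ℝ)] with x h6 hx1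
      have hx2 : (0:ℝ) < x ^ 2 := by positivity
      rw [le_div_iff₀ hx2] at h6
      nlinarith
    filter_upwards [hL.eventually_ge_atTop (max 1 (2 / (1 - ε))),
      hd.eventually_ge_atTop (max 1 (2 * Real.exp 1 / (1 - ε))),
      hp0.eventually_lt_const (show (0:ℝ) < min (ε / 2) 1 from lt_min (by positivity) one_pos),
      hLd.eventually_lt_const (show (0:ℝ) < 1 / (2 * (1 - ε)) from by
        have h1ε : (0:ℝ) < 1 - ε := by linarith
        positivity),
      hL.eventually hbig] with n h1 h2 h3 h4 h5
    obtain ⟨hp1, hp2⟩ := hp n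
    set L : ℝ := Real.log (n * p n) with hLdef
    have hL1 : (1:ℝ) ≤ L := le_trans (le_max_left _ _) h1
    have hL2 : 2 / (1 - ε) ≤ L := le_trans (le_max_right _ _) h1
    have hLpos : (0:ℝ) < L := lt_of_lt_of_le one_pos hL1
    have hd1 : (1:ℝ) ≤ n * p n := le_trans (le_max_left _ _) h2
    have hd2 : 2 * Real.exp 1 / (1 - ε) ≤ n * p n := le_trans (le_max_right _ _) h2
    have hdpos : (0:ℝ) < n * p n := lt_of_lt_of_le one_pos hd1
    have hpε : p n ≤ ε / 2 := le_of_lt (lt_of_lt_of_le h3 (min_le_left _ _))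
    have hn0 : n ≠ 0 := by
      rintro rfl
      simp only [Nat.cast_zero, zero_mul] at hd1
      linarith
    have hnpos : (0:ℝ) < n := by exact_mod_cast Nat.pos_of_ne_zero hn0
    have hn1 : 1 ≤ n := Nat.pos_of_ne_zero hn0
    have h1ε : (0:ℝ) < 1 - ε := by linarith
    have h1p : (0:ℝ) < 1 - p n := by linarith
    set t : ℝ := L / p n with htdef
    have htpos : (0:ℝ) < t := by positivity
    set r : ℕ := ⌊(1 - ε) * t⌋₊ with hrdef
    have hrle : (r : ℝ) ≤ (1 - ε) * t := Nat.floor_le (by positivity)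
    have hrge : (1 - ε) * t - 1 ≤ (r : ℝ) := by
      have := Nat.lt_floor_add_one ((1 - ε) * t)
      linarith
    have ht2 : (2:ℝ) ≤ (1 - ε) * t := by
      have hLp : L ≤ t := le_div_self (by linarith) hp1 hp2.le
      have : 2 / (1 - ε) ≤ t := le_trans hL2 hLp
      calc (2:ℝ) = (1 - ε) * (2 / (1 - ε)) := by field_simp
        _ ≤ (1 - ε) * t := mul_le_mul_of_nonneg_left this h1ε.le
    have hr1 : 1 ≤ r := by
      have : (1:ℝ) ≤ (r : ℝ) := by linarith
      exact_mod_cast this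
    have hrpos : (0:ℝ) < r := by exact_mod_cast hr1
    have hrhalf : (r : ℝ) ≤ (n : ℝ) / 2 := by
      have h4' : (1 - ε) * L < (n * p n) / 2 := by
        rw [div_lt_div_iff₀ hdpos (by positivity : (0:ℝ) < 2 * (1 - ε))] at h4
        linarith
      have : (1 - ε) * t < (n : ℝ) / 2 := by
        rw [htdef, ← mul_div_assoc, div_lt_iff₀ hp1]
        calc (1 - ε) * L < (n * p n) / 2 := h4'
          _ = (n : ℝ) / 2 * p n := by ring
      linarith
    have hrn : r ≤ n := by
      have : (r : ℝ) ≤ (n : ℝ) := by linarith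
      exact_mod_cast this
    -- event containment
    have hsub : {f : Sym2 (Fin n) → Bool |
        (domNumber (graphOf f) : ℝ) * (n * p n) / (n * Real.log (n * p n)) < 1 - ε} ⊆
        {f | domNumber (graphOf f) ≤ r} := by
      intro f hf
      simp only [Set.mem_setOf_eq] at hf ⊢
      set D : ℕ := domNumber (graphOf f) with hDdef
      have hratio : (D : ℝ) * (n * p n) / (n * Real.log (n * p n)) = D * p n / L := by
        rw [← hLdef]; field_simp
      rw [hratio, div_lt_iff₀ hLpos] at hf
      refine Nat.le_floor ?_
      rw [htdef, ← mul_div_assoc, le_div_iff₀ hp1]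
      nlinarith
    refine le_trans (measure_mono hsub) ?_
    refine le_trans (gnp_domNumber_le hp1.le hp2.le hrn) ?_
    -- convert to ofReal (EX n r p)
    have hq1 : (1 - p n) ^ r ≤ 1 := pow_le_one₀ h1p.le (by linarith)
    have hconv : (n.choose r : ℝ≥0∞) * (1 - ENNReal.ofReal (1 - p n) ^ r) ^ (n - r) =
        ENNReal.ofReal (EX n r (p n)) := by
      rw [← ENNReal.ofReal_pow h1p.le r,
        show (1:ℝ≥0∞) - ENNReal.ofReal ((1 - p n) ^ r) =
          ENNReal.ofReal (1 - (1 - p n) ^ r) from by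
            rw [ENNReal.ofReal_sub _ (pow_nonneg h1p.le r), ENNReal.ofReal_one],
        ← ENNReal.ofReal_pow (by linarith : (0:ℝ) ≤ 1 - (1 - p n) ^ r),
        ← ENNReal.ofReal_natCast, ← ENNReal.ofReal_mul (Nat.cast_nonneg _)]
      rfl
    rw [hconv]
    refine ENNReal.ofReal_le_ofReal ?_
    -- real inequality : EX n r p ≤ exp (-L)
    refine le_trans (EX_le_exp hp1.le hp2.le hr1 hn1) ?_
    refine Real.exp_le_exp.2 ?_
    set A : ℝ := (r : ℝ) * Real.log (Real.exp 1 * n / r) with hAdef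
    set B : ℝ := ((n - r : ℕ) : ℝ) * (1 - p n) ^ r with hBdef
    have hnr : ((n - r : ℕ) : ℝ) = (n : ℝ) - r := by
      rw [Nat.cast_sub hrn]
    -- bound A
    have hrget : (1 - ε) * t / 2 ≤ (r : ℝ) := by linarith
    have hA : A ≤ t * (2 * L) := by
      have hlog : Real.log (Real.exp 1 * n / r) ≤ 2 * L := by
        have hchain : Real.exp 1 * n / r ≤ (n * p n) * (n * p n) := by
          calc Real.exp 1 * n / r ≤ Real.exp 1 * n / ((1 - ε) * t / 2) := by
                refine div_le_div_of_nonneg_left (by positivity)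
                  (by have := mul_pos h1ε htpos; linarith) hrget
            _ = 2 * Real.exp 1 * (n * p n) / ((1 - ε) * L) := by
                rw [htdef]; field_simp
            _ ≤ 2 * Real.exp 1 * (n * p n) / (1 - ε) := by
                refine div_le_div_of_nonneg_left (by positivity) h1ε ?_
                nlinarith
            _ ≤ (n * p n) * (n * p n) := by
                have h2e : 2 * Real.exp 1 ≤ (n * p n) * (1 - ε) := by
                  rw [div_le_iff₀ h1ε] at hd2
                  linarith
                rw [div_le_iff₀ h1ε]
                nlinarith [mul_le_mul_of_nonneg_left h2e hdpos.le]
        calc Real.log (Real.exp 1 * n / r) ≤ Real.log ((n * p n) * (n * p n)) :=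
              Real.log_le_log (by positivity) hchain
          _ = 2 * L := by rw [Real.log_mul (by positivity) (by positivity), hLdef]; ring
      have hlog0 : (0:ℝ) ≤ Real.log (Real.exp 1 * n / r) := by
        refine Real.log_nonneg ?_
        rw [le_div_iff₀ hrpos, one_mul]
        calc (r:ℝ) ≤ n := by linarith
          _ = 1 * n := (one_mul _).symm
          _ ≤ Real.exp 1 * n := by
              refine mul_le_mul_of_nonneg_right ?_ (by positivity)
              linarith [Real.add_one_le_exp (1:ℝ)]
      have hrt : (r : ℝ) ≤ t := by nlinarith
      exact mul_le_mul hrt hlog hlog0 htpos.le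
    -- bound B from below
    have hB : Real.exp (ε / 2 * L) / (2 * p n) ≤ B := by
      have hq : Real.exp (-((1 - ε / 2) * L)) ≤ (1 - p n) ^ r := by
        refine le_trans ?_ (exp_neg_le_one_sub_pow hp1.le hp2 r)
        refine Real.exp_le_exp.2 ?_
        have hkey : p n / (1 - p n) * r ≤ (1 - ε / 2) * L := by
          calc p n / (1 - p n) * r ≤ p n / (1 - p n) * ((1 - ε) * t) := by
                refine mul_le_mul_of_nonneg_left hrle (by positivity)
            _ = (1 - ε) * L / (1 - p n) := by rw [htdef]; field_simp
            _ ≤ (1 - ε / 2) * L := by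
                rw [div_le_iff₀ h1p]
                have hstep : (1 - ε / 2) * L * (1 - p n) - (1 - ε) * L =
                    L * (ε / 2 - p n) + L * (p n * ε / 2) := by ring
                have g1 : 0 ≤ L * (ε / 2 - p n) :=
                  mul_nonneg hLpos.le (by linarith)
                have g2 : 0 ≤ L * (p n * ε / 2) :=
                  mul_nonneg hLpos.le (by positivity)
                linarith
        linarith
      have hnhalf : (n : ℝ) / 2 ≤ ((n - r : ℕ) : ℝ) := by rw [hnr]; linarith
      have hn_eq : (n : ℝ) = Real.exp L / p n := by
        rw [hLdef, Real.exp_log hdpos]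
        field_simp
      have hexp : Real.exp L * Real.exp (-((1 - ε / 2) * L)) = Real.exp (ε / 2 * L) := by
        rw [← Real.exp_add]; congr 1; ring
      calc Real.exp (ε / 2 * L) / (2 * p n)
          = (n : ℝ) / 2 * Real.exp (-((1 - ε / 2) * L)) := by
            rw [hn_eq, ← hexp]
            field_simp
        _ ≤ ((n - r : ℕ) : ℝ) * (1 - p n) ^ r := by
            refine mul_le_mul hnhalf hq (Real.exp_pos _).le (by positivity)
    -- combine
    have hbr : 2 * L ^ 2 - Real.exp (ε / 2 * L) / 2 ≤ -L := by
      rw [hLdef] at h5 ⊢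
      nlinarith [h5]
    have hcomb : A - B ≤ (2 * L ^ 2 - Real.exp (ε / 2 * L) / 2) / p n := by
      have hAB : A - B ≤ t * (2 * L) - Real.exp (ε / 2 * L) / (2 * p n) := by linarith
      have heq : t * (2 * L) - Real.exp (ε / 2 * L) / (2 * p n) =
          (2 * L ^ 2 - Real.exp (ε / 2 * L) / 2) / p n := by
        rw [htdef]; field_simp
      linarith [heq ▸ hAB]
    have hfinal : (2 * L ^ 2 - Real.exp (ε / 2 * L) / 2) / p n ≤
        2 * L ^ 2 - Real.exp (ε / 2 * L) / 2 := by
      rw [div_le_iff₀ hp1]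
      have hneg : 2 * L ^ 2 - Real.exp (ε / 2 * L) / 2 ≤ 0 := by linarith
      nlinarith
    linarith

/-- Proposition 2: if `p → 0` and `d = np → ∞`, then a.a.s.
`D(G(n,p)) = (n ln d / d)(1 + o(1))`. -/
theorem stmt_1 (p : ℕ → ℝ) (hp : ∀ n, 0 < p n ∧ p n < 1)
    (hp0 : Tendsto p atTop (nhds 0))
    (hd : Tendsto (fun n : ℕ => n * p n) atTop atTop) :
    ∀ ε > (0 : ℝ),
      Tendsto (fun n : ℕ => gnp n (p n)
          {f | |(domNumber (graphOf f) : ℝ) * (n * p n) / (n * Real.log (n * p n)) - 1| ≤ ε})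
        atTop (nhds 1) := by
  intro ε hε
  have hU := upper_ev p hp hd hε
  have hV := lower_ev p hp hp0 hd hε
  have hL : Tendsto (fun n : ℕ => Real.log (n * p n)) atTop atTop :=
    Real.tendsto_log_atTop.comp hd
  -- the two bounding sequences tend to zero
  have hu0 : Tendsto (fun n : ℕ => ENNReal.ofReal (3 * Real.exp (-(ε / 3 * Real.log (n * p n))) /
      (ε * Real.log (n * p n)))) atTop (nhds 0) := by
    rw [← ENNReal.ofReal_zero]
    refine ENNReal.tendsto_ofReal ?_
    have h1 : Tendsto (fun n : ℕ => Real.exp (-(ε / 3 * Real.log (n * p n)))) atTop (nhds 0) :=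
      Real.tendsto_exp_atBot.comp
        (tendsto_neg_atTop_atBot.comp (hL.const_mul_atTop (by positivity)))
    have h2 : Tendsto (fun n : ℕ => (ε * Real.log (n * p n))⁻¹) atTop (nhds 0) :=
      tendsto_inv_atTop_zero.comp (hL.const_mul_atTop hε)
    have h3 := (h1.mul h2).const_mul (3 : ℝ)
    simp only [mul_zero] at h3
    refine h3.congr fun n => by rw [div_eq_mul_inv]; ring
  have hw0 : Tendsto (fun n : ℕ => ENNReal.ofReal (Real.exp (-Real.log (n * p n)))) atTop
      (nhds 0) := by
    rw [← ENNReal.ofReal_zero]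
    refine ENNReal.tendsto_ofReal ?_
    exact Real.tendsto_exp_atBot.comp (tendsto_neg_atTop_atBot.comp hL)
  -- bound the complement
  have hcompl : ∀ᶠ n : ℕ in atTop, gnp n (p n)
      {f | |(domNumber (graphOf f) : ℝ) * (n * p n) / (n * Real.log (n * p n)) - 1| ≤ ε}ᶜ ≤
      ENNReal.ofReal (3 * Real.exp (-(ε / 3 * Real.log (n * p n))) / (ε * Real.log (n * p n))) +
        ENNReal.ofReal (Real.exp (-Real.log (n * p n))) := by
    filter_upwards [hU, hV] with n hu hv
    have hsubc : {f : Sym2 (Fin n) → Bool |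
        |(domNumber (graphOf f) : ℝ) * (n * p n) / (n * Real.log (n * p n)) - 1| ≤ ε}ᶜ ⊆
        {f | 1 + ε < (domNumber (graphOf f) : ℝ) * (n * p n) / (n * Real.log (n * p n))} ∪
        {f | (domNumber (graphOf f) : ℝ) * (n * p n) / (n * Real.log (n * p n)) < 1 - ε} := by
      intro f hf
      simp only [Set.mem_compl_iff, Set.mem_setOf_eq, not_le] at hf
      rw [lt_abs] at hf
      rcases hf with hf | hf
      · exact Or.inl (by simp only [Set.mem_setOf_eq]; linarith)
      · exact Or.inr (by simp only [Set.mem_setOf_eq]; linarith)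
    calc gnp n (p n) {f | |(domNumber (graphOf f) : ℝ) * (n * p n) /
          (n * Real.log (n * p n)) - 1| ≤ ε}ᶜ
        ≤ gnp n (p n) ({f | 1 + ε < (domNumber (graphOf f) : ℝ) * (n * p n) /
            (n * Real.log (n * p n))} ∪
          {f | (domNumber (graphOf f) : ℝ) * (n * p n) / (n * Real.log (n * p n)) < 1 - ε}) :=
          measure_mono hsubc
      _ ≤ gnp n (p n) {f | 1 + ε < (domNumber (graphOf f) : ℝ) * (n * p n) /
            (n * Real.log (n * p n))} +
          gnp n (p n) {f | (domNumber (graphOf f) : ℝ) * (n * p n) /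
            (n * Real.log (n * p n)) < 1 - ε} := measure_union_le _ _
      _ ≤ _ := add_le_add hu hv
  have h0 : Tendsto (fun n : ℕ => gnp n (p n)
      {f | |(domNumber (graphOf f) : ℝ) * (n * p n) / (n * Real.log (n * p n)) - 1| ≤ ε}ᶜ)
      atTop (nhds 0) := by
    refine tendsto_of_tendsto_of_tendsto_of_le_of_le' tendsto_const_nhds
      (by simpa using hu0.add hw0) (Eventually.of_forall fun n => zero_le) hcompl
  have heq : ∀ n : ℕ, gnp n (p n)
      {f | |(domNumber (graphOf f) : ℝ) * (n * p n) / (n * Real.log (n * p n)) - 1| ≤ ε} =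
      1 - gnp n (p n)
      {f | |(domNumber (graphOf f) : ℝ) * (n * p n) / (n * Real.log (n * p n)) - 1| ≤ ε}ᶜ := by
    intro n
    have := prob_compl_eq_one_sub (μ := gnp n (p n))
      (s := {f : Sym2 (Fin n) → Bool |
        |(domNumber (graphOf f) : ℝ) * (n * p n) / (n * Real.log (n * p n)) - 1| ≤ ε}ᶜ)
      MeasurableSet.of_discrete
    rwa [compl_compl] at this
  refine Tendsto.congr (fun n => (heq n).symm) ?_
  have := ENNReal.Tendsto.sub
    (tendsto_const_nhds : Tendsto (fun _ : ℕ => (1 : ℝ≥0∞)) atTop (nhds 1)) h0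
    (Or.inl ENNReal.one_ne_top)
  simpa using this
end

section
/- Let n ≥ 1, let 0 < p < 1, and let X_r denote the number of dominating sets of size r in G ~ G(n,p), so E(X_r) = C(n,r)(1−(1−p)^r)^{n−r}. Then for every integer ℓ with 0 ≤ ℓ < n/2 one has E(X_ℓ) < E(X_{ℓ+1}); moreover, for every integer ℓ with 1 ≤ ℓ < n/2, E(X_{ℓ+1}) ≥ exp( (n−ℓ) · (1−p)^ℓ · p ) · E(X_ℓ). -/
open MeasureTheory Filter
open scoped Classical

/-- from Lemma 6: monotonicity of `E(X_ℓ)` for `ℓ < n/2`, and the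
quantitative lower bound `E(X_{ℓ+1}) ≥ exp((n-ℓ)(1-p)^ℓ p) E(X_ℓ)` for `1 ≤ ℓ < n/2`. -/
theorem stmt_5 (n : ℕ) (hn : 1 ≤ n) (p : ℝ) (hp0 : 0 < p) (hp1 : p < 1) :
    (∀ ℓ : ℕ, 2 * ℓ < n → EX n ℓ p < EX n (ℓ + 1) p) ∧
    (∀ ℓ : ℕ, 1 ≤ ℓ → 2 * ℓ < n →
      EX n (ℓ + 1) p ≥ Real.exp (((n : ℝ) - ℓ) * (1 - p) ^ ℓ * p) * EX n ℓ p) := by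
  have hq0 : (0:ℝ) < 1 - p := by linarith
  have hq1 : (1:ℝ) - p < 1 := by linarith
  have key : ∀ ℓ : ℕ, 1 ≤ ℓ → 2 * ℓ < n →
      EX n (ℓ + 1) p ≥ Real.exp (((n : ℝ) - ℓ) * (1 - p) ^ ℓ * p) * EX n ℓ p := by
    intro ℓ hℓ1 hℓn
    set q : ℝ := 1 - p with hqdef
    set a : ℝ := 1 - q ^ ℓ with ha
    set b : ℝ := 1 - q ^ (ℓ + 1) with hb
    set c : ℝ := q ^ ℓ * p with hc
    have hqlpos : 0 < q ^ ℓ := pow_pos hq0 ℓ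
    have hql1 : q ^ ℓ < 1 := pow_lt_one₀ hq0.le hq1 (by omega)
    have hqs1 : q ^ (ℓ + 1) < 1 := pow_lt_one₀ hq0.le hq1 (by omega)
    have hqspos : 0 < q ^ (ℓ + 1) := pow_pos hq0 _
    have ha0 : 0 < a := by rw [ha]; linarith
    have ha1 : a < 1 := by rw [ha]; linarith
    have hb0 : 0 < b := by rw [hb]; linarith
    have hb1 : b < 1 := by rw [hb]; linarith
    have hc0 : 0 < c := mul_pos hqlpos hp0
    have hcq : c ≤ q ^ ℓ := by
      rw [hc]; nlinarith
    have hbac : b = a + c := by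
      rw [hb, ha, hc, pow_succ, hqdef]; ring
    -- a * exp c ≤ b
    have h1 : a * Real.exp c ≤ b := by
      have e1 : -(c / b) + 1 ≤ Real.exp (-(c / b)) := by
        have := Real.add_one_le_exp (-(c / b)); linarith
      have e2 : Real.exp (-(c / b)) ≤ Real.exp (-c) := by
        apply Real.exp_le_exp.2
        have : c ≤ c / b := by
          rw [le_div_iff₀ hb0]; nlinarith
        linarith
      have e3 : a / b ≤ Real.exp (-c) := by
        have : a / b = -(c / b) + 1 := by
          field_simp; linarith [hbac]
        linarith
      have e4 : a ≤ b * Real.exp (-c) := by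
        rw [div_le_iff₀ hb0] at e3; linarith [e3]
      calc a * Real.exp c ≤ (b * Real.exp (-c)) * Real.exp c :=
            mul_le_mul_of_nonneg_right e4 (Real.exp_nonneg c)
        _ = b := by rw [mul_assoc, ← Real.exp_add]; simp
    -- a * exp c ≤ 1
    have h2 : a * Real.exp c ≤ 1 := by
      have e1 : a ≤ Real.exp (-(q ^ ℓ)) := by
        have := Real.add_one_le_exp (-(q ^ ℓ)); rw [ha]; linarith
      calc a * Real.exp c ≤ Real.exp (-(q ^ ℓ)) * Real.exp c :=
            mul_le_mul_of_nonneg_right e1 (Real.exp_nonneg c)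
        _ = Real.exp (c - q ^ ℓ) := by rw [← Real.exp_add]; ring_nf
        _ ≤ 1 := by
            rw [show (1:ℝ) = Real.exp 0 by simp]
            exact Real.exp_le_exp.2 (by linarith)
    obtain ⟨m, hm⟩ : ∃ m, n = ℓ + 1 + m := ⟨n - (ℓ + 1), by omega⟩
    subst hm
    have hsub1 : ℓ + 1 + m - (ℓ + 1) = m := by omega
    have hsub2 : ℓ + 1 + m - ℓ = m + 1 := by omega
    have hcast : ((ℓ + 1 + m : ℕ) : ℝ) - (ℓ : ℕ) = ((m + 1 : ℕ) : ℝ) := by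
      push_cast; ring
    rw [EX, EX, hsub1, hsub2]
    rw [show ((ℓ + 1 + m : ℕ) : ℝ) - (ℓ:ℕ) = ((m + 1 : ℕ) : ℝ) from hcast]
    rw [← ha, ← hb]
    have hexp : Real.exp (((m + 1 : ℕ) : ℝ) * (q ^ ℓ) * p) = (Real.exp c) ^ (m + 1) := by
      rw [hc, mul_assoc, ← Real.exp_nat_mul]
    rw [hexp]
    -- choose monotone
    have hchoose : ((ℓ + 1 + m).choose ℓ : ℝ) ≤ ((ℓ + 1 + m).choose (ℓ + 1) : ℝ) := by
      have h := Nat.choose_succ_right_eq (ℓ + 1 + m) ℓ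
      have hge : ℓ + 1 + m - ℓ ≥ ℓ + 1 := by omega
      have : (ℓ + 1 + m).choose ℓ * (ℓ + 1) ≤ (ℓ + 1 + m).choose (ℓ + 1) * (ℓ + 1) := by
        rw [h]; exact Nat.mul_le_mul_left _ hge
      exact_mod_cast Nat.le_of_mul_le_mul_right this (by omega)
    have hpow : (Real.exp c) ^ (m + 1) * a ^ (m + 1) ≤ b ^ m := by
      have heq : (Real.exp c) ^ (m + 1) * a ^ (m + 1) = (a * Real.exp c) ^ (m + 1) := by
        rw [mul_pow]; ring
      rw [heq, pow_succ]
      have hnn : 0 ≤ a * Real.exp c := le_of_lt (mul_pos ha0 (Real.exp_pos c))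
      calc (a * Real.exp c) ^ m * (a * Real.exp c)
          ≤ (a * Real.exp c) ^ m * 1 :=
            mul_le_mul_of_nonneg_left h2 (pow_nonneg hnn m)
        _ = (a * Real.exp c) ^ m := by ring
        _ ≤ b ^ m := pow_le_pow_left₀ hnn h1 m
    calc Real.exp c ^ (m + 1) * (((ℓ + 1 + m).choose ℓ : ℝ) * a ^ (m + 1))
        = ((ℓ + 1 + m).choose ℓ : ℝ) * ((Real.exp c) ^ (m + 1) * a ^ (m + 1)) := by ring
      _ ≤ ((ℓ + 1 + m).choose ℓ : ℝ) * b ^ m :=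
          mul_le_mul_of_nonneg_left hpow (Nat.cast_nonneg _)
      _ ≤ ((ℓ + 1 + m).choose (ℓ + 1) : ℝ) * b ^ m :=
          mul_le_mul_of_nonneg_right hchoose (pow_nonneg hb0.le m)
  refine ⟨?_, key⟩
  intro ℓ hℓn
  rcases Nat.eq_zero_or_pos ℓ with h0 | h1
  · subst h0
    have hEX0 : EX n 0 p = 0 := by
      rw [EX]
      have : (1:ℝ) - (1 - p) ^ 0 = 0 := by simp
      rw [this, zero_pow (show n - 0 ≠ 0 by omega), mul_zero]
    rw [hEX0, EX]
    apply mul_pos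
    · exact_mod_cast Nat.choose_pos (by omega : 1 ≤ n)
    · apply pow_pos; simp; linarith
  · have hk := key ℓ h1 hℓn
    have hEXpos : 0 < EX n ℓ p := by
      rw [EX]
      apply mul_pos
      · exact_mod_cast Nat.choose_pos (by omega : ℓ ≤ n)
      · apply pow_pos
        have : (1 - p) ^ ℓ < 1 := pow_lt_one₀ (by linarith) (by linarith) (by omega)
        linarith
    have hexp1 : 1 < Real.exp (((n : ℝ) - ℓ) * (1 - p) ^ ℓ * p) := by
      apply Real.one_lt_exp_iff.2
      apply mul_pos (mul_pos _ (pow_pos hq0 ℓ)) hp0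
      have : (ℓ:ℝ) < n := by exact_mod_cast (by omega : ℓ < n)
      linarith
    calc EX n ℓ p = 1 * EX n ℓ p := by ring
      _ < Real.exp (((n : ℝ) - ℓ) * (1 - p) ^ ℓ * p) * EX n ℓ p :=
          mul_lt_mul_of_pos_right hexp1 hEXpos
      _ ≤ EX n (ℓ + 1) p := hk
end

section
/- Let p = p(n) → 0 with d = np → ∞, let r = r(n) be a sequence of positive integers with p(n)·(r(n) − log_q(d/ln²d)) → 0, and let α = α(n) be a sequence of positive integers with p(n)·α(n) → 0. Then ln( E(X_{r+α}) / E(X_r) ) / ( α · ln²d ) → 1 as n → ∞; that is, E(X_{r+α})/E(X_r) = exp( (1+o(1)) · α · ln²d ). -/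
open MeasureTheory Filter
open scoped Classical

lemma aux_choose_upper (n r a : ℕ) : n.choose (r + a) * r ^ a ≤ n.choose r * n ^ a := by
  induction a with
  | zero => simp
  | succ a ih =>
    have h1 : n.choose (r + a + 1) * r ≤ n.choose (r + a) * n := by
      calc n.choose (r+a+1) * r ≤ n.choose (r+a+1) * (r+a+1) :=
            Nat.mul_le_mul_left _ (by omega)
        _ = n.choose (r+a) * (n - (r+a)) := Nat.choose_succ_right_eq n (r+a)
        _ ≤ n.choose (r+a) * n := Nat.mul_le_mul_left _ (Nat.sub_le _ _)
    calc n.choose (r + (a+1)) * r ^ (a+1)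
        = (n.choose (r+a+1) * r) * r ^ a := by rw [← Nat.add_assoc]; ring
      _ ≤ (n.choose (r+a) * n) * r ^ a := Nat.mul_le_mul_right _ h1
      _ = (n.choose (r+a) * r ^ a) * n := by ring
      _ ≤ (n.choose r * n ^ a) * n := Nat.mul_le_mul_right _ ih
      _ = n.choose r * n ^ (a+1) := by ring

lemma aux_choose_lower (n r : ℕ) : ∀ a, 2 * (r + a) ≤ n → n.choose r ≤ n.choose (r + a) := by
  intro a
  induction a with
  | zero => simp
  | succ a ih =>
    intro h
    refine (ih (by omega)).trans ?_
    have h2 : n.choose (r+a) * (r+a+1) ≤ n.choose (r+a+1) * (r+a+1) := by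
      rw [Nat.choose_succ_right_eq]
      exact Nat.mul_le_mul_left _ (by omega)
    exact Nat.le_of_mul_le_mul_right h2 (by omega)

lemma aux_slope_log1p :
    Tendsto (fun t : ℝ => Real.log (1 + t) / t) (nhdsWithin 0 {(0:ℝ)}ᶜ) (nhds 1) := by
  have h : HasDerivAt (fun t : ℝ => Real.log (1 + t)) 1 0 := by
    have := (Real.hasDerivAt_log (by norm_num : (1:ℝ) + 0 ≠ 0)).comp 0
      ((hasDerivAt_id (0:ℝ)).const_add 1)
    simpa [Function.comp_def] using this
  have h2 := hasDerivAt_iff_tendsto_slope.1 h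
  refine h2.congr fun t => ?_
  simp [slope_def_field, Real.log_one]

lemma aux_slope_exp :
    Tendsto (fun t : ℝ => (1 - Real.exp (-t)) / t) (nhdsWithin 0 {(0:ℝ)}ᶜ) (nhds 1) := by
  have h : HasDerivAt (fun t : ℝ => 1 - Real.exp (-t)) 1 0 := by
    have := ((Real.hasDerivAt_exp (-0)).comp 0 (hasDerivAt_neg (0:ℝ))).const_sub 1
    simpa using this
  have h2 := hasDerivAt_iff_tendsto_slope.1 h
  refine h2.congr fun t => ?_
  simp [slope_def_field]

lemma aux_slope_neglog :
    Tendsto (fun t : ℝ => -Real.log (1 - t) / t) (nhdsWithin 0 {(0:ℝ)}ᶜ) (nhds 1) := by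
  have h : HasDerivAt (fun t : ℝ => -Real.log (1 - t)) 1 0 := by
    have := ((Real.hasDerivAt_log (by norm_num : (1:ℝ) - 0 ≠ 0)).comp 0
      ((hasDerivAt_id (0:ℝ)).const_sub 1)).neg
    simpa [Function.comp_def, Pi.neg_def] using this
  have h2 := hasDerivAt_iff_tendsto_slope.1 h
  refine h2.congr fun t => ?_
  simp [slope_def_field]

-- p ≤ -log(1-p)
lemma aux_le_neg_log (t : ℝ) (ht : t < 1) : t ≤ -Real.log (1 - t) := by
  have h := Real.add_one_le_exp (-t)
  have h2 : Real.log (1 - t) ≤ -t := by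
    rw [← Real.log_exp (-t)]
    exact Real.log_le_log (by linarith) (by linarith)
  linarith

lemma aux_log_plus_one_div (b : ℝ) : Tendsto (fun t : ℝ => (Real.log t + b) / t) atTop (nhds 0) := by
  have h1 : Tendsto (fun t : ℝ => Real.log t / t) atTop (nhds 0) := by
    have := Real.tendsto_pow_log_div_mul_add_atTop 1 0 1 one_ne_zero
    simpa using this
  have h2 : Tendsto (fun t : ℝ => b / t) atTop (nhds 0) := by
    simpa using tendsto_const_nhds.div_atTop (tendsto_id (α := ℝ))
  have := h1.add h2
  simpa [add_div] using this

lemma aux_d_div_logsq : Tendsto (fun t : ℝ => Real.log (t / Real.log t ^ 2)) atTop atTop := by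
  have h1 : Tendsto (fun t : ℝ => Real.log t ^ 2 / t) atTop (nhds 0) := by
    have := Real.tendsto_pow_log_div_mul_add_atTop 1 0 2 one_ne_zero
    simpa using this
  have h2 : Tendsto (fun t : ℝ => Real.log t ^ 2 / t) atTop (nhdsWithin 0 (Set.Ioi 0)) := by
    rw [tendsto_nhdsWithin_iff]
    refine ⟨h1, ?_⟩
    filter_upwards [eventually_ge_atTop (3:ℝ)] with t ht
    have hlt : (1:ℝ) < Real.log t := by
      rw [Real.lt_log_iff_exp_lt (by linarith)]
      calc Real.exp 1 < 2.7182818286 := Real.exp_one_lt_d9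
        _ < 3 := by norm_num
        _ ≤ t := ht
    exact Set.mem_Ioi.2 (div_pos (by nlinarith) (by linarith))
  have h3 : Tendsto (fun t : ℝ => t / Real.log t ^ 2) atTop atTop := by
    have := h2.inv_tendsto_nhdsGT_zero
    refine this.congr' ?_
    filter_upwards [eventually_gt_atTop (0:ℝ)] with t ht
    rw [Pi.inv_apply, inv_div]
  exact Real.tendsto_log_atTop.comp h3

noncomputable def df (p : ℕ → ℝ) (n : ℕ) : ℝ := (n : ℝ) * p n
noncomputable def Lf (p : ℕ → ℝ) (n : ℕ) : ℝ := Real.log (df p n)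
noncomputable def cf (p : ℕ → ℝ) (n : ℕ) : ℝ := -Real.log (1 - p n)
noncomputable def Tf (p : ℕ → ℝ) (n : ℕ) : ℝ := Real.log (df p n / Lf p n ^ 2)
noncomputable def Ef (p : ℕ → ℝ) (r : ℕ → ℕ) (n : ℕ) : ℝ := cf p n * r n - Tf p n
noncomputable def xf (p : ℕ → ℝ) (r : ℕ → ℕ) (n : ℕ) : ℝ := (1 - p n) ^ r n
noncomputable def sf (p : ℕ → ℝ) (α : ℕ → ℕ) (n : ℕ) : ℝ := (α n : ℝ) * cf p n
noncomputable def uf (p : ℕ → ℝ) (r α : ℕ → ℕ) (n : ℕ) : ℝ :=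
  (xf p r n - xf p (fun m => r m + α m) n) / (1 - xf p r n)

section main
variable (p : ℕ → ℝ) (r α : ℕ → ℕ)

set_option maxHeartbeats 2000000 in
lemma main_block (hp : ∀ n, 0 < p n ∧ p n < 1)
    (hp0 : Tendsto p atTop (nhds 0))
    (hd : Tendsto (df p) atTop atTop)
    (hrpos : ∀ n, 0 < r n)
    (hr : Tendsto (fun n : ℕ => p n * ((r n : ℝ) -
        Real.log ((n * p n) / (Real.log (n * p n)) ^ 2) / Real.log (1 / (1 - p n))))
      atTop (nhds 0))
    (hαpos : ∀ n, 0 < α n)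
    (hα : Tendsto (fun n : ℕ => p n * (α n : ℝ)) atTop (nhds 0)) :
    Tendsto (fun n : ℕ =>
        Real.log (EX n (r n + α n) (p n) / EX n (r n) (p n))
          / ((α n : ℝ) * (Real.log (n * p n)) ^ 2)) atTop (nhds 1) := by
  have hp1 : ∀ n, 0 < p n := fun n => (hp n).1
  have hp2 : ∀ n, p n < 1 := fun n => (hp n).2
  have hq : ∀ n, 0 < 1 - p n := fun n => by linarith [hp2 n]
  have hq1 : ∀ n, 1 - p n < 1 := fun n => by linarith [hp1 n]
  have hc : ∀ n, 0 < cf p n := fun n => by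
    have := Real.log_neg (hq n) (hq1 n)
    simp only [cf]; linarith
  -- c/p → 1
  have hptends : Tendsto p atTop (nhdsWithin 0 {(0:ℝ)}ᶜ) := by
    rw [tendsto_nhdsWithin_iff]
    exact ⟨hp0, Eventually.of_forall fun n => (hp1 n).ne'⟩
  have hcp : Tendsto (fun n => cf p n / p n) atTop (nhds 1) := by
    have := aux_slope_neglog.comp hptends
    exact this.congr fun n => rfl
  -- T → ∞
  have hT : Tendsto (Tf p) atTop atTop := by
    have := aux_d_div_logsq.comp hd
    exact this.congr fun n => rfl
  -- E → 0
  have hr' : Tendsto (fun n : ℕ => p n * ((r n : ℝ) - Tf p n / cf p n)) atTop (nhds 0) := by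
    refine hr.congr fun n => ?_
    have : Real.log (1 / (1 - p n)) = cf p n := by
      rw [one_div, Real.log_inv]; rfl
    rw [this]; rfl
  have hE : Tendsto (Ef p r) atTop (nhds 0) := by
    have h := hcp.mul hr'
    rw [one_mul] at h
    refine h.congr fun n => ?_
    have hcn := (hc n).ne'
    have hpn := (hp1 n).ne'
    simp only [Ef]
    field_simp
  -- c r → ∞
  have hcr : Tendsto (fun n => cf p n * (r n : ℝ)) atTop atTop := by
    have hTm : Tendsto (fun n => Tf p n - 1) atTop atTop :=
      tendsto_atTop_add_const_right _ _ hT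
    refine tendsto_atTop_mono' _ ?_ hTm
    filter_upwards [hE.eventually (eventually_ge_nhds (by norm_num : (-1:ℝ) < 0))] with n hn
    have : Ef p r n = cf p n * r n - Tf p n := rfl
    linarith [this ▸ hn]
  -- x = exp(-(c r))
  have hxeq : ∀ n, xf p r n = Real.exp (-(cf p n * r n)) := by
    intro n
    have h1 : Real.log (xf p r n) = (r n : ℝ) * Real.log (1 - p n) := by
      simp only [xf]; rw [Real.log_pow]
    have h2 : xf p r n = Real.exp (Real.log (xf p r n)) :=
      (Real.exp_log (pow_pos (hq n) _)).symm
    rw [h2, h1]; congr 1; simp only [cf]; ring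
  have hx0 : Tendsto (xf p r) atTop (nhds 0) := by
    have h1 : Tendsto (fun n => -(cf p n * (r n : ℝ))) atTop atBot :=
      tendsto_neg_atTop_atBot.comp hcr
    have := Real.tendsto_exp_atBot.comp h1
    exact (this.congr fun n => (hxeq n).symm)
  -- s → 0, s > 0
  have hs0 : Tendsto (sf p α) atTop (nhds 0) := by
    have h := hcp.mul hα
    rw [one_mul] at h
    refine h.congr fun n => ?_
    have hpn := (hp1 n).ne'
    simp only [sf]
    field_simp
  have hspos : ∀ n, 0 < sf p α n := fun n =>
    mul_pos (by exact_mod_cast hαpos n) (hc n)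
  -- y = x * exp (-s)
  have hyeq : ∀ n, xf p (fun m => r m + α m) n = xf p r n * Real.exp (-(sf p α n)) := by
    intro n
    have h1 : xf p (fun m => r m + α m) n = (1 - p n) ^ (r n) * (1 - p n) ^ (α n) := by
      simp only [xf]; rw [pow_add]
    have h2 : (1 - p n) ^ (α n) = Real.exp (-(sf p α n)) := by
      have h3 : Real.log ((1 - p n) ^ (α n)) = (α n : ℝ) * Real.log (1 - p n) := Real.log_pow _ _
      have h4 : (1 - p n) ^ (α n) = Real.exp (Real.log ((1 - p n)^(α n))) :=
        (Real.exp_log (pow_pos (hq n) _)).symm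
      rw [h4, h3]; congr 1; simp only [sf, cf]; ring
    rw [h1, h2]; rfl
  have hy0 : Tendsto (xf p (fun m => r m + α m)) atTop (nhds 0) := by
    have h2 : Tendsto (fun n => Real.exp (-(sf p α n))) atTop (nhds 1) := by
      have := Real.continuous_exp.continuousAt.tendsto.comp hs0.neg
      simpa [Function.comp_def] using this
    have := hx0.mul h2
    rw [zero_mul] at this
    exact this.congr fun n => (hyeq n).symm
  -- (1 - exp(-s))/s → 1
  have h1e : Tendsto (fun n => (1 - Real.exp (-(sf p α n))) / sf p α n) atTop (nhds 1) := by
    have hst : Tendsto (sf p α) atTop (nhdsWithin 0 {(0:ℝ)}ᶜ) := by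
      rw [tendsto_nhdsWithin_iff]
      exact ⟨hs0, Eventually.of_forall fun n => (hspos n).ne'⟩
    exact (aux_slope_exp.comp hst).congr fun n => rfl
  -- u → 0, u > 0
  have hxlt1 : ∀ n, xf p r n < 1 := fun n =>
    pow_lt_one₀ (le_of_lt (hq n)) (hq1 n) (hrpos n).ne'
  have hxpos : ∀ n, 0 < xf p r n := fun n => pow_pos (hq n) _
  have hxy : ∀ n, xf p (fun m => r m + α m) n < xf p r n := by
    intro n
    rw [hyeq n]
    nth_rewrite 2 [← mul_one (xf p r n)]
    refine mul_lt_mul_of_pos_left ?_ (hxpos n)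
    rw [Real.exp_lt_one_iff]
    exact neg_neg_iff_pos.mpr (hspos n)
  have hupos : ∀ n, 0 < uf p r α n := fun n =>
    div_pos (by linarith [hxy n]) (by linarith [hxlt1 n])
  have hu0 : Tendsto (uf p r α) atTop (nhds 0) := by
    have hnum : Tendsto (fun n => xf p r n - xf p (fun m => r m + α m) n) atTop (nhds 0) := by
      simpa using hx0.sub hy0
    have hden : Tendsto (fun n => 1 - xf p r n) atTop (nhds 1) := by
      simpa using (tendsto_const_nhds (x := (1:ℝ))).sub hx0
    have := hnum.div hden one_ne_zero
    rw [zero_div] at this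
    exact this
  -- log(1+u)/u → 1
  have hlog1u : Tendsto (fun n => Real.log (1 + uf p r α n) / uf p r α n) atTop (nhds 1) := by
    have hut : Tendsto (uf p r α) atTop (nhdsWithin 0 {(0:ℝ)}ᶜ) := by
      rw [tendsto_nhdsWithin_iff]
      exact ⟨hu0, Eventually.of_forall fun n => (hupos n).ne'⟩
    exact (aux_slope_log1p.comp hut).congr fun n => rfl
  -- L → ∞
  have hL : Tendsto (Lf p) atTop atTop := Real.tendsto_log_atTop.comp hd
  -- f5 : d x / L² → 1
  have hf5 : Tendsto (fun n => df p n * xf p r n / Lf p n ^ 2) atTop (nhds 1) := by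
    have hexp : Tendsto (fun n => Real.exp (-(Ef p r n))) atTop (nhds 1) := by
      have := Real.continuous_exp.continuousAt.tendsto.comp hE.neg
      simpa [Function.comp_def] using this
    refine hexp.congr' ?_
    filter_upwards [hL.eventually (eventually_ge_atTop (1:ℝ)),
      hd.eventually (eventually_gt_atTop (0:ℝ))] with n hLn hdn
    have hL2 : (0:ℝ) < Lf p n ^ 2 := by positivity
    have hdl : 0 < df p n / Lf p n ^ 2 := div_pos hdn hL2
    have hTf : df p n / Lf p n ^ 2 = Real.exp (Tf p n) := (Real.exp_log hdl).symm
    have : df p n * xf p r n / Lf p n ^ 2 = (df p n / Lf p n ^ 2) * xf p r n := by ring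
    rw [this, hTf, hxeq n, ← Real.exp_add]
    congr 1
    simp only [Ef]; ring
  -- p ≤ c
  have hple : ∀ n, p n ≤ cf p n := fun n => aux_le_neg_log (p n) (hp2 n)
  -- eventually p r ≤ L + 2
  have hprL : ∀ᶠ n in atTop, p n * r n ≤ Lf p n + 2 := by
    filter_upwards [hE.eventually (eventually_le_nhds (by norm_num : (0:ℝ) < 1)),
      hL.eventually (eventually_ge_atTop (1:ℝ)),
      hd.eventually (eventually_gt_atTop (0:ℝ))] with n hEn hLn hdn
    have h1 : p n * r n ≤ cf p n * r n :=
      mul_le_mul_of_nonneg_right (hple n) (Nat.cast_nonneg _)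
    have h2 : cf p n * r n = Tf p n + Ef p r n := by simp only [Ef]; ring
    have h3 : Tf p n ≤ Lf p n := by
      have hL2 : (1:ℝ) ≤ Lf p n ^ 2 := by nlinarith
      have : df p n / Lf p n ^ 2 ≤ df p n := by
        rw [div_le_iff₀ (by nlinarith)]; nlinarith [hdn.le]
      exact Real.log_le_log (div_pos hdn (by nlinarith)) this
    linarith
  -- r/n → 0
  have hrn : Tendsto (fun n : ℕ => (r n : ℝ) / n) atTop (nhds 0) := by
    have hub : Tendsto (fun n => (Lf p n + 2) / df p n) atTop (nhds 0) :=
      (aux_log_plus_one_div 2).comp hd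
    refine tendsto_of_tendsto_of_tendsto_of_le_of_le' tendsto_const_nhds hub ?_ ?_
    · exact Eventually.of_forall fun n => by positivity
    · filter_upwards [hprL, hd.eventually (eventually_gt_atTop (0:ℝ)),
        eventually_ge_atTop 1] with n h1 h2 h3
      have hn : (0:ℝ) < n := by exact_mod_cast h3
      rw [div_le_div_iff₀ hn h2]
      have := mul_le_mul_of_nonneg_left h1 hn.le
      simp only [df] at h2 ⊢
      nlinarith
  -- eventually r ≤ n
  have hrlen : ∀ᶠ n in atTop, r n ≤ n := by
    filter_upwards [hrn.eventually (eventually_le_nhds (by norm_num : (0:ℝ) < 1/2)),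
      eventually_ge_atTop 1] with n h1 h2
    have hn : (0:ℝ) < n := by exact_mod_cast h2
    have h5 : (r n : ℝ) ≤ n / 2 := by rw [div_le_iff₀ hn] at h1; linarith
    have h6 : (r n : ℝ) ≤ (n : ℝ) := by linarith
    exact_mod_cast h6
  -- f2 : (n - r)/n → 1
  have hf2 : Tendsto (fun n : ℕ => ((n - r n : ℕ) : ℝ) / n) atTop (nhds 1) := by
    have h := tendsto_const_nhds (x := (1:ℝ)) (f := atTop (α := ℕ)) |>.sub hrn
    rw [sub_zero] at h
    refine h.congr' ?_
    filter_upwards [hrlen, eventually_ge_atTop 1] with n h1 h2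
    have hn : (0:ℝ) < n := by exact_mod_cast h2
    rw [Nat.cast_sub h1, sub_div, div_self hn.ne']
  -- f3 : 1/(1-x) → 1
  have hf3 : Tendsto (fun n => 1 / (1 - xf p r n)) atTop (nhds 1) := by
    have hden : Tendsto (fun n => 1 - xf p r n) atTop (nhds 1) := by
      simpa using (tendsto_const_nhds (x := (1:ℝ))).sub hx0
    have h := (tendsto_const_nhds (x := (1:ℝ))).div hden one_ne_zero
    rwa [one_div_one] at h
  -- f4 : (x-y)/(x p α) → 1
  have hf4 : Tendsto (fun n => (xf p r n - xf p (fun m => r m + α m) n) /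
      (xf p r n * (p n * α n))) atTop (nhds 1) := by
    have h := h1e.mul hcp
    rw [one_mul] at h
    refine h.congr fun n => ?_
    rw [hyeq n]
    have h1 := (hxpos n).ne'
    have h2 := (hp1 n).ne'
    have h3 : ((α n : ℝ)) ≠ 0 := by exact_mod_cast (hαpos n).ne'
    have h4 := (hc n).ne'
    simp only [sf]
    field_simp
  -- eventually 2(r+α) ≤ n
  have hn2ev : ∀ᶠ n in atTop, 2 * (r n + α n) ≤ n := by
    have hub : Tendsto (fun n => (Lf p n + 3) / df p n) atTop (nhds 0) :=
      (aux_log_plus_one_div 3).comp hd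
    filter_upwards [hprL, hα.eventually (eventually_le_nhds (by norm_num : (0:ℝ) < 1)),
      hub.eventually (eventually_le_nhds (by norm_num : (0:ℝ) < 1/2)),
      hd.eventually (eventually_gt_atTop (0:ℝ)), eventually_ge_atTop 1,
      hL.eventually (eventually_ge_atTop (1:ℝ))] with n h1 h2 h3 h4 h5 hLn
    have hpn := hp1 n
    have hL3 : 0 ≤ Lf p n + 3 := by linarith
    have h6 : Lf p n + 3 ≤ df p n / 2 := by
      rw [div_le_iff₀ h4] at h3
      linarith
    have h7 : p n * (2 * ((r n : ℝ) + α n)) ≤ df p n := by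
      have : p n * r n + p n * α n ≤ Lf p n + 3 := by linarith
      nlinarith
    have h8 : (2 * ((r n : ℝ) + α n)) ≤ (n : ℝ) := by
      have hd' : df p n = (n : ℝ) * p n := rfl
      rw [hd'] at h7
      nlinarith
    exact_mod_cast h8
  -- eventually 1 ≤ p r
  have hprge1 : ∀ᶠ n in atTop, 1 ≤ p n * r n := by
    filter_upwards [hcp.eventually (eventually_le_nhds (by norm_num : (1:ℝ) < 2)),
      hcr.eventually (eventually_ge_atTop (2:ℝ))] with n h1 h2
    have hpn := hp1 n
    have hcn := hc n
    have h3 : cf p n ≤ 2 * p n := by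
      rw [div_le_iff₀ hpn] at h1
      linarith
    have hr0 : (0:ℝ) ≤ r n := Nat.cast_nonneg _
    nlinarith
  -- A part
  have hApart : Tendsto (fun n : ℕ =>
      (Real.log (n.choose (r n + α n) : ℝ) - Real.log (n.choose (r n) : ℝ)) /
        ((α n : ℝ) * Lf p n ^ 2)) atTop (nhds 0) := by
    have hiL : Tendsto (fun n => 1 / Lf p n) atTop (nhds 0) := by
      have := hL.inv_tendsto_atTop
      refine this.congr fun n => ?_
      rw [Pi.inv_apply, one_div]
    refine tendsto_of_tendsto_of_tendsto_of_le_of_le' tendsto_const_nhds hiL ?_ ?_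
    · filter_upwards [hn2ev, hL.eventually (eventually_ge_atTop (1:ℝ)),
        eventually_ge_atTop 1] with n h1 h2 h3
      have hrle : r n ≤ n := by omega
      have hcpos : (0:ℝ) < (n.choose (r n) : ℝ) := by
        exact_mod_cast Nat.choose_pos hrle
      have hmono : (n.choose (r n) : ℝ) ≤ (n.choose (r n + α n) : ℝ) := by
        exact_mod_cast aux_choose_lower n (r n) (α n) h1
      have hnum : 0 ≤ Real.log (n.choose (r n + α n) : ℝ) - Real.log (n.choose (r n) : ℝ) := by
        have := Real.log_le_log hcpos hmono
        linarith
      positivity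
    · filter_upwards [hn2ev, hL.eventually (eventually_ge_atTop (1:ℝ)),
        eventually_ge_atTop 1, hprge1, hd.eventually (eventually_gt_atTop (0:ℝ))]
        with n h1 h2 h3 h4 h5
      have hrle : r n ≤ n := by omega
      have hralen : r n + α n ≤ n := by omega
      have hrpos' : (0:ℝ) < (r n : ℝ) := by exact_mod_cast hrpos n
      have hnpos : (0:ℝ) < (n : ℝ) := by exact_mod_cast h3
      have hcpos : (0:ℝ) < (n.choose (r n) : ℝ) := by
        exact_mod_cast Nat.choose_pos hrle
      have hcapos : (0:ℝ) < (n.choose (r n + α n) : ℝ) := by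
        exact_mod_cast Nat.choose_pos hralen
      have hcast : (n.choose (r n + α n) : ℝ) * (r n : ℝ) ^ (α n) ≤
          (n.choose (r n) : ℝ) * (n : ℝ) ^ (α n) := by
        exact_mod_cast aux_choose_upper n (r n) (α n)
      have hnd : (n : ℝ) ≤ df p n * r n := by
        have hd' : df p n = (n : ℝ) * p n := rfl
        rw [hd']
        nlinarith [hp1 n]
      have h1' : (n.choose (r n + α n) : ℝ) ≤ (n.choose (r n) : ℝ) * ((n : ℝ) / r n) ^ (α n) := by
        rw [div_pow, ← mul_div_assoc, le_div_iff₀ (pow_pos hrpos' _)]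
        exact hcast
      have h2' : ((n : ℝ) / r n) ^ (α n) ≤ (df p n) ^ (α n) := by
        refine pow_le_pow_left₀ (by positivity) ?_ _
        rw [div_le_iff₀ hrpos']
        linarith [hnd]
      have h3' : (n.choose (r n + α n) : ℝ) ≤ (n.choose (r n) : ℝ) * (df p n) ^ (α n) :=
        h1'.trans (by nlinarith [pow_nonneg (le_of_lt (div_pos hnpos hrpos')) (α n)])
      have h4' : Real.log (n.choose (r n + α n) : ℝ) ≤
          Real.log (n.choose (r n) : ℝ) + (α n : ℝ) * Lf p n := by
        have := Real.log_le_log hcapos h3'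
        rwa [Real.log_mul hcpos.ne' (by positivity), Real.log_pow] at this
      have hαpos' : (0:ℝ) < (α n : ℝ) := by exact_mod_cast hαpos n
      have hLpos : (0:ℝ) < Lf p n := by linarith
      rw [div_le_div_iff₀ (by positivity) hLpos]
      have hAle : Real.log (n.choose (r n + α n) : ℝ) - Real.log (n.choose (r n) : ℝ) ≤
          (α n : ℝ) * Lf p n := by linarith
      calc (Real.log (n.choose (r n + α n) : ℝ) - Real.log (n.choose (r n) : ℝ)) * Lf p n
          ≤ ((α n : ℝ) * Lf p n) * Lf p n := mul_le_mul_of_nonneg_right hAle hLpos.le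
        _ = 1 * ((α n : ℝ) * Lf p n ^ 2) := by ring
  -- C part
  have hCpart : Tendsto (fun n : ℕ =>
      (-(α n : ℝ) * Real.log (1 - xf p (fun m => r m + α m) n)) / ((α n : ℝ) * Lf p n ^ 2))
      atTop (nhds 0) := by
    have hynum : Tendsto (fun n => -Real.log (1 - xf p (fun m => r m + α m) n))
        atTop (nhds 0) := by
      have h1 : Tendsto (fun n => 1 - xf p (fun m => r m + α m) n) atTop (nhds 1) := by
        simpa using (tendsto_const_nhds (x := (1:ℝ))).sub hy0
      have h2 := ((Real.continuousAt_log one_ne_zero).tendsto.comp h1).neg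
      simpa using h2
    have hL2 : Tendsto (fun n => Lf p n ^ 2) atTop atTop :=
      (hL.atTop_mul_atTop₀ hL).congr fun n => (pow_two _).symm
    have hdiv := hynum.div_atTop hL2
    refine hdiv.congr fun n => ?_
    have hαne : ((α n : ℝ)) ≠ 0 := by exact_mod_cast (hαpos n).ne'
    have h3 : (-(α n : ℝ)) * Real.log (1 - xf p (fun m => r m + α m) n) =
        (α n : ℝ) * (-Real.log (1 - xf p (fun m => r m + α m) n)) := by ring
    rw [h3, mul_div_mul_left _ _ hαne]
  -- B part
  have hBpart : Tendsto (fun n : ℕ =>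
      ((n - r n : ℕ) : ℝ) * Real.log (1 + uf p r α n) / ((α n : ℝ) * Lf p n ^ 2))
      atTop (nhds 1) := by
    have hprod := (((hlog1u.mul hf2).mul hf3).mul hf4).mul hf5
    have hone : (1:ℝ) * 1 * 1 * 1 * 1 = 1 := by norm_num
    rw [hone] at hprod
    refine hprod.congr' ?_
    filter_upwards [hrlen, eventually_ge_atTop 1,
      hL.eventually (eventually_ge_atTop (1:ℝ))] with n h1 h2 h3
    have hnpos : (0:ℝ) < n := by exact_mod_cast h2
    have hupos' := (hupos n).ne'
    have hxpos' := (hxpos n).ne'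
    have h1x : (0:ℝ) < 1 - xf p r n := by linarith [hxlt1 n]
    have hp' := (hp1 n).ne'
    have hα' : ((α n : ℝ)) ≠ 0 := by exact_mod_cast (hαpos n).ne'
    have hL' : Lf p n ≠ 0 := by linarith
    have hU : uf p r α n * (1 - xf p r n) =
        xf p r n - xf p (fun m => r m + α m) n := by
      simp only [uf]
      rw [div_mul_cancel₀ _ h1x.ne']
    rw [← hU]
    simp only [df]
    field_simp
  -- assembly
  have hsum := (hApart.add hBpart).add hCpart
  rw [zero_add, add_zero] at hsum
  refine hsum.congr' ?_
  filter_upwards [hn2ev, eventually_ge_atTop 1] with n h1 h2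
  have hrle : r n ≤ n := by omega
  have hrale : r n + α n ≤ n := by omega
  have hx1 : (0:ℝ) < 1 - (1 - p n) ^ (r n) := by
    have := hxlt1 n; simp only [xf] at this; linarith
  have hy1 : (0:ℝ) < 1 - (1 - p n) ^ (r n + α n) := by
    have h := pow_lt_one₀ (le_of_lt (hq n)) (hq1 n) (Nat.add_pos_right (r n) (hαpos n)).ne'
    linarith
  have hc1 : ((n.choose (r n) : ℝ)) ≠ 0 := by
    exact_mod_cast (Nat.choose_pos hrle).ne'
  have hc2 : ((n.choose (r n + α n) : ℝ)) ≠ 0 := by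
    exact_mod_cast (Nat.choose_pos hrale).ne'
  have hEX1 : EX n (r n) (p n) ≠ 0 :=
    mul_ne_zero hc1 (pow_ne_zero _ hx1.ne')
  have hEX2 : EX n (r n + α n) (p n) ≠ 0 :=
    mul_ne_zero hc2 (pow_ne_zero _ hy1.ne')
  have hlog1 : Real.log (EX n (r n) (p n)) = Real.log (n.choose (r n) : ℝ) +
      ((n - r n : ℕ) : ℝ) * Real.log (1 - (1 - p n) ^ (r n)) := by
    simp only [EX]
    rw [Real.log_mul hc1 (pow_ne_zero _ hx1.ne'), Real.log_pow]
  have hlog2 : Real.log (EX n (r n + α n) (p n)) = Real.log (n.choose (r n + α n) : ℝ) +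
      ((n - (r n + α n) : ℕ) : ℝ) * Real.log (1 - (1 - p n) ^ (r n + α n)) := by
    simp only [EX]
    rw [Real.log_mul hc2 (pow_ne_zero _ hy1.ne'), Real.log_pow]
  have hlogu : Real.log (1 + uf p r α n) =
      Real.log (1 - (1 - p n) ^ (r n + α n)) - Real.log (1 - (1 - p n) ^ (r n)) := by
    have h1pu : 1 + uf p r α n =
        (1 - (1 - p n) ^ (r n + α n)) / (1 - (1 - p n) ^ (r n)) := by
      simp only [uf, xf]
      field_simp
      ring
    rw [h1pu, Real.log_div hy1.ne' hx1.ne']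
  have hcastsub : ((n - (r n + α n) : ℕ) : ℝ) = ((n - r n : ℕ) : ℝ) - (α n : ℝ) := by
    have h3 : n - (r n + α n) = (n - r n) - α n := by omega
    rw [h3, Nat.cast_sub (by omega), Nat.cast_sub hrle]
  have hLrw : Lf p n = Real.log ((n : ℝ) * p n) := rfl
  rw [← add_div, ← add_div, hLrw]
  congr 1
  rw [Real.log_div hEX2 hEX1, hlog1, hlog2, hlogu, hcastsub]
  simp only [xf]
  ring

end main

/-- Lemma 6: if `p → 0`, `d = np → ∞`,
`p (r - log_q(d/ln² d)) → 0` and `p α → 0`, then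
`E(X_{r+α})/E(X_r) = exp((1+o(1)) α ln² d)`. -/
theorem stmt_6 (p : ℕ → ℝ) (hp : ∀ n, 0 < p n ∧ p n < 1)
    (hp0 : Tendsto p atTop (nhds 0))
    (hd : Tendsto (fun n : ℕ => n * p n) atTop atTop)
    (r : ℕ → ℕ) (hrpos : ∀ n, 0 < r n)
    (hr : Tendsto (fun n : ℕ => p n * ((r n : ℝ) -
        Real.log ((n * p n) / (Real.log (n * p n)) ^ 2) / Real.log (1 / (1 - p n))))
      atTop (nhds 0))
    (α : ℕ → ℕ) (hαpos : ∀ n, 0 < α n)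
    (hα : Tendsto (fun n : ℕ => p n * (α n : ℝ)) atTop (nhds 0)) :
    Tendsto (fun n : ℕ =>
        Real.log (EX n (r n + α n) (p n) / EX n (r n) (p n))
          / ((α n : ℝ) * (Real.log (n * p n)) ^ 2)) atTop (nhds 1) :=
  main_block p r α hp hp0 hd hrpos hr hαpos hα
end

section
/- For every integer n ≥ 1, every p ∈ (0,1), and all real numbers b and t with b < n and t ≥ 0, the domination number D of a random graph G ~ G(n,p) satisfies P(D ≤ b) · P(D ≥ b + t) ≤ exp( −t² / (4(n−b)) ). -/
open MeasureTheory Filter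
open scoped Classical

namespace Tal



/-- coordinate weight -/
def qf (p : ℝ) : Bool → ℝ := fun b => if b then p else 1 - p

noncomputable def Wt (p : ℝ) {ι : Type*} [Fintype ι] (x : ι → Bool) : ℝ := ∏ i, qf p (x i)

noncomputable def Pr (p : ℝ) {ι : Type*} [Fintype ι] (A : Finset (ι → Bool)) : ℝ :=
  ∑ x ∈ A, Wt p x

def chi {ι : Type*} (x y : ι → Bool) : ι → ℝ := fun i => if x i = y i then 0 else 1

def Qn {ι : Type*} [Fintype ι] (v : ι → ℝ) : ℝ := ∑ i, v i ^ 2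

noncomputable def hull {ι : Type*} (x : ι → Bool) (A : Finset (ι → Bool)) : Set (ι → ℝ) :=
  convexHull ℝ (chi x '' ↑A)

noncomputable def d2 {ι : Type*} [Fintype ι] (x : ι → Bool) (A : Finset (ι → Bool)) : ℝ :=
  sInf (Qn '' hull x A)

section Basic
variable {ι : Type*} [Fintype ι] {x : ι → Bool} {A : Finset (ι → Bool)}

lemma qf_pos {p : ℝ} (h0 : 0 < p) (h1 : p < 1) (b : Bool) : 0 < qf p b := by
  cases b <;> simp [qf] <;> linarith

lemma qf_sum {p : ℝ} : qf p true + qf p false = 1 := by simp [qf]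

lemma Wt_pos {p : ℝ} (h0 : 0 < p) (h1 : p < 1) (x : ι → Bool) : 0 < Wt p x :=
  Finset.prod_pos fun i _ => qf_pos h0 h1 _

lemma Pr_nonneg {p : ℝ} (h0 : 0 < p) (h1 : p < 1) (A : Finset (ι → Bool)) : 0 ≤ Pr p A :=
  Finset.sum_nonneg fun x _ => (Wt_pos h0 h1 x).le

lemma Pr_pos {p : ℝ} (h0 : 0 < p) (h1 : p < 1) (hA : A.Nonempty) : 0 < Pr p A :=
  Finset.sum_pos (fun x _ => Wt_pos h0 h1 x) hA

lemma Pr_mono {p : ℝ} (h0 : 0 < p) (h1 : p < 1) {A B : Finset (ι → Bool)} (h : A ⊆ B) :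
    Pr p A ≤ Pr p B :=
  Finset.sum_le_sum_of_subset_of_nonneg h fun x _ _ => (Wt_pos h0 h1 x).le

lemma Qn_nonneg (v : ι → ℝ) : 0 ≤ Qn v := Finset.sum_nonneg fun i _ => sq_nonneg _

lemma bddBelow_Qn_hull : BddBelow (Qn '' hull x A) := by
  refine ⟨0, fun r hr => ?_⟩
  rcases hr with ⟨v, _, rfl⟩
  exact Qn_nonneg v

lemma d2_nonneg : 0 ≤ d2 x A := by
  apply Real.sInf_nonneg
  rintro r ⟨v, _, rfl⟩
  exact Qn_nonneg v

lemma d2_le {v : ι → ℝ} (hv : v ∈ hull x A) : d2 x A ≤ Qn v :=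
  csInf_le bddBelow_Qn_hull ⟨v, hv, rfl⟩

lemma continuous_Qn : Continuous (Qn (ι := ι)) := by
  apply continuous_finset_sum
  intro i _
  exact (continuous_apply i).pow 2

lemma hull_nonempty (hA : A.Nonempty) : (hull x A).Nonempty := by
  rcases hA with ⟨y, hy⟩
  exact ⟨chi x y, subset_convexHull ℝ _ (Set.mem_image_of_mem _ hy)⟩

lemma exists_min (hA : A.Nonempty) : ∃ v ∈ hull x A, Qn v = d2 x A := by
  have hc : IsCompact (hull x A) := (A.finite_toSet.image (chi x)).isCompact_convexHull ℝ
  obtain ⟨v, hv, hmin⟩ := hc.exists_isMinOn (hull_nonempty hA) continuous_Qn.continuousOn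
  refine ⟨v, hv, le_antisymm ?_ (d2_le hv)⟩
  apply le_csInf ((hull_nonempty hA).image Qn)
  rintro r ⟨w, hw, rfl⟩
  exact hmin hw

lemma d2_eq_zero (hx : x ∈ A) : d2 x A = 0 := by
  have hchi : chi x x = fun _ : ι => (0:ℝ) := by funext i; simp [chi]
  have h0 : (fun _ : ι => (0:ℝ)) ∈ hull x A := by
    rw [← hchi]
    exact subset_convexHull ℝ _ (Set.mem_image_of_mem _ (Finset.mem_coe.2 hx))
  have h1 := d2_le h0
  have h2 : Qn (fun _ : ι => (0:ℝ)) = 0 := by simp [Qn]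
  rw [h2] at h1
  linarith [d2_nonneg (x := x) (A := A)]


end Basic


lemma exp_taylor_le {x : ℝ} (hx : |x| ≤ 1) :
    Real.exp x ≤ 1 + x + x^2/2 + x^3/6 + |x|^4 * (5/96) := by
  have h := Real.exp_bound hx (n := 4) (by norm_num)
  have hs : ∑ m ∈ Finset.range 4, x ^ m / m.factorial = 1 + x + x^2/2 + x^3/6 := by
    norm_num [Finset.sum_range_succ, Nat.factorial]
  rw [hs] at h
  have h2 := abs_le.1 h
  norm_num [Nat.factorial] at h2
  linarith [h2.2]

lemma key_ineq {u : ℝ} (h0 : 0 ≤ u) (h1 : u ≤ 1/2) :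
    Real.exp (u - u^2) + Real.exp (-u) ≤ 2 := by
  set v := u - u^2 with hv
  have hv0 : 0 ≤ v := by nlinarith
  have hv1 : v ≤ 1/4 := by nlinarith
  have e1 := exp_taylor_le (x := v) (by rw [abs_of_nonneg hv0]; linarith)
  have e2 := exp_taylor_le (x := -u) (by rw [abs_of_nonpos (by linarith)]; linarith)
  rw [abs_of_nonneg hv0] at e1
  rw [abs_of_nonpos (by linarith : -u ≤ 0)] at e2
  have hfin : (1 + v + v^2/2 + v^3/6 + v^4 * (5/96)) +
      (1 + (-u) + (-u)^2/2 + (-u)^3/6 + (- -u)^4 * (5/96)) ≤ 2 := by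
    rw [hv]
    nlinarith [pow_nonneg h0 3, pow_nonneg h0 4, pow_nonneg h0 5, pow_nonneg h0 6,
      pow_nonneg h0 7, pow_nonneg h0 8, sq_nonneg u, sq_nonneg (1-u), mul_nonneg h0 (sub_nonneg.2 h1)]
  linarith

lemma exp_quarter_lt : Real.exp (1/4 : ℝ) ≤ 1.3 := by
  have h4 : Real.exp (1/4 : ℝ) ^ (4:ℕ) = Real.exp 1 := by
    rw [← Real.exp_nat_mul]; norm_num
  have he : Real.exp 1 < 2.7182818286 := Real.exp_one_lt_d9
  have h13 : (1.3:ℝ)^(4:ℕ) = 2.8561 := by norm_num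
  have : Real.exp (1/4:ℝ) ^ (4:ℕ) ≤ (1.3:ℝ)^(4:ℕ) := by rw [h4, h13]; linarith
  exact le_of_pow_le_pow_left₀ (by norm_num) (by norm_num) this

lemma exp_half_gt : (10:ℝ)/7 < Real.exp (1/2 : ℝ) := by
  have h2 : Real.exp (1/2 : ℝ) ^ (2:ℕ) = Real.exp 1 := by
    rw [← Real.exp_nat_mul]; norm_num
  have he : (2.7182818283:ℝ) < Real.exp 1 := Real.exp_one_gt_d9
  have : ((10:ℝ)/7)^(2:ℕ) < Real.exp (1/2:ℝ)^(2:ℕ) := by rw [h2]; nlinarith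
  have := lt_of_pow_lt_pow_left₀ 2 (Real.exp_pos _).le this
  exact this

/-- the scalar optimization: for `r ∈ (0,1]` there is `l ∈ [0,1]` with
`exp((1-l)²/4) ≤ (2-r) r^l`. -/
lemma scalar {r : ℝ} (h0 : 0 < r) (h1 : r ≤ 1) :
    ∃ l : ℝ, 0 ≤ l ∧ l ≤ 1 ∧ Real.exp ((1-l)^2/4) ≤ (2 - r) * r ^ (l:ℝ) := by
  rcases le_or_gt r (7/10) with hr | hr
  · refine ⟨0, le_refl _, zero_le_one, ?_⟩
    rw [Real.rpow_zero]
    have := exp_quarter_lt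
    norm_num
    linarith
  · refine ⟨1 + 2 * Real.log r, ?_, ?_, ?_⟩
    · -- 0 ≤ 1 + 2 log r  ⟸  log r ≥ -1/2
      have hlog : -(1/2 : ℝ) ≤ Real.log r := by
        rw [Real.le_log_iff_exp_le h0]
        have h1 : Real.exp (-(1/2):ℝ) = (Real.exp (1/2:ℝ))⁻¹ := by
          rw [← Real.exp_neg]
        rw [h1]
        have := exp_half_gt
        have hpos : (0:ℝ) < Real.exp (1/2:ℝ) := Real.exp_pos _
        have : (Real.exp (1/2:ℝ))⁻¹ ≤ 7/10 := by
          rw [inv_le_comm₀ hpos (by norm_num)]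
          linarith
        linarith
      linarith
    · have : Real.log r ≤ 0 := Real.log_nonpos h0.le h1
      linarith
    · set u : ℝ := - Real.log r with hu
      have hu0 : 0 ≤ u := by
        have : Real.log r ≤ 0 := Real.log_nonpos h0.le h1
        simp [hu]; linarith
      have hu12 : u ≤ 1/2 := by
        have hlog : -(1/2 : ℝ) ≤ Real.log r := by
          rw [Real.le_log_iff_exp_le h0]
          have h1' : Real.exp (-(1/2):ℝ) = (Real.exp (1/2:ℝ))⁻¹ := by
            rw [← Real.exp_neg]
          rw [h1']
          have := exp_half_gt
          have hpos : (0:ℝ) < Real.exp (1/2:ℝ) := Real.exp_pos _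
          have : (Real.exp (1/2:ℝ))⁻¹ ≤ 7/10 := by
            rw [inv_le_comm₀ hpos (by norm_num)]
            linarith
          linarith
        simp [hu]; linarith
      have hr_exp : r = Real.exp (-u) := by
        simp [hu, Real.exp_log h0]
      have hrl : r ^ ((1 + 2*Real.log r) : ℝ) = Real.exp (-u + 2*u^2) := by
        rw [Real.rpow_def_of_pos h0, ← Real.exp_log h0]
        simp only [Real.log_exp]
        congr 1
        have : Real.log r = -u := by simp [hu]
        rw [this]; ring
      have hsq : (1 - (1 + 2*Real.log r))^2/4 = u^2 := by
        have : Real.log r = -u := by simp [hu]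
        rw [this]; ring
      rw [hsq, hrl, hr_exp]
      have key := key_ineq hu0 hu12
      -- exp(u²) ≤ (2 - exp(-u)) * exp(-u+2u²) ⟺ exp(u-u²) ≤ 2 - exp(-u)
      have hpos2 : (0:ℝ) < Real.exp (-u + 2*u^2) := Real.exp_pos _
      have hgoal : Real.exp (u^2) = Real.exp (u - u^2) * Real.exp (-u + 2*u^2) := by
        rw [← Real.exp_add]; ring_nf
      rw [hgoal]
      apply mul_le_mul_of_nonneg_right _ hpos2.le
      linarith

/-- Finite-sum Hölder with weights, two exponents. -/
lemma holder_sum {α : Type*} (s : Finset α) (h f g : α → ℝ)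
    (hh : ∀ i ∈ s, 0 ≤ h i) (hf : ∀ i ∈ s, 0 ≤ f i) (hg : ∀ i ∈ s, 0 ≤ g i)
    {l : ℝ} (hl0 : 0 ≤ l) (hl1 : l ≤ 1)
    (hF : 0 < ∑ i ∈ s, h i * f i) (hG : 0 < ∑ i ∈ s, h i * g i) :
    ∑ i ∈ s, h i * (f i ^ (l:ℝ) * g i ^ ((1-l):ℝ)) ≤
      (∑ i ∈ s, h i * f i) ^ (l:ℝ) * (∑ i ∈ s, h i * g i) ^ ((1-l):ℝ) := by
  set F := ∑ i ∈ s, h i * f i with hFdef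
  set G := ∑ i ∈ s, h i * g i with hGdef
  set C := F ^ (l:ℝ) * G ^ ((1-l):ℝ) with hC
  have hCpos : 0 < C := mul_pos (Real.rpow_pos_of_pos hF _) (Real.rpow_pos_of_pos hG _)
  have key : ∀ i ∈ s, f i ^ (l:ℝ) * g i ^ ((1-l):ℝ) ≤
      C * (l * (f i / F) + (1-l) * (g i / G)) := by
    intro i hi
    have hfi := hf i hi
    have hgi := hg i hi
    have gm := Real.geom_mean_le_arith_mean2_weighted hl0 (by linarith : (0:ℝ) ≤ 1 - l)
      (div_nonneg hfi hF.le) (div_nonneg hgi hG.le) (by ring)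
    have heq : f i ^ (l:ℝ) * g i ^ ((1-l):ℝ) = C * ((f i / F) ^ (l:ℝ) * (g i / G) ^ ((1-l):ℝ)) := by
      rw [hC, Real.div_rpow hfi hF.le, Real.div_rpow hgi hG.le]
      field_simp
    rw [heq]
    exact mul_le_mul_of_nonneg_left gm hCpos.le
  calc ∑ i ∈ s, h i * (f i ^ (l:ℝ) * g i ^ ((1-l):ℝ))
      ≤ ∑ i ∈ s, h i * (C * (l * (f i / F) + (1-l) * (g i / G))) := by
        apply Finset.sum_le_sum
        intro i hi
        exact mul_le_mul_of_nonneg_left (key i hi) (hh i hi)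
    _ = C * ((l / F) * F + ((1-l) / G) * G) := by
        have hterm : ∀ i ∈ s, h i * (C * (l * (f i / F) + (1-l) * (g i / G))) =
            C * ((l/F) * (h i * f i) + ((1-l)/G) * (h i * g i)) := by
          intro i _; ring
        rw [Finset.sum_congr rfl hterm, ← Finset.mul_sum, Finset.sum_add_distrib,
          ← Finset.mul_sum, ← Finset.mul_sum, ← hFdef, ← hGdef]
    _ = C := by field_simp; ring
  

section Ind
variable {m : ℕ}


/-- section of A at first coordinate ω -/
noncomputable def sec (ω : Bool) (A : Finset (Fin (m+1) → Bool)) : Finset (Fin m → Bool) :=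
  (A.filter (fun y => y 0 = ω)).image Fin.tail

noncomputable def proj (A : Finset (Fin (m+1) → Bool)) : Finset (Fin m → Bool) :=
  A.image Fin.tail

lemma mem_sec {ω : Bool} {A : Finset (Fin (m+1) → Bool)} {z : Fin m → Bool} :
    z ∈ sec ω A ↔ Fin.cons ω z ∈ A := by
  constructor
  · rintro h
    obtain ⟨y, hy, rfl⟩ := Finset.mem_image.1 h
    obtain ⟨hyA, hy0⟩ := Finset.mem_filter.1 hy
    rwa [← hy0, Fin.cons_self_tail]
  · intro h
    apply Finset.mem_image.2
    refine ⟨Fin.cons ω z, Finset.mem_filter.2 ⟨h, by simp⟩, by simp [Fin.tail_cons]⟩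

lemma sec_subset_proj {ω : Bool} {A : Finset (Fin (m+1) → Bool)} : sec ω A ⊆ proj A :=
  Finset.image_subset_image (Finset.filter_subset _ _)

lemma proj_nonempty {A : Finset (Fin (m+1) → Bool)} (hA : A.Nonempty) : (proj A).Nonempty :=
  hA.image _

lemma Wt_head_tail {p : ℝ} (y : Fin (m+1) → Bool) :
    Wt p y = qf p (y 0) * Wt p (Fin.tail y) := by
  rw [Wt, Fin.prod_univ_succ]
  rfl

lemma Wt_cons {p : ℝ} (ω : Bool) (z : Fin m → Bool) :
    Wt p (Fin.cons ω z) = qf p ω * Wt p z := by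
  rw [Wt_head_tail]
  simp [Fin.tail_cons]

lemma sum_filter_eq_sec {p : ℝ} (ω : Bool) (A : Finset (Fin (m+1) → Bool)) :
    ∑ y ∈ A.filter (fun y => y 0 = ω), Wt p y = qf p ω * Pr p (sec ω A) := by
  rw [sec, Pr, Finset.sum_image (by
    intro y1 h1 y2 h2 htail
    have e1 : y1 0 = ω := (Finset.mem_filter.1 h1).2
    have e2 : y2 0 = ω := (Finset.mem_filter.1 h2).2
    rw [← Fin.cons_self_tail y1, ← Fin.cons_self_tail y2, htail, e1, e2])]
  rw [Finset.mul_sum]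
  apply Finset.sum_congr rfl
  intro y hy
  rw [Wt_head_tail y, (Finset.mem_filter.1 hy).2]

lemma Pr_split {p : ℝ} (A : Finset (Fin (m+1) → Bool)) :
    Pr p A = qf p true * Pr p (sec true A) + qf p false * Pr p (sec false A) := by
  rw [Pr, ← Finset.sum_filter_add_sum_filter_not A (fun y => y 0 = true)]
  have h1 := sum_filter_eq_sec (p := p) true A
  have h2 := sum_filter_eq_sec (p := p) false A
  rw [h1, ← h2]
  congr 1
  apply Finset.sum_congr _ (fun _ _ => rfl)
  apply Finset.filter_congr
  intro y _
  simp

/-- linear map prepending a zero -/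
noncomputable def consL : (Fin m → ℝ) →ₗ[ℝ] (Fin (m+1) → ℝ) where
  toFun v := Fin.cons 0 v
  map_add' u v := by
    funext i
    refine Fin.cases ?_ ?_ i <;> simp
  map_smul' c v := by
    funext i
    refine Fin.cases ?_ ?_ i <;> simp

/-- linear map taking the tail -/
noncomputable def tailL : (Fin (m+1) → ℝ) →ₗ[ℝ] (Fin m → ℝ) where
  toFun := Fin.tail
  map_add' u v := rfl
  map_smul' c v := rfl

lemma chi_cons (ω σ : Bool) (z y : Fin m → Bool) :
    chi (Fin.cons ω z) (Fin.cons σ y) =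
      Fin.cons (if ω = σ then 0 else 1) (chi z y) := by
  funext i
  refine Fin.cases ?_ ?_ i
  · simp [chi]
  · intro j
    simp [chi]

lemma tail_chi (ω : Bool) (z : Fin m → Bool) (y : Fin (m+1) → Bool) :
    Fin.tail (chi (Fin.cons ω z) y) = chi z (Fin.tail y) := by
  funext i
  simp [chi, Fin.tail, Fin.cons_succ]
  congr

lemma lift_sec {ω : Bool} {z : Fin m → Bool} {A : Finset (Fin (m+1) → Bool)}
    {v : Fin m → ℝ} (hv : v ∈ hull z (sec ω A)) :
    Fin.cons (0:ℝ) v ∈ hull (Fin.cons ω z) A := by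
  have himg : Fin.cons (0:ℝ) v ∈ consL '' (hull z (sec ω A)) := ⟨v, hv, rfl⟩
  rw [hull, LinearMap.image_convexHull] at himg
  refine convexHull_min ?_ (convex_convexHull ℝ _) himg
  rintro w ⟨u, ⟨z', hz', rfl⟩, rfl⟩
  apply subset_convexHull ℝ _
  refine ⟨Fin.cons ω z', Finset.mem_coe.2 (mem_sec.1 hz'), ?_⟩
  rw [chi_cons]
  simp [consL]

lemma lift_proj {ω : Bool} {z : Fin m → Bool} {A : Finset (Fin (m+1) → Bool)} :
    hull z (proj A) ⊆
      Fin.tail '' (hull (Fin.cons ω z) A ∩ {w | 0 ≤ w 0 ∧ w 0 ≤ 1}) := by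
  have hconv : Convex ℝ (Fin.tail '' (hull (Fin.cons ω z) A ∩ {w : Fin (m+1) → ℝ | 0 ≤ w 0 ∧ w 0 ≤ 1})) := by
    have h1 : Convex ℝ {w : Fin (m+1) → ℝ | 0 ≤ w 0 ∧ w 0 ≤ 1} := by
      have hle : Convex ℝ {w : Fin (m+1) → ℝ | w 0 ≤ 1} :=
        convex_halfSpace_le (LinearMap.isLinear (LinearMap.proj 0)) 1
      have hge : Convex ℝ {w : Fin (m+1) → ℝ | 0 ≤ w 0} :=
        convex_halfSpace_ge (LinearMap.isLinear (LinearMap.proj 0)) 0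
      exact fun x hx y hy a b ha hb hab => ⟨hge hx.1 hy.1 ha hb hab, hle hx.2 hy.2 ha hb hab⟩
    exact ((convex_convexHull ℝ _).inter h1).linear_image tailL
  apply convexHull_min _ hconv
  rintro w ⟨y, hy, rfl⟩
  rw [Finset.mem_coe, proj, Finset.mem_image] at hy
  obtain ⟨y', hy', rfl⟩ := hy
  refine ⟨chi (Fin.cons ω z) y', ⟨subset_convexHull ℝ _ ⟨y', Finset.mem_coe.2 hy', rfl⟩, ?_⟩, ?_⟩
  · constructor <;> (show _ ≤ _; rw [chi]; simp only [Fin.cons_zero]) <;> split <;> norm_num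
  · exact tail_chi ω z y'


end Ind
section Ind2
variable {m : ℕ}

lemma d2_cons_le {ω : Bool} {z : Fin m → Bool} {A : Finset (Fin (m+1) → Bool)}
    (hA : A.Nonempty) (hsec : (sec ω A).Nonempty) {l : ℝ} (hl0 : 0 ≤ l) (hl1 : l ≤ 1) :
    d2 (Fin.cons ω z) A ≤ l * d2 z (sec ω A) + (1-l) * d2 z (proj A) + (1-l)^2 := by
  obtain ⟨v1, hv1, hQ1⟩ := exists_min (x := z) hsec
  obtain ⟨v2, hv2, hQ2⟩ := exists_min (x := z) (proj_nonempty hA)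
  obtain ⟨w, ⟨hwH, hw0, hw1⟩, hwt⟩ := lift_proj (ω := ω) (z := z) hv2
  set u : Fin (m+1) → ℝ := l • (Fin.cons (0:ℝ) v1 : Fin (m+1) → ℝ) + (1-l) • w with hu
  have hmem : u ∈ hull (Fin.cons ω z) A :=
    (convex_convexHull ℝ _) (lift_sec hv1) hwH hl0 (by linarith) (by ring)
  refine le_trans (d2_le hmem) ?_
  have hQu : Qn u = (u 0)^2 + ∑ i : Fin m, (u i.succ)^2 := by
    rw [Qn, Fin.sum_univ_succ]
  have hu0 : u 0 = (1-l) * w 0 := by simp [hu]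
  have husucc : ∀ i : Fin m, u i.succ = l * v1 i + (1-l) * v2 i := by
    intro i
    have hwi : w i.succ = v2 i := by rw [← hwt]; rfl
    simp [hu, Fin.cons_succ, hwi]
  have hsum : ∑ i : Fin m, (u i.succ)^2 ≤ l * Qn v1 + (1-l) * Qn v2 := by
    rw [Qn, Qn, Finset.mul_sum, Finset.mul_sum, ← Finset.sum_add_distrib]
    apply Finset.sum_le_sum
    intro i _
    rw [husucc i]
    nlinarith [mul_nonneg (mul_nonneg hl0 (by linarith : (0:ℝ) ≤ 1-l)) (sq_nonneg (v1 i - v2 i))]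
  have h00 : (u 0)^2 ≤ (1-l)^2 := by
    rw [hu0]
    have h1l : 0 ≤ 1 - l := by linarith
    nlinarith [mul_nonneg (sq_nonneg (1-l)) (by nlinarith : (0:ℝ) ≤ 1 - w 0^2)]
  rw [hQu, ← hQ1, ← hQ2]
  linarith

lemma d2_cons_le' {ω : Bool} {z : Fin m → Bool} {A : Finset (Fin (m+1) → Bool)}
    (hA : A.Nonempty) :
    d2 (Fin.cons ω z) A ≤ d2 z (proj A) + 1 := by
  obtain ⟨v2, hv2, hQ2⟩ := exists_min (x := z) (proj_nonempty hA)
  obtain ⟨w, ⟨hwH, hw0, hw1⟩, hwt⟩ := lift_proj (ω := ω) (z := z) hv2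
  refine le_trans (d2_le hwH) ?_
  have hQw : Qn w = (w 0)^2 + ∑ i : Fin m, (w i.succ)^2 := by
    rw [Qn, Fin.sum_univ_succ]
  have htail : ∑ i : Fin m, (w i.succ)^2 = Qn v2 := by
    rw [Qn]
    apply Finset.sum_congr rfl
    intro i _
    rw [← hwt]; rfl
  rw [hQw, htail, hQ2]
  nlinarith

lemma sum_cons_split (H : (Fin (m+1) → Bool) → ℝ) :
    ∑ y : Fin (m+1) → Bool, H y = ∑ ω : Bool, ∑ z : Fin m → Bool, H (Fin.cons ω z) := by
  calc ∑ y : Fin (m+1) → Bool, H y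
      = ∑ pr : Bool × (Fin m → Bool), H (Fin.cons pr.1 pr.2) :=
        (Fintype.sum_equiv (Fin.consEquiv fun _ => Bool) _ H (fun pr => rfl)).symm
    _ = ∑ ω : Bool, ∑ z : Fin m → Bool, H (Fin.cons ω z) := Fintype.sum_prod_type _

theorem talagrand (p : ℝ) (h0 : 0 < p) (h1 : p < 1) :
    ∀ m : ℕ, ∀ A : Finset (Fin m → Bool), A.Nonempty →
      (∑ x : Fin m → Bool, Wt p x * Real.exp (d2 x A / 4)) ≤ 1 / Pr p A := by
  intro m
  induction m with
  | zero =>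
    intro A hA
    have hsub : ∀ x : Fin 0 → Bool, x ∈ A := by
      intro x
      obtain ⟨y, hy⟩ := hA
      rwa [Subsingleton.elim x y]
    have huniv : A = Finset.univ := Finset.eq_univ_iff_forall.2 hsub
    have hcard : Fintype.card (Fin 0 → Bool) = 1 := by simp
    have hW : ∀ x : Fin 0 → Bool, Wt p x = 1 := fun x => by simp [Wt]
    have hPr : Pr p A = 1 := by
      rw [huniv, Pr]
      rw [Finset.sum_congr rfl (fun x _ => hW x)]
      simp [hcard]
    rw [hPr]
    have : ∀ x : Fin 0 → Bool, Wt p x * Real.exp (d2 x A / 4) = 1 := by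
      intro x
      rw [d2_eq_zero (hsub x), hW x]
      simp
    rw [Finset.sum_congr rfl (fun x _ => this x)]
    simp [hcard]
  | succ m IH =>
    intro A hA
    have hAb : (proj A).Nonempty := proj_nonempty hA
    have hPb : 0 < Pr p (proj A) := Pr_pos h0 h1 hAb
    have hPA : 0 < Pr p A := Pr_pos h0 h1 hA
    have hIHb := IH (proj A) hAb
    have hS : ∀ ω : Bool, (∑ z : Fin m → Bool, Wt p z * Real.exp (d2 (Fin.cons ω z) A / 4))
        ≤ (2 - Pr p (sec ω A) / Pr p (proj A)) / Pr p (proj A) := by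
      intro ω
      rcases (sec ω A).eq_empty_or_nonempty with hempty | hsec
      · have hPsec : Pr p (sec ω A) = 0 := by rw [hempty]; simp [Pr]
        have step1 : (∑ z : Fin m → Bool, Wt p z * Real.exp (d2 (Fin.cons ω z) A / 4))
            ≤ Real.exp (1/4 : ℝ) * ∑ z : Fin m → Bool, Wt p z * Real.exp (d2 z (proj A) / 4) := by
          rw [Finset.mul_sum]
          apply Finset.sum_le_sum
          intro z _
          have hd := d2_cons_le' (ω := ω) (z := z) hA
          have hexp : Real.exp (d2 (Fin.cons ω z) A / 4) ≤
              Real.exp (1/4 : ℝ) * Real.exp (d2 z (proj A) / 4) := by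
            rw [← Real.exp_add]
            apply Real.exp_le_exp.2
            linarith
          calc Wt p z * Real.exp (d2 (Fin.cons ω z) A / 4)
              ≤ Wt p z * (Real.exp (1/4:ℝ) * Real.exp (d2 z (proj A) / 4)) :=
                mul_le_mul_of_nonneg_left hexp (Wt_pos h0 h1 z).le
            _ = Real.exp (1/4:ℝ) * (Wt p z * Real.exp (d2 z (proj A) / 4)) := by ring
        rw [hPsec]
        have he2 : Real.exp (1/4:ℝ) ≤ 2 := le_trans exp_quarter_lt (by norm_num)
        have hsumpos : 0 ≤ ∑ z : Fin m → Bool, Wt p z * Real.exp (d2 z (proj A) / 4) :=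
          Finset.sum_nonneg fun z _ => mul_nonneg (Wt_pos h0 h1 z).le (Real.exp_pos _).le
        calc (∑ z : Fin m → Bool, Wt p z * Real.exp (d2 (Fin.cons ω z) A / 4))
            ≤ Real.exp (1/4:ℝ) * ∑ z : Fin m → Bool, Wt p z * Real.exp (d2 z (proj A) / 4) := step1
          _ ≤ 2 * (1 / Pr p (proj A)) := by
              apply mul_le_mul he2 hIHb hsumpos (by norm_num)
          _ = (2 - 0 / Pr p (proj A)) / Pr p (proj A) := by
              rw [zero_div]; ring
      · have hPsec : 0 < Pr p (sec ω A) := Pr_pos h0 h1 hsec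
        have hrle : Pr p (sec ω A) ≤ Pr p (proj A) := Pr_mono h0 h1 sec_subset_proj
        have hr0 : 0 < Pr p (sec ω A) / Pr p (proj A) := div_pos hPsec hPb
        have hr1 : Pr p (sec ω A) / Pr p (proj A) ≤ 1 := (div_le_one hPb).2 hrle
        obtain ⟨l, hl0, hl1, hsc⟩ := scalar hr0 hr1
        set r := Pr p (sec ω A) / Pr p (proj A) with hrdef
        have hIHs := IH (sec ω A) hsec
        set K := Real.exp ((1-l)^2/4) with hK
        have hpt : ∀ z : Fin m → Bool, Wt p z * Real.exp (d2 (Fin.cons ω z) A / 4) ≤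
            K * (Wt p z * (Real.exp (d2 z (sec ω A)/4) ^ (l:ℝ) *
              Real.exp (d2 z (proj A)/4) ^ ((1-l):ℝ))) := by
          intro z
          have hd := d2_cons_le (ω := ω) (z := z) hA hsec hl0 hl1
          have hexp : Real.exp (d2 (Fin.cons ω z) A / 4) ≤
              K * (Real.exp (d2 z (sec ω A)/4) ^ (l:ℝ) *
                Real.exp (d2 z (proj A)/4) ^ ((1-l):ℝ)) := by
            rw [hK, ← Real.exp_mul, ← Real.exp_mul, ← Real.exp_add, ← Real.exp_add]
            apply Real.exp_le_exp.2
            have : d2 (Fin.cons ω z) A / 4 ≤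
                (l * d2 z (sec ω A) + (1-l) * d2 z (proj A) + (1-l)^2)/4 := by linarith
            calc d2 (Fin.cons ω z) A / 4
                ≤ (l * d2 z (sec ω A) + (1-l) * d2 z (proj A) + (1-l)^2)/4 := this
              _ = (1-l)^2/4 + (d2 z (sec ω A)/4 * l + d2 z (proj A)/4 * (1-l)) := by ring
          calc Wt p z * Real.exp (d2 (Fin.cons ω z) A / 4)
              ≤ Wt p z * (K * (Real.exp (d2 z (sec ω A)/4) ^ (l:ℝ) *
                Real.exp (d2 z (proj A)/4) ^ ((1-l):ℝ))) :=
                mul_le_mul_of_nonneg_left hexp (Wt_pos h0 h1 z).le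
            _ = K * (Wt p z * (Real.exp (d2 z (sec ω A)/4) ^ (l:ℝ) *
                Real.exp (d2 z (proj A)/4) ^ ((1-l):ℝ))) := by ring
        have hFpos : 0 < ∑ z : Fin m → Bool, Wt p z * Real.exp (d2 z (sec ω A)/4) :=
          Finset.sum_pos (fun z _ => mul_pos (Wt_pos h0 h1 z) (Real.exp_pos _)) Finset.univ_nonempty
        have hGpos : 0 < ∑ z : Fin m → Bool, Wt p z * Real.exp (d2 z (proj A)/4) :=
          Finset.sum_pos (fun z _ => mul_pos (Wt_pos h0 h1 z) (Real.exp_pos _)) Finset.univ_nonempty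
        have hH := holder_sum Finset.univ (Wt p)
          (fun z => Real.exp (d2 z (sec ω A)/4)) (fun z => Real.exp (d2 z (proj A)/4))
          (fun z _ => (Wt_pos h0 h1 z).le) (fun z _ => (Real.exp_pos _).le)
          (fun z _ => (Real.exp_pos _).le) hl0 hl1 hFpos hGpos
        set F := ∑ z : Fin m → Bool, Wt p z * Real.exp (d2 z (sec ω A)/4) with hFdef
        set G := ∑ z : Fin m → Bool, Wt p z * Real.exp (d2 z (proj A)/4) with hGdef
        have step1 : (∑ z : Fin m → Bool, Wt p z * Real.exp (d2 (Fin.cons ω z) A / 4))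
            ≤ K * (F ^ (l:ℝ) * G ^ ((1-l):ℝ)) := by
          calc (∑ z : Fin m → Bool, Wt p z * Real.exp (d2 (Fin.cons ω z) A / 4))
              ≤ ∑ z : Fin m → Bool, K * (Wt p z * (Real.exp (d2 z (sec ω A)/4) ^ (l:ℝ) *
                Real.exp (d2 z (proj A)/4) ^ ((1-l):ℝ))) := Finset.sum_le_sum fun z _ => hpt z
            _ = K * ∑ z : Fin m → Bool, Wt p z * (Real.exp (d2 z (sec ω A)/4) ^ (l:ℝ) *
                Real.exp (d2 z (proj A)/4) ^ ((1-l):ℝ)) := by rw [Finset.mul_sum]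
            _ ≤ K * (F ^ (l:ℝ) * G ^ ((1-l):ℝ)) := by
                apply mul_le_mul_of_nonneg_left hH (Real.exp_pos _).le
        have hFle : F ^ (l:ℝ) ≤ (1 / Pr p (sec ω A)) ^ (l:ℝ) :=
          Real.rpow_le_rpow hFpos.le hIHs hl0
        have hGle : G ^ ((1-l):ℝ) ≤ (1 / Pr p (proj A)) ^ ((1-l):ℝ) :=
          Real.rpow_le_rpow hGpos.le hIHb (by linarith)
        have step2 : K * (F ^ (l:ℝ) * G ^ ((1-l):ℝ)) ≤
            ((2 - r) * r ^ (l:ℝ)) * ((1 / Pr p (sec ω A)) ^ (l:ℝ) *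
              (1 / Pr p (proj A)) ^ ((1-l):ℝ)) := by
          apply mul_le_mul hsc
          · apply mul_le_mul hFle hGle (Real.rpow_nonneg hGpos.le _)
            exact Real.rpow_nonneg (by positivity) _
          · exact mul_nonneg (Real.rpow_nonneg hFpos.le _) (Real.rpow_nonneg hGpos.le _)
          · exact mul_nonneg (by nlinarith) (Real.rpow_nonneg hr0.le _)
        have step3 : ((2 - r) * r ^ (l:ℝ)) * ((1 / Pr p (sec ω A)) ^ (l:ℝ) *
            (1 / Pr p (proj A)) ^ ((1-l):ℝ)) = (2 - r) / Pr p (proj A) := by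
          have e1 : r * (1 / Pr p (sec ω A)) = 1 / Pr p (proj A) := by
            rw [hrdef]; field_simp
          calc ((2 - r) * r ^ (l:ℝ)) * ((1 / Pr p (sec ω A)) ^ (l:ℝ) *
              (1 / Pr p (proj A)) ^ ((1-l):ℝ))
              = (2 - r) * ((r * (1 / Pr p (sec ω A))) ^ (l:ℝ) *
                (1 / Pr p (proj A)) ^ ((1-l):ℝ)) := by
                rw [Real.mul_rpow hr0.le (by positivity)]; ring
            _ = (2 - r) * ((1 / Pr p (proj A)) ^ (l:ℝ) * (1 / Pr p (proj A)) ^ ((1-l):ℝ)) := by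
                rw [e1]
            _ = (2 - r) * (1 / Pr p (proj A)) ^ ((l + (1-l)):ℝ) := by
                rw [Real.rpow_add (by positivity)]
            _ = (2 - r) / Pr p (proj A) := by
                rw [show (l + (1-l)) = (1:ℝ) by ring, Real.rpow_one]; ring
        calc (∑ z : Fin m → Bool, Wt p z * Real.exp (d2 (Fin.cons ω z) A / 4))
            ≤ K * (F ^ (l:ℝ) * G ^ ((1-l):ℝ)) := step1
          _ ≤ ((2 - r) * r ^ (l:ℝ)) * ((1 / Pr p (sec ω A)) ^ (l:ℝ) *
              (1 / Pr p (proj A)) ^ ((1-l):ℝ)) := step2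
          _ = (2 - r) / Pr p (proj A) := step3
    -- assemble
    have htot : (∑ x : Fin (m+1) → Bool, Wt p x * Real.exp (d2 x A / 4)) =
        ∑ ω : Bool, qf p ω * (∑ z : Fin m → Bool, Wt p z * Real.exp (d2 (Fin.cons ω z) A / 4)) := by
      rw [sum_cons_split (fun y => Wt p y * Real.exp (d2 y A / 4))]
      apply Finset.sum_congr rfl
      intro ω _
      rw [Finset.mul_sum]
      apply Finset.sum_congr rfl
      intro z _
      rw [Wt_cons]
      ring
    have hqt : 0 < qf p true := qf_pos h0 h1 true
    have hqf : 0 < qf p false := qf_pos h0 h1 false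
    have hq1 : qf p true + qf p false = 1 := qf_sum
    have hsplit := Pr_split (p := p) A
    have hPt := Pr_nonneg h0 h1 (sec true A)
    have hPf := Pr_nonneg h0 h1 (sec false A)
    have hPtb : Pr p (sec true A) ≤ Pr p (proj A) := Pr_mono h0 h1 sec_subset_proj
    have hPfb : Pr p (sec false A) ≤ Pr p (proj A) := Pr_mono h0 h1 sec_subset_proj
    rw [htot, Fintype.sum_bool]
    have hST := hS true
    have hSF := hS false
    have hSum : qf p true * (∑ z : Fin m → Bool, Wt p z * Real.exp (d2 (Fin.cons true z) A / 4))
        + qf p false * (∑ z : Fin m → Bool, Wt p z * Real.exp (d2 (Fin.cons false z) A / 4))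
        ≤ qf p true * ((2 - Pr p (sec true A) / Pr p (proj A)) / Pr p (proj A))
          + qf p false * ((2 - Pr p (sec false A) / Pr p (proj A)) / Pr p (proj A)) := by
      apply add_le_add
      · exact mul_le_mul_of_nonneg_left hST hqt.le
      · exact mul_le_mul_of_nonneg_left hSF hqf.le
    refine le_trans hSum ?_
    have hfinal : qf p true * ((2 - Pr p (sec true A) / Pr p (proj A)) / Pr p (proj A))
        + qf p false * ((2 - Pr p (sec false A) / Pr p (proj A)) / Pr p (proj A))
        = (2 - Pr p A / Pr p (proj A)) / Pr p (proj A) := by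
      rw [hsplit]
      field_simp
      linear_combination (2 * Pr p (proj A)) * hq1
    rw [hfinal]
    rw [div_le_div_iff₀ hPb hPA]
    have hA_le : Pr p A ≤ Pr p (proj A) := by
      rw [hsplit]
      nlinarith
    have hcancel : Pr p A / Pr p (proj A) * Pr p (proj A) = Pr p A :=
      div_mul_cancel₀ _ hPb.ne'
    nlinarith [sq_nonneg (Pr p (proj A) - Pr p A)]

end Ind2

section TwoSet

lemma tal_markov (p : ℝ) (h0 : 0 < p) (h1 : p < 1) {m : ℕ}
    (A B : Finset (Fin m → Bool)) (hA : A.Nonempty)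
    {u : ℝ} (hu : ∀ x ∈ B, u ≤ d2 x A) :
    Pr p A * Pr p B ≤ Real.exp (-u/4) := by
  have h := talagrand p h0 h1 m A hA
  have hB : Pr p B * Real.exp (u/4) ≤ ∑ x ∈ B, Wt p x * Real.exp (d2 x A / 4) := by
    rw [Pr, Finset.sum_mul]
    apply Finset.sum_le_sum
    intro x hx
    exact mul_le_mul_of_nonneg_left (Real.exp_le_exp.2 (by linarith [hu x hx])) (Wt_pos h0 h1 x).le
  have hsub : ∑ x ∈ B, Wt p x * Real.exp (d2 x A / 4) ≤
      ∑ x : Fin m → Bool, Wt p x * Real.exp (d2 x A / 4) :=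
    Finset.sum_le_sum_of_subset_of_nonneg (Finset.subset_univ B)
      (fun x _ _ => mul_nonneg (Wt_pos h0 h1 x).le (Real.exp_pos _).le)
  have hPA : 0 < Pr p A := Pr_pos h0 h1 hA
  have key : Pr p B * Real.exp (u/4) ≤ 1 / Pr p A := le_trans hB (le_trans hsub h)
  have hePos : (0:ℝ) < Real.exp (u/4) := Real.exp_pos _
  have : Pr p A * (Pr p B * Real.exp (u/4)) ≤ 1 := by
    calc Pr p A * (Pr p B * Real.exp (u/4)) ≤ Pr p A * (1 / Pr p A) :=
          mul_le_mul_of_nonneg_left key hPA.le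
      _ = 1 := by field_simp
  have hfin : Pr p A * Pr p B ≤ 1 / Real.exp (u/4) := by
    rw [le_div_iff₀ hePos]
    calc Pr p A * Pr p B * Real.exp (u/4) = Pr p A * (Pr p B * Real.exp (u/4)) := by ring
      _ ≤ 1 := this
  calc Pr p A * Pr p B ≤ 1 / Real.exp (u/4) := hfin
    _ = Real.exp (-u/4) := by rw [one_div, ← Real.exp_neg]; congr 1; ring

lemma d2_lower {m : ℕ} (x : Fin m → Bool) (B : Finset (Fin m → Bool)) (hB : B.Nonempty)
    (C : Finset (Fin m)) {k : ℝ} (hk : 0 ≤ k)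
    (hchi : ∀ y ∈ B, k ≤ ∑ i ∈ C, chi x y i) :
    k^2 ≤ (C.card : ℝ) * d2 x B := by
  obtain ⟨v, hv, hQ⟩ := exists_min (x := x) hB
  -- linear functional
  have hlin : IsLinearMap ℝ (fun v : Fin m → ℝ => ∑ i ∈ C, v i) := by
    constructor
    · intro a b; simp [Finset.sum_add_distrib]
    · intro c a; simp [Finset.mul_sum]
  have hhalf : hull x B ⊆ {v : Fin m → ℝ | k ≤ ∑ i ∈ C, v i} := by
    apply convexHull_min _ (convex_halfSpace_ge hlin k)
    rintro w ⟨y, hy, rfl⟩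
    exact hchi y (Finset.mem_coe.1 hy)
  have hkv : k ≤ ∑ i ∈ C, v i := hhalf hv
  have h1 : k^2 ≤ (∑ i ∈ C, v i)^2 := by nlinarith
  have h2 : (∑ i ∈ C, v i)^2 ≤ (C.card : ℝ) * ∑ i ∈ C, (v i)^2 :=
    sq_sum_le_card_mul_sum_sq
  have h3 : ∑ i ∈ C, (v i)^2 ≤ Qn v := by
    apply Finset.sum_le_sum_of_subset_of_nonneg (Finset.subset_univ C)
    intro i _ _
    exact sq_nonneg _
  calc k^2 ≤ (∑ i ∈ C, v i)^2 := h1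
    _ ≤ (C.card : ℝ) * ∑ i ∈ C, (v i)^2 := h2
    _ ≤ (C.card : ℝ) * Qn v := by
        apply mul_le_mul_of_nonneg_left h3 (Nat.cast_nonneg _)
    _ = (C.card : ℝ) * d2 x B := by rw [hQ]

/-- two-set Talagrand inequality, certificate form, over `Fin m`. -/
theorem tal_two_cert (p : ℝ) (h0 : 0 < p) (h1 : p < 1) {m : ℕ}
    (A B : Finset (Fin m → Bool)) (hA : A.Nonempty) (hB : B.Nonempty)
    {k s : ℝ} (hk : 0 ≤ k) (hs : 0 < s)
    (hcert : ∀ x ∈ A, ∃ C : Finset (Fin m), (C.card : ℝ) ≤ s ∧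
      ∀ y ∈ B, k ≤ ∑ i ∈ C, chi x y i) :
    Pr p A * Pr p B ≤ Real.exp (-(k^2/s)/4) := by
  have hu : ∀ x ∈ A, k^2/s ≤ d2 x B := by
    intro x hx
    obtain ⟨C, hCcard, hCchi⟩ := hcert x hx
    have hlow := d2_lower x B hB C hk hCchi
    have hd2 : 0 ≤ d2 x B := d2_nonneg
    rw [div_le_iff₀ hs]
    calc k^2 ≤ (C.card : ℝ) * d2 x B := hlow
      _ ≤ s * d2 x B := mul_le_mul_of_nonneg_right hCcard hd2
      _ = d2 x B * s := by ring
  have := tal_markov p h0 h1 B A hB hu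
  calc Pr p A * Pr p B = Pr p B * Pr p A := by ring
    _ ≤ Real.exp (-(k^2/s)/4) := this

/-- two-set Talagrand inequality, certificate form, over a general fintype index. -/
theorem tal_two_cert_general {ι : Type*} [Fintype ι] (p : ℝ) (h0 : 0 < p) (h1 : p < 1)
    (A B : Finset (ι → Bool)) (hA : A.Nonempty) (hB : B.Nonempty)
    {k s : ℝ} (hk : 0 ≤ k) (hs : 0 < s)
    (hcert : ∀ x ∈ A, ∃ C : Finset ι, (C.card : ℝ) ≤ s ∧
      ∀ y ∈ B, k ≤ ∑ i ∈ C, chi x y i) :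
    Pr p A * Pr p B ≤ Real.exp (-(k^2/s)/4) := by
  classical
  set e := Fintype.equivFin ι with he
  set re : (ι → Bool) → (Fin (Fintype.card ι) → Bool) := fun x => x ∘ e.symm with hre
  have hinj : Function.Injective re := by
    intro x y hxy
    funext i
    have h2 : x (e.symm (e i)) = y (e.symm (e i)) := congrFun hxy (e i)
    simpa using h2
  have hWt : ∀ x : ι → Bool, Wt p (re x) = Wt p x := by
    intro x
    rw [Wt, Wt]
    exact Equiv.prod_comp e.symm (fun i => qf p (x i))
  have hPr : ∀ S : Finset (ι → Bool), Pr p (S.image re) = Pr p S := by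
    intro S
    rw [Pr, Finset.sum_image (fun a _ b _ h => hinj h), Pr]
    exact Finset.sum_congr rfl fun x _ => hWt x
  have hrechi : ∀ (x y : ι → Bool) (C : Finset ι),
      ∑ j ∈ C.image e, chi (re x) (re y) j = ∑ i ∈ C, chi x y i := by
    intro x y C
    rw [Finset.sum_image (fun a _ b _ h => e.injective h)]
    apply Finset.sum_congr rfl
    intro i _
    simp [chi, hre]
  have := tal_two_cert p h0 h1 (A.image re) (B.image re) (hA.image _) (hB.image _) hk hs ?_
  · rwa [hPr A, hPr B] at this
  · intro x' hx'
    obtain ⟨x, hx, rfl⟩ := Finset.mem_image.1 hx'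
    obtain ⟨C, hC1, hC2⟩ := hcert x hx
    refine ⟨C.image e, ?_, ?_⟩
    · rw [Finset.card_image_of_injective _ e.injective]; exact hC1
    · intro y' hy'
      obtain ⟨y, hy, rfl⟩ := Finset.mem_image.1 hy'
      rw [hrechi]
      exact hC2 y hy

end TwoSet

end Tal

namespace Dom

variable {n : ℕ}

lemma dom_univ (G : SimpleGraph (Fin n)) : IsDominating G ↑(Finset.univ : Finset (Fin n)) :=
  fun v => Or.inl (by simp)

lemma domNumber_mem (G : SimpleGraph (Fin n)) :
    ∃ S : Finset (Fin n), S.card = domNumber G ∧ IsDominating G ↑S := by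
  have hne : {r | ∃ S : Finset (Fin n), S.card = r ∧ IsDominating G ↑S}.Nonempty :=
    ⟨(Finset.univ : Finset (Fin n)).card, Finset.univ, rfl, dom_univ G⟩
  exact Nat.sInf_mem hne

lemma domNumber_le {G : SimpleGraph (Fin n)} {S : Finset (Fin n)}
    (h : IsDominating G ↑S) : domNumber G ≤ S.card :=
  Nat.sInf_le ⟨S, rfl, h⟩

lemma domNumber_le_n (G : SimpleGraph (Fin n)) : domNumber G ≤ n := by
  have := domNumber_le (dom_univ G)
  simpa using this

lemma domNumber_pos (hn : 1 ≤ n) (G : SimpleGraph (Fin n)) : 1 ≤ domNumber G := by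
  obtain ⟨S, hcard, hdom⟩ := domNumber_mem G
  rcases Nat.eq_zero_or_pos (domNumber G) with h | h
  · exfalso
    rw [h, Finset.card_eq_zero] at hcard
    subst hcard
    rcases hdom ⟨0, hn⟩ with hv | ⟨u, hu, _⟩
    · simpa using hv
    · simpa using hu
  · exact h

lemma isDominating_mono {G : SimpleGraph (Fin n)} {S T : Finset (Fin n)}
    (hST : S ⊆ T) (h : IsDominating G ↑S) : IsDominating G ↑T := by
  intro v
  rcases h v with hv | ⟨u, hu, hadj⟩
  · exact Or.inl (hST hv)
  · exact Or.inr ⟨u, hST hu, hadj⟩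

lemma dom_flip (f g : Sym2 (Fin n) → Bool) (e : Sym2 (Fin n))
    (hfg : ∀ e', e' ≠ e → f e' = g e') :
    domNumber (graphOf f) ≤ domNumber (graphOf g) + 1 := by
  induction e using Sym2.ind with
  | _ u v =>
    obtain ⟨S, hcard, hdom⟩ := domNumber_mem (graphOf g)
    set a : Fin n := if u ∈ S then v else u with ha
    have hdomf : IsDominating (graphOf f) ↑(insert a S) := by
      intro w
      rcases hdom w with hw | ⟨s, hs, hadj⟩
      · exact Or.inl (by simpa using Or.inr (by simpa using hw))
      · obtain ⟨hne, hedge⟩ : s ≠ w ∧ g s(s, w) = true := hadj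
        by_cases hew : s(s, w) = s(u, v)
        · rcases Sym2.eq_iff.1 hew with ⟨rfl, rfl⟩ | ⟨rfl, rfl⟩
          · -- s = u, w = v
            by_cases hu : s ∈ S
            · left
              have : a = w := by rw [ha, if_pos hu]
              simp [← this]
            · exact absurd (Finset.mem_coe.1 hs) hu
          · -- s = v, w = u
            by_cases hu : w ∈ S
            · exact Or.inl (by simp [hu])
            · left
              have : a = w := by rw [ha, if_neg hu]
              simp [← this]
        · right
          refine ⟨s, by simp [Finset.mem_coe.1 hs], hne, ?_⟩
          rw [hfg _ hew]
          exact hedge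
    calc domNumber (graphOf f) ≤ (insert a S).card := domNumber_le hdomf
      _ ≤ S.card + 1 := Finset.card_insert_le _ _
      _ = domNumber (graphOf g) + 1 := by rw [hcard]

lemma dom_hamming : ∀ (Δ : Finset (Sym2 (Fin n))) (f g : Sym2 (Fin n) → Bool),
    (∀ e ∉ Δ, f e = g e) → domNumber (graphOf f) ≤ domNumber (graphOf g) + Δ.card := by
  intro Δ
  induction Δ using Finset.induction with
  | empty =>
    intro f g h
    have : f = g := funext fun e => h e (Finset.notMem_empty e)
    rw [this]
    simp
  | @insert a s ha IH =>
    intro f g h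
    set g' := Function.update g a (f a) with hg'
    have h1 : ∀ e ∉ s, f e = g' e := by
      intro e hes
      by_cases hea : e = a
      · rw [hea, hg']
        simp
      · rw [hg', Function.update_of_ne hea]
        exact h e (by simp [hea, hes])
    have h2 : ∀ e', e' ≠ a → g' e' = g e' := by
      intro e' he'
      rw [hg', Function.update_of_ne he']
    have hIH := IH f g' h1
    have hflip := dom_flip g' g a h2
    rw [Finset.card_insert_of_notMem ha]
    omega

lemma cert_exists (x : Sym2 (Fin n) → Bool) (S : Finset (Fin n))
    (hdom : IsDominating (graphOf x) ↑S) :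
    ∃ C : Finset (Sym2 (Fin n)), C.card ≤ n - S.card ∧
      ∀ y : Sym2 (Fin n) → Bool,
        domNumber (graphOf y) ≤ S.card + (C.filter (fun e => ¬ x e = y e)).card := by
  classical
  have hchoice : ∀ v : Fin n, v ∉ S → ∃ u, u ∈ S ∧ (graphOf x).Adj u v := by
    intro v hv
    rcases hdom v with h | ⟨u, hu, hadj⟩
    · exact absurd (Finset.mem_coe.1 h) hv
    · exact ⟨u, Finset.mem_coe.1 hu, hadj⟩
  set T := (Finset.univ \ S).attach with hT
  set pick : {v // v ∈ Finset.univ \ S} → Fin n := fun vp =>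
    Classical.choose (hchoice vp.1 (Finset.mem_sdiff.1 vp.2).2) with hpick
  set C : Finset (Sym2 (Fin n)) := T.image (fun vp => s(pick vp, vp.1)) with hC
  have hCcard : C.card ≤ n - S.card := by
    calc C.card ≤ T.card := Finset.card_image_le
      _ = (Finset.univ \ S).card := Finset.card_attach
      _ = n - S.card := by
          rw [Finset.card_sdiff_of_subset (Finset.subset_univ S)]
          simp
  refine ⟨C, hCcard, ?_⟩
  intro y
  set z : Sym2 (Fin n) → Bool := fun e => if e ∈ C then x e else y e with hz
  have hzdom : IsDominating (graphOf z) ↑S := by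
    intro w
    by_cases hw : w ∈ S
    · exact Or.inl (Finset.mem_coe.2 hw)
    · right
      have hwT : w ∈ Finset.univ \ S := Finset.mem_sdiff.2 ⟨Finset.mem_univ w, hw⟩
      set wp : {v // v ∈ Finset.univ \ S} := ⟨w, hwT⟩ with hwp
      have hspec := Classical.choose_spec (hchoice wp.1 (Finset.mem_sdiff.1 wp.2).2)
      have hedge : s(pick wp, w) ∈ C := by
        rw [hC]
        exact Finset.mem_image.2 ⟨wp, Finset.mem_attach _ _, rfl⟩
      refine ⟨pick wp, Finset.mem_coe.2 hspec.1, show (_ ≠ _ ∧ _) from ⟨hspec.2.1, ?_⟩⟩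
      rw [hz]
      simp only [hedge, if_pos]
      exact hspec.2.2
  have hzcard : domNumber (graphOf z) ≤ S.card := domNumber_le hzdom
  have hyz : ∀ e ∉ C.filter (fun e => ¬ x e = y e), y e = z e := by
    intro e he
    rw [hz]
    by_cases heC : e ∈ C
    · have : ¬ ¬ x e = y e := by
        intro hcon
        exact he (Finset.mem_filter.2 ⟨heC, hcon⟩)
      push_neg at this
      simp [heC, this]
    · simp [heC]
  have := dom_hamming (C.filter (fun e => ¬ x e = y e)) y z hyz
  omega

end Dom

lemma gnp_apply_pred {n : ℕ} {p : ℝ} (h0 : 0 < p) (h1 : p < 1)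
    (Pred : (Sym2 (Fin n) → Bool) → Prop) :
    gnp n p {f | Pred f} =
      ENNReal.ofReal (Tal.Pr p (Finset.univ.filter (fun f => Pred f))) := by
  classical
  have hbern : ∀ b : Bool, bernoulliMeasure p {b} = ENNReal.ofReal (Tal.qf p b) := by
    intro b
    rw [bernoulliMeasure, PMF.toMeasure_apply_singleton _ _ (measurableSet_singleton b)]
    have hmin : min (Real.toNNReal p) 1 = Real.toNNReal p :=
      min_eq_left (Real.toNNReal_le_one.2 h1.le)
    rw [PMF.bernoulli_apply, hmin]
    cases b
    · show ((1 - Real.toNNReal p : NNReal) : ENNReal) = ENNReal.ofReal (Tal.qf p false)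
      rw [Tal.qf, if_neg (by simp), ENNReal.coe_sub, ENNReal.coe_one]
      show 1 - ENNReal.ofReal p = _
      rw [← ENNReal.ofReal_one, ← ENNReal.ofReal_sub _ h0.le]
    · simp [Tal.qf]
      rfl
  have hsingle : ∀ x : Sym2 (Fin n) → Bool, gnp n p {x} = ENNReal.ofReal (Tal.Wt p x) := by
    intro x
    rw [gnp, ← Set.univ_pi_singleton x, MeasureTheory.Measure.pi_pi]
    rw [Tal.Wt, ENNReal.ofReal_prod_of_nonneg (fun i _ => (Tal.qf_pos h0 h1 _).le)]
    exact Finset.prod_congr rfl fun i _ => hbern (x i)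
  set F := Finset.univ.filter (fun f => Pred f) with hF
  have hset : {f | Pred f} = (↑F : Set (Sym2 (Fin n) → Bool)) := by ext f; simp [hF]
  rw [hset]
  have hmeas : ∀ y ∈ F, MeasurableSet ((id : (Sym2 (Fin n) → Bool) → _) ⁻¹' {y}) := by
    intro y _
    simpa using (measurableSet_singleton y)
  have hsum := MeasureTheory.sum_measure_preimage_singleton (μ := gnp n p) F hmeas
  simp only [Set.preimage_id] at hsum
  rw [← hsum, Tal.Pr, ENNReal.ofReal_sum_of_nonneg (fun x _ => (Tal.Wt_pos h0 h1 x).le)]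
  exact Finset.sum_congr rfl fun x _ => hsingle x


/-- Corollary 11, from Talagrand's inequality. -/
theorem stmt_12 (n : ℕ) (hn : 1 ≤ n) (p : ℝ) (hp0 : 0 < p) (hp1 : p < 1)
    (b t : ℝ) (hb : b < n) (ht : 0 ≤ t) :
    gnp n p {f | (domNumber (graphOf f) : ℝ) ≤ b} *
        gnp n p {f | (domNumber (graphOf f) : ℝ) ≥ b + t} ≤
      ENNReal.ofReal (Real.exp (-(t ^ 2) / (4 * ((n : ℝ) - b)))) := by
  classical
  set Afin := Finset.univ.filter
    (fun f : Sym2 (Fin n) → Bool => (domNumber (graphOf f) : ℝ) ≤ b) with hAfin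
  set Bfin := Finset.univ.filter
    (fun f : Sym2 (Fin n) → Bool => (domNumber (graphOf f) : ℝ) ≥ b + t) with hBfin
  have hmA : gnp n p {f | (domNumber (graphOf f) : ℝ) ≤ b} = ENNReal.ofReal (Tal.Pr p Afin) :=
    gnp_apply_pred hp0 hp1 _
  have hmB : gnp n p {f | (domNumber (graphOf f) : ℝ) ≥ b + t} =
      ENNReal.ofReal (Tal.Pr p Bfin) := gnp_apply_pred hp0 hp1 _
  rw [hmA, hmB]
  rcases Afin.eq_empty_or_nonempty with hAe | hAne
  · rw [hAe]
    simp [Tal.Pr]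
  rcases Bfin.eq_empty_or_nonempty with hBe | hBne
  · rw [hBe]
    simp [Tal.Pr]
  obtain ⟨x0, hx0⟩ := hAne
  have hx0' : (domNumber (graphOf x0) : ℝ) ≤ b := (Finset.mem_filter.1 hx0).2
  have hD1 : 1 ≤ domNumber (graphOf x0) := Dom.domNumber_pos hn _
  have hb1 : (1:ℝ) ≤ b := le_trans (by exact_mod_cast hD1) hx0'
  have hb0 : (0:ℝ) ≤ b := by linarith
  obtain ⟨y0, hy0⟩ := hBne
  have hy0' : b + t ≤ (domNumber (graphOf y0) : ℝ) := (Finset.mem_filter.1 hy0).2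
  have htn : b + t ≤ (n:ℝ) := by
    refine le_trans hy0' ?_
    exact_mod_cast Dom.domNumber_le_n (graphOf y0)
  set β : ℕ := ⌊b⌋₊ with hβ
  have hβb : (β:ℝ) ≤ b := Nat.floor_le hb0
  have hβn : β < n := (Nat.floor_lt hb0).2 hb
  set k : ℝ := b + t - β with hk_def
  set s : ℝ := (n:ℝ) - β with hs_def
  have hs : 0 < s := by
    rw [hs_def]
    have : (β:ℝ) < n := by exact_mod_cast hβn
    linarith
  have hk : 0 ≤ k := by rw [hk_def]; linarith
  have hcert : ∀ x ∈ Afin, ∃ C : Finset (Sym2 (Fin n)), (C.card : ℝ) ≤ s ∧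
      ∀ y ∈ Bfin, k ≤ ∑ e ∈ C, Tal.chi x y e := by
    intro x hx
    have hxb : (domNumber (graphOf x) : ℝ) ≤ b := (Finset.mem_filter.1 hx).2
    have hxβ : domNumber (graphOf x) ≤ β := Nat.le_floor hxb
    obtain ⟨S0, hS0card, hS0dom⟩ := Dom.domNumber_mem (graphOf x)
    obtain ⟨S, hS0S, hScard⟩ := Finset.exists_superset_card_eq
      (show S0.card ≤ β by rw [hS0card]; exact hxβ)
      (show β ≤ Fintype.card (Fin n) by simpa using hβn.le)
    have hSdom := Dom.isDominating_mono hS0S hS0dom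
    obtain ⟨C, hCcard, hCdom⟩ := Dom.cert_exists x S hSdom
    refine ⟨C, ?_, ?_⟩
    · rw [hScard] at hCcard
      have h1 : (C.card : ℝ) ≤ ((n - β : ℕ) : ℝ) := by exact_mod_cast hCcard
      rw [Nat.cast_sub hβn.le] at h1
      exact h1
    · intro y hy
      have hyb : b + t ≤ (domNumber (graphOf y) : ℝ) := (Finset.mem_filter.1 hy).2
      have hDy := hCdom y
      rw [hScard] at hDy
      have hchi_sum : ∑ e ∈ C, Tal.chi x y e =
          ((C.filter (fun e => ¬ x e = y e)).card : ℝ) := by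
        rw [← Finset.sum_boole]
        apply Finset.sum_congr rfl
        intro e _
        by_cases h : x e = y e <;> simp [Tal.chi, h]
      rw [hchi_sum]
      have hcast : (domNumber (graphOf y) : ℝ) ≤
          (β : ℝ) + ((C.filter (fun e => ¬ x e = y e)).card : ℝ) := by
        exact_mod_cast hDy
      rw [hk_def]
      linarith
  have htal := Tal.tal_two_cert_general p hp0 hp1 Afin Bfin ⟨x0, hx0⟩ ⟨y0, hy0⟩ hk hs hcert
  rw [← ENNReal.ofReal_mul (Tal.Pr_nonneg hp0 hp1 Afin)]
  apply ENNReal.ofReal_le_ofReal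
  refine le_trans htal ?_
  apply Real.exp_le_exp.2
  have hnb : 0 < (n:ℝ) - b := by linarith
  have hts : t ≤ (n:ℝ) - b := by linarith
  set ε : ℝ := b - β with hε_def
  have hε : 0 ≤ ε := by rw [hε_def]; linarith
  have hkey : t^2 * s ≤ k^2 * ((n:ℝ) - b) := by
    have hse : s = ((n:ℝ) - b) + ε := by rw [hs_def, hε_def]; ring
    have hke : k = t + ε := by rw [hk_def, hε_def]; ring
    rw [hse, hke]
    have h1 : t^2 ≤ t * ((n:ℝ) - b) := by nlinarith
    nlinarith [mul_le_mul_of_nonneg_right h1 hε,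
      mul_nonneg (mul_nonneg ht hε) hnb.le,
      mul_nonneg (mul_nonneg hε hε) hnb.le]
  have h4nb : (0:ℝ) < 4 * ((n:ℝ) - b) := by linarith
  have h4s : (0:ℝ) < 4 * s := by linarith
  rw [neg_div, neg_div, neg_le_neg_iff, div_div]
  rw [div_le_div_iff₀ h4nb (by linarith : (0:ℝ) < s * 4)]
  nlinarith [hkey]
end

section
/- Let p = p(n) ∈ (0,1) and let r = r(n) be a sequence of positive integers with 2r ≤ n, (1−p)^r → 0 and r·(1−p)^r → 0 as n → ∞. Then C(n,r) · C(n−r,r) · (1 − 2(1−p)^r + (1−p)^{2r})^{n−2r} ≤ (1+o(1)) · E(X_r)², where E(X_r) = C(n,r)(1−(1−p)^r)^{n−r}; i.e., the limsup of the ratio of the left-hand side to E(X_r)² is at most 1. -/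
open MeasureTheory Filter
open scoped Classical

/-- if `2r ≤ n`, `(1-p)^r → 0` and `r(1-p)^r → 0`, then the `s = 0`
term of the second-moment sum is at most `(1+o(1)) E(X_r)²`, i.e. the limsup of the
ratio is at most `1`. -/
theorem stmt_16 (p : ℕ → ℝ) (hp : ∀ n, 0 < p n ∧ p n < 1)
    (r : ℕ → ℕ) (hrn : ∀ n : ℕ, 2 * r n ≤ n)
    (h1 : Tendsto (fun n : ℕ => (1 - p n) ^ (r n)) atTop (nhds 0))
    (h2 : Tendsto (fun n : ℕ => (r n : ℝ) * (1 - p n) ^ (r n)) atTop (nhds 0)) :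
    Filter.limsup (fun n : ℕ =>
        (n.choose (r n) : ℝ) * ((n - r n).choose (r n) : ℝ) *
            (1 - 2 * (1 - p n) ^ (r n) + (1 - p n) ^ (2 * r n)) ^ (n - 2 * r n)
          / (EX n (r n) (p n)) ^ 2) atTop ≤ (1 : ℝ) := by
  simp only [EX]
  set q : ℕ → ℝ := fun n => (1 - p n) ^ (r n) with hqdef
  have hq01 : ∀ n, 0 < q n ∧ q n ≤ 1 := by
    intro n
    constructor
    · exact pow_pos (by linarith [(hp n).2]) _
    · exact pow_le_one₀ (by linarith [(hp n).2]) (by linarith [(hp n).1])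
  -- g tends to 1
  have hpow : Tendsto (fun n => (1 - q n) ^ (2 * r n)) atTop (nhds 1) := by
    have hlow : Tendsto (fun n => 1 - 2 * ((r n : ℝ) * q n)) atTop (nhds 1) := by
      have := h2.const_mul (2:ℝ)
      have := (tendsto_const_nhds (x := (1:ℝ)) (f := atTop)).sub this
      simpa using this
    refine tendsto_of_tendsto_of_tendsto_of_le_of_le hlow tendsto_const_nhds ?_ ?_
    · intro n
      have h := one_add_mul_le_pow (a := -(q n)) (by linarith [(hq01 n).2]) (2 * r n)
      have : (1:ℝ) + (2 * r n : ℕ) * (-(q n)) ≤ (1 - q n) ^ (2 * r n) := by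
        simpa [sub_eq_add_neg] using h
      push_cast at this
      ring_nf at this ⊢
      linarith
    · intro n
      exact pow_le_one₀ (by linarith [(hq01 n).2]) (by linarith [(hq01 n).1])
  have hg : Tendsto (fun n => ((1 - q n) ^ (2 * r n))⁻¹) atTop (nhds 1) := by
    simpa using hpow.inv₀ one_ne_zero
  -- eventual inequality
  have hev : ∀ᶠ n in atTop, (n.choose (r n) : ℝ) * ((n - r n).choose (r n) : ℝ) *
            (1 - 2 * (1 - p n) ^ (r n) + (1 - p n) ^ (2 * r n)) ^ (n - 2 * r n)
          / ((n.choose (r n) : ℝ) * (1 - (1 - p n) ^ (r n)) ^ (n - r n)) ^ 2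
        ≤ ((1 - q n) ^ (2 * r n))⁻¹ := by
    have hsmall : ∀ᶠ n in atTop, q n < 1/2 := h1.eventually_lt_const (by norm_num)
    filter_upwards [hsmall] with n hn
    have ha : (0:ℝ) < 1 - q n := by linarith
    set a := 1 - q n with hadef
    have hC : (0:ℝ) < (n.choose (r n) : ℝ) := by
      exact_mod_cast Nat.cast_pos.mpr (Nat.choose_pos (by have := hrn n; omega : r n ≤ n))
    have hC' : ((n - r n).choose (r n) : ℝ) ≤ (n.choose (r n) : ℝ) := by
      exact_mod_cast Nat.choose_le_choose _ (Nat.sub_le n (r n))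
    have hrw : 1 - 2 * (1 - p n) ^ (r n) + (1 - p n) ^ (2 * r n) = a ^ 2 := by
      have : (1 - p n) ^ (2 * r n) = q n ^ 2 := by
        rw [hqdef]; rw [two_mul, pow_add]; ring
      rw [this, hadef]; ring
    rw [hrw]
    have hm : n - r n = (n - 2 * r n) + r n := by have := hrn n; omega
    set m := n - 2 * r n with hmdef
    have hEX : ((n.choose (r n) : ℝ) * (1 - (1 - p n) ^ (r n)) ^ (n - r n)) ^ 2
        = (n.choose (r n) : ℝ)^2 * a ^ (2 * m) * a ^ (2 * r n) := by
      rw [hm]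
      rw [show (1 - (1 - p n) ^ (r n)) = a from rfl]
      rw [pow_add]
      ring_nf
    rw [hEX]
    have hnum : (n.choose (r n) : ℝ) * ((n - r n).choose (r n) : ℝ) * (a ^ 2) ^ m
        ≤ (n.choose (r n) : ℝ)^2 * a ^ (2 * m) := by
      have heq : a ^ (2 * m) = (a ^ 2) ^ m := pow_mul a 2 m
      rw [heq]
      have h0 : (0:ℝ) ≤ (a ^ 2) ^ m := pow_nonneg (sq_nonneg a) m
      have hkey := mul_le_mul_of_nonneg_right (mul_le_mul_of_nonneg_left hC' hC.le) h0
      nlinarith [hkey]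
    have hden : (0:ℝ) < (n.choose (r n) : ℝ)^2 * a ^ (2 * m) * a ^ (2 * r n) := by positivity
    rw [div_le_iff₀ hden]
    calc (n.choose (r n) : ℝ) * ((n - r n).choose (r n) : ℝ) * (a ^ 2) ^ m
        ≤ (n.choose (r n) : ℝ)^2 * a ^ (2 * m) := hnum
      _ = (a ^ (2 * r n))⁻¹ * ((n.choose (r n) : ℝ)^2 * a ^ (2 * m) * a ^ (2 * r n)) := by
          field_simp
  -- conclude
  have hcob : IsCoboundedUnder (· ≤ ·) atTop (fun n : ℕ =>
        (n.choose (r n) : ℝ) * ((n - r n).choose (r n) : ℝ) *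
            (1 - 2 * (1 - p n) ^ (r n) + (1 - p n) ^ (2 * r n)) ^ (n - 2 * r n)
          / ((n.choose (r n) : ℝ) * (1 - (1 - p n) ^ (r n)) ^ (n - r n)) ^ 2) := by
    refine isCoboundedUnder_le_of_le atTop (x := 0) fun n => ?_
    have h2' : (1 - p n) ^ (2 * r n) = ((1 - p n) ^ (r n)) ^ 2 := by rw [pow_mul']
    have h0 : (1 - 2 * (1 - p n) ^ (r n) + (1 - p n) ^ (2 * r n)) = ((1 - (1 - p n) ^ (r n)))^2 := by
      rw [h2']; ring
    rw [h0]
    positivity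
  have hbdd : IsBoundedUnder (· ≤ ·) atTop (fun n => ((1 - q n) ^ (2 * r n))⁻¹) :=
    hg.isBoundedUnder_le
  calc Filter.limsup _ atTop ≤ Filter.limsup (fun n => ((1 - q n) ^ (2 * r n))⁻¹) atTop :=
        Filter.limsup_le_limsup hev hcob hbdd
    _ = 1 := hg.limsup_eq
end

section
/- Let p = p(n) → 0 with p(n)·√n / ln²n → ∞, and let r = r(n) be a sequence of positive integers with q^r · ln²d / d → 1 as n → ∞. Then C(n,r) · r · C(n−r, r−1) · ( 1 − 2(1−p)^r + (1−p)^{2r−1} )^{n−2r+1} / [ C(n,r) (1−(1−p)^r)^{n−r} ]² → 0 as n → ∞. -/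
open MeasureTheory Filter
open scoped Classical

section KeyAux
open Filter Real

set_option maxHeartbeats 1000000 in
private 
lemma key_bound (n r : ℕ) (p : ℝ) (h0 : 0 < p) (h1 : p < 1) (hhalf : p ≤ 1/2)
    (hr1 : 1 ≤ r) (hn : (2:ℝ)^50 ≤ (n:ℝ))
    (hpl : 1 ≤ p * Real.sqrt n / (Real.log n)^2)
    (hE1 : 1/2 ≤ (1/(1-p))^r * (Real.log (n*p))^2 / (n*p))
    (hE2 : (1/(1-p))^r * (Real.log (n*p))^2 / (n*p) ≤ 2) :
    0 ≤ (n.choose r : ℝ) * r * ((n - r).choose (r - 1) : ℝ) *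
            (1 - 2*(1-p)^r + (1-p)^(2*r-1)) ^ (n + 1 - 2*r)
          / ((n.choose r : ℝ) * (1 - (1-p)^r) ^ (n - r)) ^ 2 ∧
    (n.choose r : ℝ) * r * ((n - r).choose (r - 1) : ℝ) *
            (1 - 2*(1-p)^r + (1-p)^(2*r-1)) ^ (n + 1 - 2*r)
          / ((n.choose r : ℝ) * (1 - (1-p)^r) ^ (n - r)) ^ 2 ≤ 144 / (Real.log n)^2 := by
  set N : ℝ := (n:ℝ) with hNdef
  set s : ℝ := Real.sqrt N with hsdef
  set lam : ℝ := Real.log N with hlamdef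
  set d : ℝ := N * p with hddef
  set x : ℝ := (1-p)^r with hxdef
  set y : ℝ := (1-p)^(2*r-1) with hydef
  set L : ℝ := (Real.log d)^2 with hLdef
  have hN1 : (1:ℝ) ≤ N := by norm_num at hn ⊢; linarith
  have hNpos : (0:ℝ) < N := by linarith
  have hs0 : 0 < s := Real.sqrt_pos.mpr hNpos
  have hs2 : s^2 = N := Real.sq_sqrt hNpos.le
  have hs1 : (1:ℝ) ≤ s := by
    rw [hsdef, show (1:ℝ) = Real.sqrt 1 by simp]
    exact Real.sqrt_le_sqrt hN1
  clear_value N s lam d x y L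
  have hsle : s ≤ N := by
    have h' : s*1 ≤ s*s := mul_le_mul_of_nonneg_left hs1 hs0.le
    linarith [h', hs2]
  have hs_ge : (2:ℝ)^25 ≤ s := by
    have h := Real.sqrt_le_sqrt hn
    rwa [show ((2:ℝ)^50) = ((2:ℝ)^25)^2 by ring, Real.sqrt_sq (by positivity), ← hsdef] at h
  -- t = s^{1/4}
  set t : ℝ := Real.sqrt (Real.sqrt s) with htdef
  have ht0 : 0 < t := Real.sqrt_pos.mpr (Real.sqrt_pos.mpr hs0)
  have ht2 : t^2 = Real.sqrt s := Real.sq_sqrt (Real.sqrt_nonneg s)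
  clear_value t
  have ht4 : t^4 = s := by
    rw [show t^4 = (t^2)^2 by ring, ht2]
    exact Real.sq_sqrt hs0.le
  have ht2ge : (4096:ℝ) ≤ t^2 := by
    rw [ht2]
    have h := Real.sqrt_le_sqrt hs_ge
    rw [show ((2:ℝ)^25) = 4096^2 * 2 by norm_num, Real.sqrt_mul (by positivity),
      Real.sqrt_sq (by norm_num)] at h
    have h2 : (1:ℝ) ≤ Real.sqrt 2 := by
      rw [show (1:ℝ) = Real.sqrt 1 by simp]; exact Real.sqrt_le_sqrt (by norm_num)
    linarith
  have hNt8 : N = t^8 := by rw [← hs2, ← ht4]; ring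
  have hlam_ub : lam ≤ 8*t := by
    have h8 : Real.log N = 8 * Real.log t := by
      rw [hNt8, Real.log_pow]; norm_num
    have hlt : Real.log t ≤ t - 1 := Real.log_le_sub_one_of_pos ht0
    rw [hlamdef, h8]; linarith
  have hlam_lb : (34:ℝ) ≤ lam := by
    have h1' : Real.log ((2:ℝ)^50) ≤ Real.log N := Real.log_le_log (by positivity) hn
    rw [Real.log_pow] at h1'
    have h2 := Real.log_two_gt_d9
    rw [hlamdef]; push_cast at h1'; linarith
  have hlampos : (0:ℝ) < lam := by linarith
  have hp_lb : lam^2 ≤ p * s := by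
    have hl2 : (0:ℝ) < lam^2 := by positivity
    have := (one_le_div hl2).mp hpl
    linarith
  have hd_pos : 0 < d := by rw [hddef]; positivity
  have hd_lb : s * lam^2 ≤ d := by
    have h' : s * lam^2 ≤ s * (p * s) := mul_le_mul_of_nonneg_left hp_lb hs0.le
    have h2 : s * (p * s) = N * p := by rw [← hs2]; ring
    rw [hddef, ← h2]; exact h'
  have hd_le : d ≤ N := by
    have h' : N*p ≤ N*1 := mul_le_mul_of_nonneg_left h1.le hNpos.le
    rw [hddef]; linarith
  have hd_ge3 : (3:ℝ) ≤ d := by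
    have e1 : (34:ℝ)*34 ≤ lam*lam := mul_le_mul hlam_lb hlam_lb (by norm_num) hlampos.le
    have e2 : 1*lam^2 ≤ s*lam^2 := mul_le_mul_of_nonneg_right hs1 (sq_nonneg lam)
    linarith [hd_lb, e1, e2]
  have hld1 : 1 ≤ Real.log d := by
    rw [Real.le_log_iff_exp_le hd_pos]
    linarith [Real.exp_one_lt_d9]
  have hld_ub : Real.log d ≤ lam := by rw [hlamdef]; exact Real.log_le_log hd_pos hd_le
  have hldpos : (0:ℝ) < Real.log d := by linarith
  have hL1 : (1:ℝ) ≤ L := by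
    have e := mul_le_mul hld1 hld1 (by norm_num) (by linarith)
    rw [hLdef]; linarith [e]
  have hL_ub : L ≤ lam^2 := by
    rw [hLdef]; exact pow_le_pow_left₀ hldpos.le hld_ub 2
  have hLpos : (0:ℝ) < L := by linarith
  have h1p : (0:ℝ) < 1 - p := by linarith
  have hx0 : (0:ℝ) < x := by rw [hxdef]; positivity
  have hx1 : x < 1 := by
    rw [hxdef]
    exact pow_lt_one₀ h1p.le (by linarith) (by omega)
  have hinv : (1/(1-p))^r = 1/x := by rw [hxdef, div_pow, one_pow]
  rw [hinv] at hE1 hE2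
  have hxdpos : (0:ℝ) < x * d := mul_pos hx0 hd_pos
  have heq : (1/x) * L / d = L / (x*d) := by field_simp
  rw [heq] at hE1 hE2
  have hxd_ub : x * d ≤ 2 * L := by
    have h' := (le_div_iff₀ hxdpos).mp hE1
    linarith
  have hxd_lb : L ≤ 2 * (x * d) := by
    have h' := (div_le_iff₀ hxdpos).mp hE2
    linarith
  have hxd_ub2 : x * d ≤ 2 * lam^2 := by linarith
  clear hE1 hE2 heq
  -- bound on r
  have R0 : (0:ℝ) ≤ (r:ℝ) := Nat.cast_nonneg r
  have hRp : (r:ℝ) * p ≤ 2 * lam := by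
    have hlx : Real.log x = (r:ℝ) * Real.log (1-p) := by rw [hxdef, Real.log_pow]
    have l1 : Real.log (1-p) ≤ -p := by
      have := Real.log_le_sub_one_of_pos h1p; linarith
    have l2 : Real.log x ≤ -((r:ℝ)*p) := by
      rw [hlx]
      calc (r:ℝ) * Real.log (1-p) ≤ (r:ℝ) * (-p) := mul_le_mul_of_nonneg_left l1 R0
        _ = -((r:ℝ)*p) := by ring
    have h2d : (0:ℝ) < 2*d := by linarith
    have hxL : L/(2*d) ≤ x := by
      rw [div_le_iff₀ h2d]; linarith [hxd_lb]
    have l3 : Real.log (L/(2*d)) ≤ Real.log x := Real.log_le_log (div_pos hLpos h2d) hxL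
    have l4 : Real.log (L/(2*d)) = Real.log L - (Real.log 2 + Real.log d) := by
      rw [Real.log_div (ne_of_gt hLpos) (ne_of_gt h2d),
        Real.log_mul (by norm_num) (ne_of_gt hd_pos)]
    have l5 : 0 ≤ Real.log L := Real.log_nonneg hL1
    have l6 : Real.log 2 ≤ 1 := by linarith [Real.log_two_lt_d9]
    linarith
  have hRs : (r:ℝ) * lam ≤ 2 * s := by
    have m1 : (r:ℝ) * lam^2 ≤ (r:ℝ) * (p*s) := mul_le_mul_of_nonneg_left hp_lb R0
    have m2 : ((r:ℝ)*p)*s ≤ (2*lam)*s := mul_le_mul_of_nonneg_right hRp hs0.le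
    have m3 : ((r:ℝ)*lam)*lam ≤ (2*s)*lam := by linarith [m1, m2]
    exact le_of_mul_le_mul_right m3 hlampos
  have hRN : (r:ℝ) ≤ N/4 := by
    have e : (r:ℝ)*34 ≤ (r:ℝ)*lam := mul_le_mul_of_nonneg_left hlam_lb R0
    linarith [e, hRs, hsle]
  have h2r : 2*r ≤ n := by
    have hc : ((2*r:ℕ):ℝ) ≤ (n:ℝ) := by push_cast; rw [← hNdef]; linarith
    exact_mod_cast hc
  have hrn : r ≤ n := by omega
  have hRsq : (r:ℝ)^2 * lam^2 ≤ 4*N := by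
    have h' := mul_self_le_mul_self (mul_nonneg R0 hlampos.le) hRs
    linarith [h', hs2]
  have hNps : N * p^2 = (p*s)^2 := by rw [← hs2]; ring
  have hNp2 : lam^4 ≤ N * p^2 := by
    have h' := mul_self_le_mul_self (by positivity : (0:ℝ) ≤ lam^2) hp_lb
    linarith [h', hNps]
  have hxr : x * (r:ℝ) ≤ 1/4 := by
    have key1 : (x*d) * ((r:ℝ)*p) ≤ (2*lam^2) * (2*lam) :=
      mul_le_mul hxd_ub2 hRp (by positivity) (by positivity)
    have key2 : (x*d) * ((r:ℝ)*p) = (x*(r:ℝ)) * (N*p^2) := by rw [hddef]; ring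
    have e1 : (x*(r:ℝ)) * lam^4 ≤ (x*(r:ℝ)) * (N*p^2) :=
      mul_le_mul_of_nonneg_left hNp2 (mul_nonneg hx0.le R0)
    have e2 : ((x*(r:ℝ))*lam) * lam^3 ≤ 4 * lam^3 := by linarith [key1, key2, e1]
    have e3 : (x*(r:ℝ))*lam ≤ 4 := le_of_mul_le_mul_right e2 (by positivity)
    have e4 : (x*(r:ℝ))*34 ≤ (x*(r:ℝ))*lam :=
      mul_le_mul_of_nonneg_left hlam_lb (mul_nonneg hx0.le R0)
    linarith
  have h32 : 32 * lam^2 ≤ s := by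
    have hlsq : lam*lam ≤ (8*t)*(8*t) :=
      mul_le_mul hlam_ub hlam_ub hlampos.le (by linarith)
    have e2 : 4096*t^2 ≤ t^2*t^2 := mul_le_mul_of_nonneg_right ht2ge (sq_nonneg t)
    linarith [hlsq, e2, ht4]
  have hpx : 8 * N * (p * x^2) ≤ 1 := by
    have sqx := mul_self_le_mul_self (mul_nonneg hx0.le hd_pos.le) hxd_ub2
    have a1 : x^2 * (N^2*p^2) ≤ 4 * lam^4 := by
      have hdd : (x*d)*(x*d) = x^2*(N^2*p^2) := by rw [hddef]; ring
      linarith [sqx, hdd]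
    have hN2p : N^2*p = s^3*(p*s) := by rw [← hs2]; ring
    have a2 : s^3 * lam^2 ≤ N^2 * p := by
      have h' := mul_le_mul_of_nonneg_left hp_lb (by positivity : (0:ℝ) ≤ s^3)
      linarith [h', hN2p.ge, hN2p.le]
    have a3 : (p*x^2) * (s^3*lam^2) ≤ 4*lam^4 := by
      have h' := mul_le_mul_of_nonneg_left a2 (by positivity : (0:ℝ) ≤ p*x^2)
      linarith [h', a1]
    have a4 : (p*x^2) * s^3 ≤ 4*lam^2 := by
      have h' : ((p*x^2)*s^3) * lam^2 ≤ (4*lam^2) * lam^2 := by linarith [a3]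
      exact le_of_mul_le_mul_right h' (by positivity)
    have c1 : 8*((p*x^2)*s^3) ≤ s := by linarith [a4, h32]
    have c2 : (8*(p*x^2)*s^2) * s ≤ 1 * s := by linarith [c1]
    have c3 : 8*(p*x^2)*s^2 ≤ 1 := le_of_mul_le_mul_right c2 hs0
    calc 8 * N * (p * x^2) = 8*(p*x^2)*s^2 := by rw [← hs2]; ring
      _ ≤ 1 := c3
  -- B bounds
  have hy0 : (0:ℝ) ≤ y := by rw [hydef]; exact pow_nonneg h1p.le _
  have hy : y * (1-p) = x^2 := by
    rw [hydef, hxdef, ← pow_succ, ← pow_mul]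
    congr 1
    omega
  have hx_half : x ≤ 1/2 := by
    have e1 : x*(s*lam^2) ≤ x*d := mul_le_mul_of_nonneg_left hd_lb hx0.le
    have e2 : ((x*s))*lam^2 ≤ 2*lam^2 := by linarith [e1, hxd_ub2]
    have e3 : x*s ≤ 2 := le_of_mul_le_mul_right (by linarith [e2] : (x*s)*lam^2 ≤ 2*lam^2) (by positivity)
    have e4 : x*4 ≤ x*s := mul_le_mul_of_nonneg_left (by linarith [hs_ge] : (4:ℝ) ≤ s) hx0.le
    linarith
  have hx2 : (1:ℝ)/2 ≤ 1 - x := by linarith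
  have hp2 : (1:ℝ)/2 ≤ 1 - p := by linarith
  have hy_ge : x^2 ≤ y := by
    have : 0 ≤ y*p := mul_nonneg hy0 h0.le
    linarith [hy]
  have hB_lb : (1-x)^2 ≤ 1 - 2*x + y := by linarith [hy_ge]
  have hB0 : (0:ℝ) ≤ 1 - 2*x + y := le_trans (sq_nonneg (1-x)) hB_lb
  have hy_ub : y ≤ 2*x^2 := by
    have h' : y*(1/2) ≤ y*(1-p) := mul_le_mul_of_nonneg_left hp2 hy0
    linarith [hy]
  have hqsq : (1:ℝ)/4 ≤ (1-x)^2 := by linarith [mul_le_mul hx2 hx2 (by norm_num) (by linarith)]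
  have hNB : N * (1-2*x+y) ≤ (N+1) * (1-x)^2 := by
    have e1 : N*(y*p) ≤ N*((2*x^2)*p) :=
      mul_le_mul_of_nonneg_left (mul_le_mul_of_nonneg_right hy_ub h0.le) hNpos.le
    have eNh : N*(y*(1-p)) = N*(x^2) := by rw [hy]
    linarith [e1, hpx, hqsq, eNh]
  have hB_ub : 1 - 2*x + y ≤ (1+1/N)*(1-x)^2 := by
    have hfrac : (1+1/N)*(1-x)^2 = ((N+1)*(1-x)^2)/N := by field_simp
    rw [hfrac, le_div_iff₀ hNpos]
    linarith [hNB]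
  -- power bound
  have hmle : ((n+1-2*r : ℕ):ℝ) ≤ 2*N := by
    have h' : n+1-2*r ≤ 2*n := by omega
    calc ((n+1-2*r:ℕ):ℝ) ≤ ((2*n:ℕ):ℝ) := by exact_mod_cast h'
      _ = 2*N := by rw [hNdef]; push_cast; ring
  have h9 : Real.exp 2 ≤ 9 := by
    have h2 : Real.exp 2 = Real.exp 1 * Real.exp 1 := by rw [← Real.exp_add]; norm_num
    have he := Real.exp_one_lt_d9
    have hpp := Real.exp_pos 1
    have hm' : Real.exp 1 * Real.exp 1 ≤ 2.7182818286 * 2.7182818286 :=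
      mul_le_mul he.le he.le hpp.le (by norm_num)
    rw [h2]; linarith [hm']
  have hBm : (1-2*x+y)^(n+1-2*r) ≤ 9 * (1-x)^(2*(n+1-2*r)) := by
    have s1 : (1-2*x+y)^(n+1-2*r) ≤ ((1+1/N)*(1-x)^2)^(n+1-2*r) :=
      pow_le_pow_left₀ hB0 hB_ub _
    have s2 : ((1+1/N)*(1-x)^2)^(n+1-2*r) = (1+1/N)^(n+1-2*r) * (1-x)^(2*(n+1-2*r)) := by
      rw [mul_pow, ← pow_mul]
    have s3 : (1+1/N)^(n+1-2*r) ≤ 9 := by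
      have ha : (0:ℝ) ≤ 1+1/N := by positivity
      have hb : 1+1/N ≤ Real.exp (1/N) := by linarith [Real.add_one_le_exp (1/N)]
      calc (1+1/N)^(n+1-2*r) ≤ (Real.exp (1/N))^(n+1-2*r) := pow_le_pow_left₀ ha hb _
        _ = Real.exp (((n+1-2*r:ℕ):ℝ)*(1/N)) := (Real.exp_nat_mul _ _).symm
        _ ≤ Real.exp 2 := Real.exp_le_exp.mpr (by
              rw [mul_one_div, div_le_iff₀ hNpos]; linarith [hmle])
        _ ≤ 9 := h9
    calc (1-2*x+y)^(n+1-2*r) ≤ (1+1/N)^(n+1-2*r) * (1-x)^(2*(n+1-2*r)) := by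
          rw [← s2]; exact s1
      _ ≤ 9 * (1-x)^(2*(n+1-2*r)) :=
          mul_le_mul_of_nonneg_right s3 (pow_nonneg (by linarith) _)
  have hsplit : (1-x)^(2*(n-r)) = (1-x)^(2*(n+1-2*r)) * (1-x)^(2*r-2) := by
    rw [← pow_add]
    congr 1
    omega
  have hbern : (1:ℝ)/2 ≤ (1-x)^(2*r-2) := by
    have hb1 := one_add_mul_le_pow (show (-2:ℝ) ≤ -x by linarith) (2*r)
    rw [show (1:ℝ) + -x = 1-x by ring] at hb1
    have hcast : ((2*r:ℕ):ℝ) = 2*(r:ℝ) := by push_cast; ring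
    rw [hcast] at hb1
    have hb2 : (1-x)^(2*r) ≤ (1-x)^(2*r-2) :=
      pow_le_pow_of_le_one (by linarith) (by linarith) (by omega)
    linarith [hb1, hb2, hxr]
  -- choose bounds
  have hC'le : ((n-r).choose (r-1) : ℝ) ≤ ((n.choose (r-1)):ℝ) := by
    exact_mod_cast Nat.choose_le_choose (r-1) (Nat.sub_le n r)
  have hC'0 : (0:ℝ) ≤ ((n-r).choose (r-1) : ℝ) := Nat.cast_nonneg _
  have hC''0 : (0:ℝ) ≤ ((n.choose (r-1)):ℝ) := Nat.cast_nonneg _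
  have hC_pos : (0:ℝ) < (n.choose r : ℝ) := by exact_mod_cast Nat.choose_pos hrn
  have hcastsub : ((n - (r-1) : ℕ) : ℝ) = N - (r:ℝ) + 1 := by
    rw [Nat.cast_sub (show r-1 ≤ n by omega), Nat.cast_sub (show 1 ≤ r by omega)]
    rw [hNdef]; push_cast; ring
  have hid : ((n.choose (r-1)):ℝ) * (N - (r:ℝ) + 1) = (n.choose r : ℝ) * (r:ℝ) := by
    have h' := Nat.choose_succ_right_eq n (r-1)
    rw [show r-1+1 = r by omega] at h'
    have h2' : (n.choose r : ℝ) * (r:ℝ) = ((n.choose (r-1)):ℝ) * ((n - (r-1) : ℕ):ℝ) := by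
      exact_mod_cast h'
    rw [hcastsub] at h2'
    exact h2'.symm
  have hden_half : N ≤ 2*(N - (r:ℝ) + 1) := by linarith [hRN]
  have hRC : (r:ℝ) * ((n.choose (r-1)):ℝ) * N ≤ 2*(r:ℝ)^2*(n.choose r:ℝ) := by
    have e : (r:ℝ)*((n.choose (r-1)):ℝ)*N ≤ (r:ℝ)*((n.choose (r-1)):ℝ)*(2*(N-(r:ℝ)+1)) :=
      mul_le_mul_of_nonneg_left hden_half (mul_nonneg R0 hC''0)
    have e2 : (r:ℝ)*((n.choose (r-1)):ℝ)*(2*(N-(r:ℝ)+1))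
        = 2*(r:ℝ)*(((n.choose (r-1)):ℝ)*(N-(r:ℝ)+1)) := by ring
    rw [hid] at e2
    linarith [e, e2]
  have v1 : (r:ℝ)*((n.choose (r-1)):ℝ)*lam^2 ≤ 8*(n.choose r:ℝ) := by
    have w1 : ((r:ℝ)*((n.choose (r-1)):ℝ)*N)*lam^2 ≤ (2*(r:ℝ)^2*(n.choose r:ℝ))*lam^2 :=
      mul_le_mul_of_nonneg_right hRC (sq_nonneg lam)
    have w2 : (2*(n.choose r:ℝ))*((r:ℝ)^2*lam^2) ≤ (2*(n.choose r:ℝ))*(4*N) :=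
      mul_le_mul_of_nonneg_left hRsq (by positivity)
    have w3 : ((r:ℝ)*((n.choose (r-1)):ℝ)*lam^2)*N ≤ (8*(n.choose r:ℝ))*N := by
      linarith [w1, w2]
    exact le_of_mul_le_mul_right w3 hNpos
  -- final assembly
  have hxpow : (0:ℝ) < (1-x)^(n-r) := pow_pos (by linarith) _
  have hD : (0:ℝ) < ((n.choose r : ℝ) * (1-x)^(n-r))^2 := by positivity
  constructor
  · apply div_nonneg _ (sq_nonneg _)
    exact mul_nonneg (mul_nonneg (mul_nonneg hC_pos.le R0) hC'0) (pow_nonneg hB0 _)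
  rw [div_le_div_iff₀ hD (by positivity)]
  have hDelta : ((n.choose r : ℝ) * (1-x)^(n-r))^2
      = (n.choose r : ℝ)^2 * ((1-x)^(2*(n+1-2*r)) * (1-x)^(2*r-2)) := by
    rw [mul_pow, ← pow_mul, mul_comm (n-r) 2, hsplit]
  rw [hDelta]
  have u1 : (n.choose r:ℝ) * (r:ℝ) * ((n-r).choose (r-1) : ℝ) * ((1-2*x+y)^(n+1-2*r))
      ≤ (n.choose r:ℝ) * (r:ℝ) * ((n.choose (r-1)):ℝ) * (9*(1-x)^(2*(n+1-2*r))) := by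
    have w1 : (n.choose r:ℝ) * (r:ℝ) * ((n-r).choose (r-1) : ℝ)
        ≤ (n.choose r:ℝ)*(r:ℝ)*((n.choose (r-1)):ℝ) :=
      mul_le_mul_of_nonneg_left hC'le (mul_nonneg hC_pos.le R0)
    exact mul_le_mul w1 hBm (pow_nonneg hB0 _)
      (by positivity)
  have u2 : ((n.choose r:ℝ) * (r:ℝ) * ((n.choose (r-1)):ℝ) * (9*(1-x)^(2*(n+1-2*r))))*lam^2
      ≤ 144 * ((n.choose r : ℝ)^2 * ((1-x)^(2*(n+1-2*r)) * (1-x)^(2*r-2))) := by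
    have P1nn : (0:ℝ) ≤ (1-x)^(2*(n+1-2*r)) := pow_nonneg (by linarith) _
    have w2 : (9*(1-x)^(2*(n+1-2*r))*(n.choose r:ℝ))*((r:ℝ)*((n.choose (r-1)):ℝ)*lam^2)
        ≤ (9*(1-x)^(2*(n+1-2*r))*(n.choose r:ℝ))*(8*(n.choose r:ℝ)) :=
      mul_le_mul_of_nonneg_left v1 (by positivity)
    have w3 : (72*((n.choose r:ℝ)^2*(1-x)^(2*(n+1-2*r))))*(1/2)
        ≤ (72*((n.choose r:ℝ)^2*(1-x)^(2*(n+1-2*r))))*((1-x)^(2*r-2)) :=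
      mul_le_mul_of_nonneg_left hbern (by positivity)
    linarith [w2, w3]
  calc ((n.choose r:ℝ) * (r:ℝ) * ((n-r).choose (r-1) : ℝ) * ((1-2*x+y)^(n+1-2*r)))*lam^2
      ≤ ((n.choose r:ℝ) * (r:ℝ) * ((n.choose (r-1)):ℝ) * (9*(1-x)^(2*(n+1-2*r))))*lam^2 :=
        mul_le_mul_of_nonneg_right u1 (sq_nonneg lam)
    _ ≤ 144 * ((n.choose r : ℝ)^2 * ((1-x)^(2*(n+1-2*r)) * (1-x)^(2*r-2))) := u2

end KeyAux

set_option maxHeartbeats 1000000 in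
/-- for `p → 0` with `p √n / ln² n → ∞` and `r` positive integers
with `q^r ln² d / d → 1`, the `s = 1` second-moment term divided by `E(X_r)²` tends
to `0`. -/
theorem stmt_17 (p : ℕ → ℝ) (hp : ∀ n, 0 < p n ∧ p n < 1)
    (hp0 : Tendsto p atTop (nhds 0))
    (hgrow : Tendsto (fun n : ℕ => p n * Real.sqrt n / (Real.log n) ^ 2) atTop atTop)
    (r : ℕ → ℕ) (hrpos : ∀ n, 0 < r n)
    (hr : Tendsto (fun n : ℕ =>
        (1 / (1 - p n)) ^ (r n) * (Real.log (n * p n)) ^ 2 / (n * p n)) atTop (nhds 1)) :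
    Tendsto (fun n : ℕ =>
        (n.choose (r n) : ℝ) * (r n : ℝ) * ((n - r n).choose (r n - 1) : ℝ) *
            (1 - 2 * (1 - p n) ^ (r n) + (1 - p n) ^ (2 * r n - 1)) ^ (n + 1 - 2 * r n)
          / ((n.choose (r n) : ℝ) * (1 - (1 - p n) ^ (r n)) ^ (n - r n)) ^ 2)
      atTop (nhds 0) := by
  have hlog1 : Tendsto (fun n:ℕ => Real.log n) atTop atTop :=
    Real.tendsto_log_atTop.comp tendsto_natCast_atTop_atTop
  have hlog2 : Tendsto (fun n:ℕ => (Real.log n)^2) atTop atTop :=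
    (tendsto_pow_atTop (by norm_num : (2:ℕ) ≠ 0)).comp hlog1
  have hlim : Tendsto (fun n:ℕ => (144:ℝ)/(Real.log n)^2) atTop (nhds 0) :=
    Filter.Tendsto.div_atTop tendsto_const_nhds hlog2
  have h1 : ∀ᶠ n in atTop, p n ≤ 1/2 := hp0.eventually (eventually_le_nhds (by norm_num))
  have h2 : ∀ᶠ n in atTop, 1 ≤ p n * Real.sqrt n / (Real.log n)^2 :=
    hgrow.eventually_ge_atTop 1
  have h3 := hr.eventually (eventually_ge_nhds (by norm_num : (1/2:ℝ) < 1))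
  have h4 := hr.eventually (eventually_le_nhds (by norm_num : (1:ℝ) < 2))
  have h5 : ∀ᶠ n:ℕ in atTop, (2:ℝ)^50 ≤ (n:ℝ) := by
    filter_upwards [eventually_ge_atTop (2^50 : ℕ)] with n hn
    exact_mod_cast hn
  refine tendsto_of_tendsto_of_tendsto_of_le_of_le' tendsto_const_nhds hlim ?_ ?_
  · filter_upwards [h1, h2, h3, h4, h5] with n a b c d e
    exact (key_bound n (r n) (p n) (hp n).1 (hp n).2 a (hrpos n) e b c d).1
  · filter_upwards [h1, h2, h3, h4, h5] with n a b c d e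
    exact (key_bound n (r n) (p n) (hp n).1 (hp n).2 a (hrpos n) e b c d).2
end
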